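/- arXiv:0912.1659 — 7 statements merged into one kernel-verified Lean document; each statement's English description precedes it below -/
import Mathlib

section
/- For every integer k ≥ 0, the number of elements z in ℤ[√-3] (i.e., Gaussian-type integers a + b√-3 with a, b ∈ ℤ) satisfying |z|² = 7^k is exactly 2(k+1). -/
open Zsqrtd

private def al : ℤ√(-3) := ⟨2, 1⟩
private def be : ℤ√(-3) := ⟨2, -1⟩

private lemma hd3 : ∀ n : ℤ, (-3:ℤ) ≠ n * n := fun n h => by nlinarith [mul_self_nonneg n]

private instance instNZD3 : NoZeroDivisors (ℤ√(-3)) := ⟨fun {a b} h => by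
  have h2 := congrArg Zsqrtd.norm h
  rw [Zsqrtd.norm_mul, Zsqrtd.norm_zero] at h2
  rcases mul_eq_zero.1 h2 with h1 | h1
  · exact Or.inl ((Zsqrtd.norm_eq_zero hd3 a).1 h1)
  · exact Or.inr ((Zsqrtd.norm_eq_zero hd3 b).1 h1)⟩

private instance fact7 : Fact (Nat.Prime 7) := ⟨by norm_num⟩

private lemma four7 : (4 : ZMod 7) ≠ 0 := by decide

private def φ : ℤ√(-3) →+* ZMod 7 := Zsqrtd.lift ⟨(2 : ZMod 7), by decide⟩

private lemma phi_al : φ al = 4 := by simp [φ, al, Zsqrtd.lift_apply_apply]; decide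
private lemma phi_be : φ be = 0 := by simp [φ, be, Zsqrtd.lift_apply_apply]

private lemma norm_al : al.norm = 7 := by decide
private lemma norm_be : be.norm = 7 := by decide
private lemma al_ne : al ≠ 0 := by decide
private lemma be_ne : be ≠ 0 := by decide

private lemma znorm_pow (x : ℤ√(-3)) (n : ℕ) : (x ^ n).norm = x.norm ^ n := by
  induction n with
  | zero => simp [Zsqrtd.norm_one]
  | succ n ih => rw [pow_succ, pow_succ, Zsqrtd.norm_mul, ih]

private lemma norm_cand (j m : ℕ) : (al ^ j * be ^ m).norm = 7 ^ (j + m) := by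
  rw [Zsqrtd.norm_mul, znorm_pow, znorm_pow, norm_al, norm_be, pow_add]

private lemma zmod7 : ∀ x y : ZMod 7, x ^ 2 + 3 * y ^ 2 = 0 → x = 2 * y ∨ x = -(2 * y) := by decide

private lemma classify : ∀ (k : ℕ) (z : ℤ√(-3)), z.norm = 7 ^ k →
    ∃ j ≤ k, z = al ^ j * be ^ (k - j) ∨ z = -(al ^ j * be ^ (k - j)) := by
  intro k
  induction k with
  | zero =>
    intro z hz
    rw [pow_zero] at hz
    simp only [Zsqrtd.norm] at hz
    have him : z.im = 0 := by nlinarith [mul_self_nonneg z.re, mul_self_nonneg z.im]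
    have hre2 : z.re * z.re = 1 := by rw [him] at hz; linarith
    refine ⟨0, le_refl 0, ?_⟩
    rcases mul_self_eq_one_iff.1 hre2 with h | h
    · left; ext <;> simp [al, be, h, him]
    · right; ext <;> simp [al, be, h, him]
  | succ k ih =>
    intro z hz
    have hnormz : z.re * z.re + 3 * (z.im * z.im) = 7 ^ (k + 1) := by
      simp only [Zsqrtd.norm] at hz; linarith
    have hdvd7 : (7 : ℤ) ∣ z.re * z.re + 3 * (z.im * z.im) := by
      rw [hnormz]; exact dvd_pow_self 7 (Nat.succ_ne_zero k)
    have hmod : ((z.re : ZMod 7)) ^ 2 + 3 * (z.im : ZMod 7) ^ 2 = 0 := by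
      have h0 := (ZMod.intCast_zmod_eq_zero_iff_dvd _ 7).2 hdvd7
      push_cast at h0
      linear_combination h0
    rcases zmod7 _ _ hmod with hc | hc
    · have hdvd : (7 : ℤ) ∣ z.re - 2 * z.im := by
        have : ((z.re - 2 * z.im : ℤ) : ZMod 7) = 0 := by push_cast; rw [hc]; ring
        exact (ZMod.intCast_zmod_eq_zero_iff_dvd _ 7).1 this
      obtain ⟨t, ht⟩ := hdvd
      set w : ℤ√(-3) := ⟨z.im + 2 * t, -t⟩ with hw
      have hzw : z = al * w := by
        have h1 : (al * w).re = z.re := by simp [al, hw, Zsqrtd.re_mul]; linarith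
        have h2 : (al * w).im = z.im := by simp [al, hw, Zsqrtd.im_mul]
        ext
        · exact h1.symm
        · exact h2.symm
      have hnw : w.norm = 7 ^ k := by
        have h1 : (al * w).norm = 7 ^ (k + 1) := by rw [← hzw]; exact hz
        rw [Zsqrtd.norm_mul, norm_al, pow_succ, mul_comm ((7:ℤ)^k) 7] at h1
        exact mul_left_cancel₀ (by norm_num) h1
      obtain ⟨j, hj, hcase⟩ := ih w hnw
      refine ⟨j + 1, by omega, ?_⟩
      have hexp : k + 1 - (j + 1) = k - j := by omega
      rcases hcase with h | h
      · left; rw [hzw, h, hexp, pow_succ]; ring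
      · right; rw [hzw, h, hexp, pow_succ]; ring
    · have hdvd : (7 : ℤ) ∣ z.re + 2 * z.im := by
        have : ((z.re + 2 * z.im : ℤ) : ZMod 7) = 0 := by push_cast; rw [hc]; ring
        exact (ZMod.intCast_zmod_eq_zero_iff_dvd _ 7).1 this
      obtain ⟨t, ht⟩ := hdvd
      set w : ℤ√(-3) := ⟨-z.im + 2 * t, t⟩ with hw
      have hzw : z = be * w := by
        have h1 : (be * w).re = z.re := by simp [be, hw, Zsqrtd.re_mul]; linarith
        have h2 : (be * w).im = z.im := by simp [be, hw, Zsqrtd.im_mul]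
        ext
        · exact h1.symm
        · exact h2.symm
      have hnw : w.norm = 7 ^ k := by
        have h1 : (be * w).norm = 7 ^ (k + 1) := by rw [← hzw]; exact hz
        rw [Zsqrtd.norm_mul, norm_be, pow_succ, mul_comm ((7:ℤ)^k) 7] at h1
        exact mul_left_cancel₀ (by norm_num) h1
      obtain ⟨j, hj, hcase⟩ := ih w hnw
      refine ⟨j, by omega, ?_⟩
      have hexp : k + 1 - j = (k - j) + 1 := by omega
      rcases hcase with h | h
      · left; rw [hzw, h, hexp, pow_succ]; ring
      · right; rw [hzw, h, hexp, pow_succ]; ring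

private lemma key (d : ℕ) (ε ε' : ℤ√(-3)) (hε : ε = 1 ∨ ε = -1) (hε' : ε' = 1 ∨ ε' = -1)
    (h : ε * be ^ d = ε' * al ^ d) : d = 0 ∧ ε = ε' := by
  have hd0 : d = 0 := by
    by_contra hne
    have hphi := congrArg φ h
    rw [map_mul, map_mul, map_pow, map_pow, phi_al, phi_be, zero_pow hne, mul_zero] at hphi
    have h4 : (4 : ZMod 7) ^ d ≠ 0 := pow_ne_zero d four7
    have hu : φ ε' ≠ 0 := by rcases hε' with h' | h' <;> simp [h'] <;> decide
    rcases mul_eq_zero.1 hphi.symm with hx | hx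
    · exact hu hx
    · exact h4 hx
  subst hd0
  simp only [pow_zero, mul_one] at h
  exact ⟨rfl, h⟩

private lemma inj_half {k j j' : ℕ} (hj : j ≤ k) (hj' : j' ≤ k) (hle : j ≤ j')
    {ε ε' : ℤ√(-3)} (hε : ε = 1 ∨ ε = -1) (hε' : ε' = 1 ∨ ε' = -1)
    (h : ε * (al ^ j * be ^ (k - j)) = ε' * (al ^ j' * be ^ (k - j'))) : j = j' ∧ ε = ε' := by
  set d := j' - j with hdd
  have h1 : j' = j + d := by omega
  have h2 : k - j = (k - j') + d := by omega
  have h' : ε * (al ^ j * (be ^ (k - j') * be ^ d)) = ε' * ((al ^ j * al ^ d) * be ^ (k - j')) := by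
    rw [← pow_add, ← pow_add, ← h2, ← h1]; exact h
  have hcan : ε * be ^ d = ε' * al ^ d := by
    have hne : al ^ j * be ^ (k - j') ≠ 0 :=
      mul_ne_zero (pow_ne_zero _ al_ne) (pow_ne_zero _ be_ne)
    apply mul_left_cancel₀ hne
    calc al ^ j * be ^ (k - j') * (ε * be ^ d)
        = ε * (al ^ j * (be ^ (k - j') * be ^ d)) := by ring
      _ = ε' * ((al ^ j * al ^ d) * be ^ (k - j')) := h'
      _ = al ^ j * be ^ (k - j') * (ε' * al ^ d) := by ring
  obtain ⟨hd0, hee⟩ := key d ε ε' hε hε' hcan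
  exact ⟨by omega, hee⟩

private lemma count_zsqrtd (k : ℕ) :
    Set.ncard {z : ℤ√(-3) | z.norm = 7 ^ k} = 2 * (k + 1) := by
  classical
  set F : Finset (ℤ√(-3)) :=
    (Finset.range (k+1) ×ˢ ({1, -1} : Finset (ℤ√(-3)))).image
      (fun p => p.2 * (al ^ p.1 * be ^ (k - p.1))) with hF
  have hset : {z : ℤ√(-3) | z.norm = 7 ^ k} = ↑F := by
    ext z
    simp only [Set.mem_setOf_eq, hF, Finset.coe_image, Set.mem_image, Finset.mem_coe,
      Finset.mem_product, Finset.mem_range, Finset.mem_insert, Finset.mem_singleton]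
    constructor
    · intro hz
      obtain ⟨j, hj, hcase⟩ := classify k z hz
      rcases hcase with h | h
      · exact ⟨(j, 1), ⟨by omega, Or.inl rfl⟩, by simp [h]⟩
      · exact ⟨(j, -1), ⟨by omega, Or.inr rfl⟩, by rw [h]; ring⟩
    · rintro ⟨⟨j, ε⟩, ⟨hj, hε⟩, rfl⟩
      have hn := norm_cand j (k - j)
      rw [show j + (k - j) = k from by omega] at hn
      rcases hε with h | h <;> subst h
      · simpa using hn
      · rw [show (-1 : ℤ√(-3)) * (al ^ j * be ^ (k-j)) = -(al ^ j * be ^ (k-j)) from by ring,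
          Zsqrtd.norm_neg]
        exact hn
  rw [hset, Set.ncard_coe_finset, hF]
  rw [Finset.card_image_of_injOn]
  · rw [Finset.card_product, Finset.card_range]
    have hc2 : ({1, -1} : Finset (ℤ√(-3))).card = 2 := by decide
    rw [hc2]; ring
  · rintro ⟨j, ε⟩ hp ⟨j', ε'⟩ hq h
    simp only [Finset.mem_coe, Finset.mem_product, Finset.mem_range, Finset.mem_insert,
      Finset.mem_singleton] at hp hq
    obtain ⟨hj, hε⟩ := hp
    obtain ⟨hj', hε'⟩ := hq
    rcases le_total j j' with hle | hle
    · obtain ⟨h1, h2⟩ := inj_half (by omega) (by omega) hle hε hε' h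
      simp [h1, h2]
    · obtain ⟨h1, h2⟩ := inj_half (by omega) (by omega) hle hε' hε h.symm
      simp [h1, h2]

/-- For every integer `k ≥ 0`, the number of elements `z = a + b√-3` of `ℤ[√-3]`
with `|z|² = a² + 3b² = 7^k` is exactly `2(k+1)`. -/
theorem stmt_0 (k : ℕ) :
    Set.ncard {z : ℤ × ℤ | z.1 ^ 2 + 3 * z.2 ^ 2 = 7 ^ k} = 2 * (k + 1) := by
  have hinj : Function.Injective (fun w : ℤ√(-3) => (w.re, w.im)) := by
    intro a b h
    simp only [Prod.mk.injEq] at h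
    ext <;> tauto
  have himg : {z : ℤ × ℤ | z.1 ^ 2 + 3 * z.2 ^ 2 = 7 ^ k}
      = (fun w : ℤ√(-3) => (w.re, w.im)) '' {z : ℤ√(-3) | z.norm = 7 ^ k} := by
    ext ⟨a, b⟩
    simp only [Set.mem_setOf_eq, Set.mem_image]
    constructor
    · intro h
      refine ⟨⟨a, b⟩, ?_, rfl⟩
      simp only [Zsqrtd.norm]
      linear_combination h
    · rintro ⟨w, hw, heq⟩
      simp only [Prod.mk.injEq] at heq
      obtain ⟨h1, h2⟩ := heq
      subst h1; subst h2
      simp only [Zsqrtd.norm] at hw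
      linear_combination hw
  rw [himg, Set.ncard_image_of_injective _ hinj]
  exact count_zsqrtd k
end

section
/- Let n ≥ 2 be an integer and write ℤ[√-n] as the order O_f of conductor f in the imaginary quadratic field K = ℚ(√-n) with discriminant d_K. Let p be a prime such that there exists z ∈ ℤ[√-n] with |z|² = p, the Legendre symbol (d_K/p) = 1, and gcd(p, f) = 1. Then for every integer k ≥ 0, the number of z ∈ ℤ[√-n] with |z|² = p^k is exactly 2(k+1). -/
/-- `dK` is a fundamental discriminant (discriminant of a quadratic field). -/
def IsFundamentalDiscriminant (dK : ℤ) : Prop :=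
  (Squarefree dK ∧ dK % 4 = 1) ∨
    (∃ m : ℤ, dK = 4 * m ∧ Squarefree m ∧ (m % 4 = 2 ∨ m % 4 = 3))

namespace Stmt1Aux

open Zsqrtd

lemma norm_pow' {d : ℤ} (w : ℤ√d) (i : ℕ) : (w ^ i).norm = w.norm ^ i := by
  induction i with
  | zero => simp
  | succ i ih => rw [pow_succ, pow_succ, Zsqrtd.norm_mul, ih]

lemma cancel {d : ℤ} (hd : d < 0) {t u v : ℤ√d} (ht : t ≠ 0) (h : t * u = t * v) : u = v := by
  have h0 : t * (u - v) = 0 := by rw [mul_sub, h, sub_self]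
  have h1 : t.norm * (u - v).norm = 0 := by
    rw [← Zsqrtd.norm_mul, h0, Zsqrtd.norm_zero]
  have hnt : t.norm ≠ 0 := fun hh => ht ((Zsqrtd.norm_eq_zero_iff hd t).mp hh)
  have h2 : (u - v).norm = 0 := by
    rcases mul_eq_zero.mp h1 with h' | h'
    · exact absurd h' hnt
    · exact h'
  have h3 := (Zsqrtd.norm_eq_zero_iff hd _).mp h2
  exact sub_eq_zero.mp h3

lemma descent {n : ℕ} (hn : 0 < n) {p a b : ℤ} (hp : Prime p) (hp2 : ¬ p ∣ 2)
    (hpa : ¬ p ∣ a) (hpb : ¬ p ∣ b) (hab : a ^ 2 + n * b ^ 2 = p)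
    (z : ℤ√(-(n : ℤ))) (hz : p ∣ z.norm)
    (hcross : p ∣ z.re * b - z.im * a) :
    ∃ z', z = (⟨a, b⟩ : ℤ√(-(n : ℤ))) * z' := by
  have hd : (-(n : ℤ)) < 0 := by exact_mod_cast neg_neg_iff_pos.mpr (by exact_mod_cast hn)
  set x := z.re with hx
  set y := z.im with hy
  obtain ⟨m, hm⟩ := hz
  have hnormz : x * x + n * (y * y) = p * m := by
    have h := hm
    rw [Zsqrtd.norm_def] at h
    linarith [h]
  have hW : ((⟨a, b⟩ : ℤ√(-(n : ℤ))) * star ⟨a, b⟩) = (p : ℤ√(-(n : ℤ))) := by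
    rw [← Zsqrtd.norm_eq_mul_conj]
    have : (⟨a, b⟩ : ℤ√(-(n : ℤ))).norm = p := by
      rw [Zsqrtd.norm_def]; simp only []; linarith [hab]
    rw [this]
  have hWne : star (⟨a, b⟩ : ℤ√(-(n : ℤ))) ≠ 0 := by
    intro h
    apply hpb
    have := congrArg Zsqrtd.im h
    simp [Zsqrtd.im_star] at this
    simp [this]
  have key2 : (x * a + n * y * b) * (x * a - n * y * b) = p * (a * a * m - n * (y * y)) := by
    linear_combination (a * a) * hnormz - (n * (y * y)) * hab
  have h2 : p ∣ (x * a + n * y * b) ∨ p ∣ (x * a - n * y * b) :=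
    hp.dvd_mul.mp ⟨_, key2⟩
  rcases h2 with hA | hB
  · -- z = W * z'
    obtain ⟨u, hu⟩ := hA
    obtain ⟨v, hv⟩ : p ∣ y * a - x * b := by
      obtain ⟨c, hc⟩ := hcross
      exact ⟨-c, by linarith [hc]⟩
    refine ⟨⟨u, v⟩, ?_⟩
    apply cancel hd hWne
    have h3 : star (⟨a, b⟩ : ℤ√(-(n : ℤ))) * z = (p : ℤ√(-(n : ℤ))) * ⟨u, v⟩ := by
      ext
      · simp only [Zsqrtd.re_mul, Zsqrtd.re_star, Zsqrtd.im_star, Zsqrtd.re_intCast,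
          Zsqrtd.im_intCast]
        linear_combination hu
      · simp only [Zsqrtd.im_mul, Zsqrtd.re_star, Zsqrtd.im_star, Zsqrtd.re_intCast,
          Zsqrtd.im_intCast]
        linear_combination hv
    rw [h3, ← mul_assoc, mul_comm (star (⟨a, b⟩ : ℤ√(-(n : ℤ)))) (⟨a, b⟩ : ℤ√(-(n : ℤ))), hW]
  · -- p ∣ x and p ∣ y
    have h4 : x * (y * a - x * b) + y * (x * a - n * y * b) = 2 * x * y * a - b * (p * m) := by
      linear_combination (-b) * hnormz
    have hcross' : p ∣ y * a - x * b := by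
      obtain ⟨c, hc⟩ := hcross
      exact ⟨-c, by linarith [hc]⟩
    have h5 : p ∣ 2 * x * y * a := by
      have hd1 : p ∣ x * (y * a - x * b) + y * (x * a - n * y * b) :=
        dvd_add (hcross'.mul_left x) (hB.mul_left y)
      rw [h4] at hd1
      have : p ∣ b * (p * m) := ⟨b * m, by ring⟩
      have := dvd_add hd1 this
      simpa using this
    have hxy : p ∣ x * y := by
      rcases hp.dvd_mul.mp h5 with h | h
      · rcases hp.dvd_mul.mp h with h' | h'
        · rcases hp.dvd_mul.mp h' with h'' | h''
          · exact absurd h'' hp2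
          · exact h''.mul_right y
        · exact h'.mul_left x
      · exact absurd h hpa
    have hxandy : p ∣ x ∧ p ∣ y := by
      rcases hp.dvd_mul.mp hxy with h | h
      · refine ⟨h, ?_⟩
        have : p ∣ y * a := by
          obtain ⟨c, hc⟩ := h
          obtain ⟨e, he⟩ := hcross'
          exact ⟨e + c * b, by linear_combination he + b * hc⟩
        rcases hp.dvd_mul.mp this with h' | h'
        · exact h'
        · exact absurd h' hpa
      · refine ⟨?_, h⟩
        have : p ∣ x * b := by
          obtain ⟨c, hc⟩ := h
          obtain ⟨e, he⟩ := hcross'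
          exact ⟨c * a - e, by linear_combination a * hc - he⟩
        rcases hp.dvd_mul.mp this with h' | h'
        · exact h'
        · exact absurd h' hpb
    obtain ⟨x', hx'⟩ := hxandy.1
    obtain ⟨y', hy'⟩ := hxandy.2
    refine ⟨star (⟨a, b⟩ : ℤ√(-(n : ℤ))) * ⟨x', y'⟩, ?_⟩
    rw [← mul_assoc, hW]
    ext
    · simp only [Zsqrtd.re_mul, Zsqrtd.re_intCast, Zsqrtd.im_intCast]
      linarith [hx']
    · simp only [Zsqrtd.im_mul, Zsqrtd.re_intCast, Zsqrtd.im_intCast]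
      linarith [hy']

lemma classify {n : ℕ} (hn : 2 ≤ n) {p a b : ℤ} (hp : Prime p) (hp2 : ¬ p ∣ 2)
    (hpa : ¬ p ∣ a) (hpb : ¬ p ∣ b) (hab : a ^ 2 + n * b ^ 2 = p) :
    ∀ k (z : ℤ√(-(n : ℤ))), z.norm = p ^ k →
      ∃ i ≤ k, ∃ ε : ℤ√(-(n : ℤ)), (ε = 1 ∨ ε = -1) ∧
        z = ε * (⟨a, b⟩ : ℤ√(-(n : ℤ))) ^ i * (star (⟨a, b⟩ : ℤ√(-(n : ℤ)))) ^ (k - i) := by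
  have hn0 : 0 < n := by omega
  have hd : (-(n : ℤ)) < 0 := by
    have : (0 : ℤ) < n := by exact_mod_cast hn0
    linarith
  intro k
  induction k with
  | zero =>
    intro z hz
    rw [Zsqrtd.norm_def] at hz
    have him : z.im = 0 := by
      by_contra h
      have h1 : 0 < z.im * z.im := mul_self_pos.mpr h
      have h2 : 1 ≤ z.im * z.im := h1
      have h3 : (2 : ℤ) ≤ n := by exact_mod_cast hn
      nlinarith [mul_self_nonneg z.re]
    rw [him] at hz
    have hre : z.re = 1 ∨ z.re = -1 := by
      have : z.re * z.re = 1 := by linarith [hz]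
      exact mul_self_eq_one_iff.mp this
    refine ⟨0, le_refl 0, z, ?_, by simp⟩
    rcases hre with h | h
    · left; ext <;> simp [h, him]
    · right; ext <;> simp [h, him]
  | succ k ih =>
    intro z hz
    have hdvd : p ∣ z.norm := by rw [hz]; exact dvd_pow_self p (Nat.succ_ne_zero k)
    have hnormz : z.re * z.re + n * (z.im * z.im) = p ^ (k + 1) := by
      rw [Zsqrtd.norm_def] at hz; linarith [hz]
    have h1 : p ∣ (z.re * b - z.im * a) * (z.re * b + z.im * a) := by
      refine ⟨b * b * p ^ k - z.im * z.im, ?_⟩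
      linear_combination (b * b) * hnormz - (z.im * z.im) * hab
    have hWnorm : (⟨a, b⟩ : ℤ√(-(n : ℤ))).norm = p := by
      rw [Zsqrtd.norm_def]; simp only []; linarith [hab]
    have hp0 : p ≠ 0 := hp.ne_zero
    rcases hp.dvd_mul.mp h1 with hc | hc
    · obtain ⟨z', hz'⟩ := descent hn0 hp hp2 hpa hpb hab z hdvd hc
      have hnz' : z'.norm = p ^ k := by
        rw [hz', Zsqrtd.norm_mul, hWnorm] at hz
        refine mul_left_cancel₀ hp0 ?_
        rw [hz]; ring
      obtain ⟨i, hik, ε, hε, heq⟩ := ih z' hnz'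
      refine ⟨i + 1, by omega, ε, hε, ?_⟩
      rw [hz', heq]
      have hsub : k + 1 - (i + 1) = k - i := by omega
      rw [hsub]
      ring
    · -- apply to star z
      have hdvd' : p ∣ (star z).norm := by rw [Zsqrtd.norm_conj]; exact hdvd
      have hc' : p ∣ (star z).re * b - (star z).im * a := by
        simp only [Zsqrtd.re_star, Zsqrtd.im_star]
        obtain ⟨c, hcc⟩ := hc
        exact ⟨c, by linarith [hcc]⟩
      obtain ⟨z', hz'⟩ := descent hn0 hp hp2 hpa hpb hab (star z) hdvd' hc'
      have hzz : z = star (⟨a, b⟩ : ℤ√(-(n : ℤ))) * star z' := by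
        have := congrArg star hz'
        rw [star_star, star_mul] at this
        rw [this]; ring
      have hnz' : (star z').norm = p ^ k := by
        have h6 : (star z).norm = p ^ (k + 1) := by rw [Zsqrtd.norm_conj]; exact hz
        rw [hz', Zsqrtd.norm_mul, hWnorm] at h6
        rw [Zsqrtd.norm_conj]
        refine mul_left_cancel₀ hp0 ?_
        rw [h6]; ring
      obtain ⟨i, hik, ε, hε, heq⟩ := ih (star z') hnz'
      refine ⟨i, by omega, ε, hε, ?_⟩
      rw [hzz, heq]
      have hsub : k + 1 - i = (k - i) + 1 := by omega
      rw [hsub]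
      ring

end Stmt1Aux

/-- Let `n ≥ 2`, and write `ℤ[√-n]` as the order of conductor `f` in the imaginary
quadratic field `K = ℚ(√-n)` with (fundamental) discriminant `d_K`, so that
`-4n = f² d_K`.  Let `p` be a prime such that some `z ∈ ℤ[√-n]` has `|z|² = p`,
`(d_K/p) = 1`, and `gcd(p,f) = 1`.  Then for every `k ≥ 0`, the number of
`z = x + y√-n ∈ ℤ[√-n]` with `|z|² = x² + n y² = p^k` is exactly `2(k+1)`. -/
theorem stmt_1 (n : ℕ) (hn : 2 ≤ n) (f dK : ℤ) (hf : 0 < f)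
    (hdisc : -4 * (n : ℤ) = f ^ 2 * dK) (hfund : IsFundamentalDiscriminant dK)
    (p : ℕ) [Fact p.Prime]
    (hrep : ∃ x y : ℤ, x ^ 2 + n * y ^ 2 = p)
    (hleg : legendreSym p dK = 1)
    (hpf : IsCoprime (p : ℤ) f) (k : ℕ) :
    Set.ncard {z : ℤ × ℤ | z.1 ^ 2 + n * z.2 ^ 2 = (p : ℤ) ^ k} = 2 * (k + 1) := by
  classical
  have hpp : p.Prime := Fact.out
  have hpZ : Prime (p : ℤ) := by rw [Int.prime_iff_natAbs_prime]; simpa using hpp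
  have hppos : (0 : ℤ) < p := by exact_mod_cast hpp.pos
  have hp2' : p ≠ 2 := by
    intro h
    subst h
    have hdK : ¬ (2 : ℤ) ∣ dK := by
      intro h2
      have h0 : ((dK : ZMod 2)) = 0 := by
        rw [ZMod.intCast_zmod_eq_zero_iff_dvd]
        exact_mod_cast h2
      have h1 := (legendreSym.eq_zero_iff 2 dK).mpr h0
      rw [hleg] at h1
      exact one_ne_zero h1
    have h2f : (2 : ℤ) ∣ f := by
      have hdvd : (2 : ℤ) ∣ f ^ 2 * dK := ⟨-2 * (n : ℤ), by linarith [hdisc]⟩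
      rcases Int.prime_two.dvd_mul.mp hdvd with h | h
      · exact Int.prime_two.dvd_of_dvd_pow h
      · exact absurd h hdK
    have hu : IsUnit (2 : ℤ) := hpf.isUnit_of_dvd' (by norm_num) h2f
    rw [Int.isUnit_iff] at hu
    omega
  have hp2 : ¬ (p : ℤ) ∣ 2 := by
    intro h
    have h' : p ∣ 2 := by exact_mod_cast h
    have := (Nat.prime_dvd_prime_iff_eq hpp Nat.prime_two).mp h'
    exact hp2' this
  have hpn : ¬ (p : ℤ) ∣ (n : ℤ) := by
    intro h
    have hdvd : (p : ℤ) ∣ f ^ 2 * dK := by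
      rw [← hdisc]
      exact Dvd.dvd.mul_left h (-4)
    rcases hpZ.dvd_mul.mp hdvd with h' | h'
    · exact hpZ.not_unit (hpf.isUnit_of_dvd' dvd_rfl (hpZ.dvd_of_dvd_pow h'))
    · have h0 := (legendreSym.eq_zero_iff p dK).mpr
        ((ZMod.intCast_zmod_eq_zero_iff_dvd dK p).mpr h')
      rw [hleg] at h0
      exact one_ne_zero h0
  obtain ⟨a, b, hab⟩ := hrep
  have hkey : ¬ ((p : ℤ) ∣ a ∧ (p : ℤ) ∣ b) := by
    rintro ⟨⟨a', ha'⟩, ⟨b', hb'⟩⟩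
    have hpdvd : (p : ℤ) * (p : ℤ) ∣ (p : ℤ) := ⟨a' ^ 2 + (n : ℤ) * b' ^ 2, by
      linear_combination (-1 : ℤ) * hab + (a + (p : ℤ) * a') * ha' + ((n : ℤ) * (b + (p : ℤ) * b')) * hb'⟩
    have hle := Int.le_of_dvd hppos hpdvd
    have : (2 : ℤ) ≤ p := by exact_mod_cast hpp.two_le
    nlinarith
  have hpa : ¬ (p : ℤ) ∣ a := by
    intro h
    have h2 : (p : ℤ) ∣ (n : ℤ) * b ^ 2 := by
      have h3 : (n : ℤ) * b ^ 2 = p - a ^ 2 := by linarith [hab]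
      rw [h3]
      exact dvd_sub dvd_rfl (dvd_pow h (by norm_num))
    rcases hpZ.dvd_mul.mp h2 with h' | h'
    · exact hpn h'
    · exact hkey ⟨h, hpZ.dvd_of_dvd_pow h'⟩
  have hpb : ¬ (p : ℤ) ∣ b := by
    intro h
    have h2 : (p : ℤ) ∣ a ^ 2 := by
      have h3 : a ^ 2 = p - (n : ℤ) * b ^ 2 := by linarith [hab]
      rw [h3]
      exact dvd_sub dvd_rfl ((dvd_pow h (by norm_num)).mul_left _)
    exact hkey ⟨hpZ.dvd_of_dvd_pow h2, h⟩
  -- ZMod p setup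
  have ha0 : ((a : ZMod p)) ≠ 0 := fun h => hpa ((ZMod.intCast_zmod_eq_zero_iff_dvd a p).mp h)
  have hb0 : ((b : ZMod p)) ≠ 0 := fun h => hpb ((ZMod.intCast_zmod_eq_zero_iff_dvd b p).mp h)
  have h20 : ((2 : ZMod p)) ≠ 0 := by
    intro h
    have h' : ((2 : ℕ) : ZMod p) = 0 := by exact_mod_cast h
    have := (ZMod.natCast_eq_zero_iff 2 p).mp h'
    exact hp2' ((Nat.prime_dvd_prime_iff_eq hpp Nat.prime_two).mp this)
  have habZ : (a : ZMod p) ^ 2 + (n : ZMod p) * (b : ZMod p) ^ 2 = 0 := by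
    have hcast := congrArg (fun t : ℤ => ((t : ZMod p))) hab
    push_cast at hcast
    rw [ZMod.natCast_self] at hcast
    exact hcast
  set r : ZMod p := (a : ZMod p) * (b : ZMod p)⁻¹ with hrdef
  have hr : r * r = ((-(n : ℤ) : ℤ) : ZMod p) := by
    push_cast
    rw [hrdef]
    field_simp
    linear_combination habZ
  set φ : ℤ√(-(n : ℤ)) →+* ZMod p := Zsqrtd.lift ⟨r, hr⟩ with hφdef
  set W : ℤ√(-(n : ℤ)) := ⟨a, b⟩ with hWdef
  set C : ℤ√(-(n : ℤ)) := star W with hCdef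
  have hd : (-(n : ℤ)) < 0 := by
    have : (0 : ℤ) < n := by exact_mod_cast (by omega : 0 < n)
    linarith
  have hφC : φ C = 0 := by
    rw [hφdef, hCdef, hWdef]
    simp only [Zsqrtd.lift_apply_apply, Zsqrtd.re_star, Zsqrtd.im_star]
    push_cast
    rw [hrdef]
    field_simp
    ring
  have hφW : φ W ≠ 0 := by
    have hWeq : φ W = 2 * (a : ZMod p) := by
      rw [hφdef, hWdef]
      simp only [Zsqrtd.lift_apply_apply]
      rw [hrdef]
      have hba : (b : ZMod p) * ((a : ZMod p) * (b : ZMod p)⁻¹) = (a : ZMod p) := by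
        field_simp
      rw [hba]
      ring
    rw [hWeq]
    exact mul_ne_zero h20 ha0
  have hWnorm : W.norm = (p : ℤ) := by
    rw [hWdef, Zsqrtd.norm_def]; simp only []; linarith [hab]
  have hCnorm : C.norm = (p : ℤ) := by rw [hCdef, Zsqrtd.norm_conj]; exact hWnorm
  have hWpow : ∀ m : ℕ, W ^ m ≠ 0 := by
    intro m h
    have h1 := Stmt1Aux.norm_pow' W m
    rw [h, Zsqrtd.norm_zero, hWnorm] at h1
    exact pow_ne_zero m hpZ.ne_zero h1.symm
  have hCpow : ∀ m : ℕ, C ^ m ≠ 0 := by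
    intro m h
    have h1 := Stmt1Aux.norm_pow' C m
    rw [h, Zsqrtd.norm_zero, hCnorm] at h1
    exact pow_ne_zero m hpZ.ne_zero h1.symm
  -- the key distinctness
  have keyne : ∀ (i j : ℕ) (ε ε' : ℤ√(-(n : ℤ))), i < j → j ≤ k →
      (ε = 1 ∨ ε = -1) → (ε' = 1 ∨ ε' = -1) →
      ε * W ^ i * C ^ (k - i) ≠ ε' * W ^ j * C ^ (k - j) := by
    intro i j ε ε' hij hjk hε hε' heq
    obtain ⟨s, hs1, rfl⟩ : ∃ s, 1 ≤ s ∧ j = i + s := ⟨j - i, by omega, by omega⟩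
    have h1 : k - i = s + (k - (i + s)) := by omega
    rw [h1] at heq
    set t := k - (i + s) with htdef
    have e2 : W ^ i * (C ^ t * (ε * C ^ s)) = W ^ i * (C ^ t * (ε' * W ^ s)) := by
      linear_combination heq
    have e3 := Stmt1Aux.cancel hd (hWpow i) e2
    have e4 := Stmt1Aux.cancel hd (hCpow t) e3
    have e5 := congrArg φ e4
    rw [map_mul, map_mul, map_pow, map_pow, hφC] at e5
    rw [zero_pow (by omega : s ≠ 0), mul_zero] at e5
    have hφε' : φ ε' ≠ 0 := by
      rcases hε' with h | h <;> rw [h] <;> simp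
    exact (mul_ne_zero hφε' (pow_ne_zero s hφW)) e5.symm
  have hTne : ∀ i : ℕ, W ^ i * C ^ (k - i) ≠ 0 := by
    intro i h
    have h1 := congrArg Zsqrtd.norm h
    rw [Zsqrtd.norm_mul, Stmt1Aux.norm_pow', Stmt1Aux.norm_pow', hWnorm, hCnorm,
      Zsqrtd.norm_zero, ← pow_add] at h1
    exact pow_ne_zero _ hpZ.ne_zero h1
  -- the parametrization
  set u : Fin (k + 1) × Bool → ℤ√(-(n : ℤ)) :=
    fun q => (if q.2 = true then 1 else -1) * W ^ (q.1 : ℕ) * C ^ (k - (q.1 : ℕ)) with hudef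
  set g : Fin (k + 1) × Bool → ℤ × ℤ := fun q => ((u q).re, (u q).im) with hgdef
  have hu_norm : ∀ q, (u q).norm = (p : ℤ) ^ k := by
    rintro ⟨⟨i, hi⟩, s⟩
    rw [hudef]
    simp only []
    rw [Zsqrtd.norm_mul, Zsqrtd.norm_mul, Stmt1Aux.norm_pow', Stmt1Aux.norm_pow',
      hWnorm, hCnorm]
    have hone : Zsqrtd.norm (if s = true then (1 : ℤ√(-(n:ℤ))) else -1) = 1 := by
      cases s <;> simp [Zsqrtd.norm_def]
    rw [hone, one_mul, ← pow_add]
    congr 1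
    omega
  have hsign : ∀ s : Bool, ((if s = true then (1 : ℤ√(-(n:ℤ))) else -1) = 1 ∨
      (if s = true then (1 : ℤ√(-(n:ℤ))) else -1) = -1) := by
    intro s; cases s <;> simp
  have hS : {z : ℤ × ℤ | z.1 ^ 2 + n * z.2 ^ 2 = (p : ℤ) ^ k} = Set.range g := by
    ext zz
    obtain ⟨x, y⟩ := zz
    constructor
    · intro h
      simp only [Set.mem_setOf_eq] at h
      have hz : (⟨x, y⟩ : ℤ√(-(n : ℤ))).norm = (p : ℤ) ^ k := by
        rw [Zsqrtd.norm_def]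
        linear_combination h
      obtain ⟨i, hik, ε, hε, heq⟩ := Stmt1Aux.classify hn hpZ hp2 hpa hpb hab k ⟨x, y⟩ hz
      rcases hε with hε1 | hε1
      · refine ⟨(⟨i, by omega⟩, true), ?_⟩
        have huq : u (⟨i, by omega⟩, true) = (⟨x, y⟩ : ℤ√(-(n : ℤ))) := by
          have h2 : u (⟨i, by omega⟩, true) =
              (if true = true then (1 : ℤ√(-(n:ℤ))) else -1) * W ^ i * C ^ (k - i) := rfl
          rw [h2, if_pos rfl, heq, hε1, hCdef, hWdef]
        have h3 : g (⟨i, by omega⟩, true) =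
            ((u (⟨i, by omega⟩, true)).re, (u (⟨i, by omega⟩, true)).im) := rfl
        rw [h3, huq]
      · refine ⟨(⟨i, by omega⟩, false), ?_⟩
        have huq : u (⟨i, by omega⟩, false) = (⟨x, y⟩ : ℤ√(-(n : ℤ))) := by
          have h2 : u (⟨i, by omega⟩, false) =
              (if false = true then (1 : ℤ√(-(n:ℤ))) else -1) * W ^ i * C ^ (k - i) := rfl
          rw [h2, if_neg (by simp), heq, hε1, hCdef, hWdef]
        have h3 : g (⟨i, by omega⟩, false) =
            ((u (⟨i, by omega⟩, false)).re, (u (⟨i, by omega⟩, false)).im) := rfl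
        rw [h3, huq]
    · rintro ⟨q, hq⟩
      have h1 := hu_norm q
      rw [Zsqrtd.norm_def] at h1
      have hx : (u q).re = x := congrArg Prod.fst hq
      have hy : (u q).im = y := congrArg Prod.snd hq
      simp only [Set.mem_setOf_eq]
      rw [← hx, ← hy]
      linear_combination h1
  have hginj : Function.Injective g := by
    rintro ⟨⟨i, hi⟩, s⟩ ⟨⟨j, hj⟩, t⟩ hgeq
    have hueq : u (⟨i, hi⟩, s) = u (⟨j, hj⟩, t) :=
      Zsqrtd.ext (congrArg Prod.fst hgeq) (congrArg Prod.snd hgeq)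
    have hueq' : (if s = true then (1 : ℤ√(-(n:ℤ))) else -1) * W ^ i * C ^ (k - i) =
        (if t = true then (1 : ℤ√(-(n:ℤ))) else -1) * W ^ j * C ^ (k - j) := hueq
    have hij : i = j := by
      rcases lt_trichotomy i j with h | h | h
      · exact absurd hueq' (keyne i j _ _ h (by omega) (hsign s) (hsign t))
      · exact h
      · exact absurd hueq'.symm (keyne j i _ _ h (by omega) (hsign t) (hsign s))
    subst hij
    have hst : s = t := by
      have e2 : (W ^ i * C ^ (k - i)) * (if s = true then (1 : ℤ√(-(n:ℤ))) else -1) =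
          (W ^ i * C ^ (k - i)) * (if t = true then (1 : ℤ√(-(n:ℤ))) else -1) := by
        linear_combination hueq'
      have e3 := Stmt1Aux.cancel hd (hTne i) e2
      cases s <;> cases t
      · rfl
      · exfalso
        rw [if_neg (by simp), if_pos rfl] at e3
        have h4 := congrArg Zsqrtd.re e3
        rw [Zsqrtd.re_neg, Zsqrtd.re_one] at h4
        omega
      · exfalso
        rw [if_pos rfl, if_neg (by simp)] at e3
        have h4 := congrArg Zsqrtd.re e3
        rw [Zsqrtd.re_neg, Zsqrtd.re_one] at h4
        omega
      · rfl
    subst hst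
    rfl
  rw [hS]
  have hrange : Set.range g = ↑(Finset.image g Finset.univ) := by
    rw [Finset.coe_image, Finset.coe_univ, Set.image_univ]
  rw [hrange, Set.ncard_coe_finset, Finset.card_image_of_injective _ hginj,
    Finset.card_univ]
  simp only [Fintype.card_prod, Fintype.card_fin, Fintype.card_bool]
  ring
end

section
/- The standard lattice ℤ² ⊂ ℝ² is universally concyclic: for every positive integer n, there exists a circle in the plane ℝ² passing through exactly n points of ℤ². -/
open Zsqrtd

namespace SchinzelAux

abbrev GI := GaussianInt

def gA : GI := ⟨2, 1⟩
def gB : GI := ⟨2, -1⟩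

lemma normA : gA.norm = 5 := by decide
lemma normB : gB.norm = 5 := by decide
lemma starA : star gA = gB := by decide
lemma AB : gA * gB = 5 := by decide

lemma norm_nonneg' (z : GI) : 0 ≤ z.norm := Zsqrtd.norm_nonneg (by norm_num) z

lemma isUnit_iff_norm (z : GI) : z.norm = 1 ↔ IsUnit z :=
  Zsqrtd.norm_eq_one_iff' (by norm_num) z

lemma irr_of_norm5 {z : GI} (h : z.norm = 5) : Irreducible z := by
  constructor
  · intro hu
    rw [← isUnit_iff_norm] at hu; omega
  · intro x y hxy
    have hn : x.norm * y.norm = 5 := by rw [← Zsqrtd.norm_mul, ← hxy, h]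
    have hx := norm_nonneg' x
    have hy := norm_nonneg' y
    have h5 : Prime (5 : ℤ) := by norm_num
    rcases (h5.2.2 x.norm y.norm ⟨1, by linarith [hn]⟩) with hd | hd
    · right
      rcases hd with ⟨c, hc⟩
      have hdvd : y.norm ∣ 1 := ⟨c, by nlinarith⟩
      have : y.norm = 1 := Int.eq_one_of_dvd_one hy hdvd
      exact (isUnit_iff_norm y).mp this
    · left
      rcases hd with ⟨c, hc⟩
      have hdvd : x.norm ∣ 1 := ⟨c, by nlinarith⟩
      have : x.norm = 1 := Int.eq_one_of_dvd_one hx hdvd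
      exact (isUnit_iff_norm x).mp this

set_option synthInstance.maxHeartbeats 1000000 in
lemma primeA : Prime gA := irreducible_iff_prime.mp (irr_of_norm5 normA)

set_option synthInstance.maxHeartbeats 1000000 in
lemma primeB : Prime gB := irreducible_iff_prime.mp (irr_of_norm5 normB)

lemma unit_enum {u : GI} (h : IsUnit u) :
    u = 1 ∨ u = -1 ∨ u = ⟨0,1⟩ ∨ u = ⟨0,-1⟩ := by
  have h1 : u.norm = 1 := (isUnit_iff_norm u).mpr h
  obtain ⟨a, b⟩ := u
  have h2 : a * a + b * b = 1 := by
    simp [Zsqrtd.norm] at h1; linarith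
  have ha1 : a ≤ 1 := by nlinarith [mul_self_nonneg b, mul_self_nonneg (a - 1)]
  have ha2 : -1 ≤ a := by nlinarith [mul_self_nonneg b, mul_self_nonneg (a + 1)]
  have hb1 : b ≤ 1 := by nlinarith [mul_self_nonneg a, mul_self_nonneg (b - 1)]
  have hb2 : -1 ≤ b := by nlinarith [mul_self_nonneg a, mul_self_nonneg (b + 1)]
  interval_cases a <;> interval_cases b <;> simp_all <;> decide

lemma gA_ne_zero : gA ≠ 0 := by decide
lemma gB_ne_zero : gB ≠ 0 := by decide

lemma norm_pow (z : GI) (j : ℕ) : (z ^ j).norm = z.norm ^ j := by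
  induction j with
  | zero => simp [Zsqrtd.norm]
  | succ j ih => rw [pow_succ, pow_succ, Zsqrtd.norm_mul, ih]

lemma not_A_dvd_B : ¬ gA ∣ gB := by
  rintro ⟨c, hc⟩
  have hn : gB.norm = gA.norm * c.norm := by rw [hc, Zsqrtd.norm_mul]
  rw [normA, normB] at hn
  have hc1 : c.norm = 1 := by linarith
  have hu := unit_enum ((isUnit_iff_norm c).mp hc1)
  rcases hu with h | h | h | h <;> rw [h] at hc <;> revert hc <;> decide

/-- Surjectivity: every Gaussian integer of norm `5^m` has the canonical form. -/
lemma surj : ∀ (m : ℕ) (z : GI), z.norm = 5 ^ m →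
    ∃ (u : GI) (j : ℕ), IsUnit u ∧ j ≤ m ∧ z = u * gA ^ j * gB ^ (m - j) := by
  intro m
  induction m with
  | zero =>
    intro z hz
    exact ⟨z, 0, (isUnit_iff_norm z).mp (by simpa using hz), le_refl 0, by simp⟩
  | succ m ih =>
    intro z hz
    have hmul : z * star z = (5 : GI) ^ (m + 1) := by
      have := (norm_eq_mul_conj z).symm
      rw [hz] at this
      rw [this]; push_cast; ring
    have hdvd : gA ∣ z * star z := by
      rw [hmul, pow_succ, ← AB]
      exact Dvd.dvd.mul_left (Dvd.intro gB rfl) _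
    rcases primeA.2.2 z (star z) hdvd with hd | hd
    · obtain ⟨w, hw⟩ := hd
      have hnw : w.norm = 5 ^ m := by
        have : z.norm = gA.norm * w.norm := by rw [hw, Zsqrtd.norm_mul]
        rw [hz, normA] at this
        have h5 : (5:ℤ) ^ (m+1) = 5 * 5 ^ m := by ring
        rw [h5] at this
        exact mul_left_cancel₀ (by norm_num) this.symm
      obtain ⟨u, j, hu, hj, hwe⟩ := ih w hnw
      refine ⟨u, j + 1, hu, by omega, ?_⟩
      have : m + 1 - (j + 1) = m - j := by omega
      rw [this, hw, hwe]; ring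
    · have hd' : gB ∣ z := by
        obtain ⟨w, hw⟩ := hd
        refine ⟨star w, ?_⟩
        have := congrArg star hw
        rw [star_star, star_mul] at this
        rw [this, starA]; ring
      obtain ⟨w, hw⟩ := hd'
      have hnw : w.norm = 5 ^ m := by
        have : z.norm = gB.norm * w.norm := by rw [hw, Zsqrtd.norm_mul]
        rw [hz, normB] at this
        have h5 : (5:ℤ) ^ (m+1) = 5 * 5 ^ m := by ring
        rw [h5] at this
        exact mul_left_cancel₀ (by norm_num) this.symm
      obtain ⟨u, j, hu, hj, hwe⟩ := ih w hnw
      refine ⟨u, j, hu, by omega, ?_⟩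
      have : m + 1 - j = (m - j) + 1 := by omega
      rw [this, hw, hwe]; ring

lemma not_lt_aux {m : ℕ} {u u' : GI} (hu : IsUnit u) (hu' : IsUnit u')
    {j j' : ℕ} (hj' : j' ≤ m) (hlt : j < j')
    (heq : u * gA ^ j * gB ^ (m - j) = u' * gA ^ j' * gB ^ (m - j')) : False := by
  have hAj : gA ^ j * (u * gB ^ (m - j)) = gA ^ j * (gA * (u' * gA ^ (j' - j - 1) * gB ^ (m - j'))) := by
    have h1 : j + (j' - j - 1) + 1 = j' := by omega
    calc gA ^ j * (u * gB ^ (m - j)) = u * gA ^ j * gB ^ (m - j) := by ring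
    _ = u' * gA ^ j' * gB ^ (m - j') := heq
    _ = u' * gA ^ (j + (j' - j - 1) + 1) * gB ^ (m - j') := by rw [h1]
    _ = gA ^ j * (gA * (u' * gA ^ (j' - j - 1) * gB ^ (m - j'))) := by ring
  have h2 : u * gB ^ (m - j) = gA * (u' * gA ^ (j' - j - 1) * gB ^ (m - j')) :=
    mul_left_cancel₀ (pow_ne_zero j gA_ne_zero) hAj
  have hdvd : gA ∣ u * gB ^ (m - j) := Dvd.intro _ h2.symm
  rcases primeA.2.2 _ _ hdvd with hd | hd
  · exact primeA.2.1 (isUnit_of_dvd_unit hd hu)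
  · exact not_A_dvd_B (primeA.dvd_of_dvd_pow hd)

lemma inj {m : ℕ} {u u' : GI} (hu : IsUnit u) (hu' : IsUnit u')
    {j j' : ℕ} (hj : j ≤ m) (hj' : j' ≤ m)
    (heq : u * gA ^ j * gB ^ (m - j) = u' * gA ^ j' * gB ^ (m - j')) :
    u = u' ∧ j = j' := by
  have hjj : j = j' := by
    rcases lt_trichotomy j j' with h | h | h
    · exact absurd (not_lt_aux hu hu' hj' h heq) (fun x => x)
    · exact h
    · exact absurd (not_lt_aux hu' hu hj h heq.symm) (fun x => x)
  subst hjj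
  refine ⟨?_, rfl⟩
  have h2 : u * (gA ^ j * gB ^ (m - j)) = u' * (gA ^ j * gB ^ (m - j)) := by
    calc u * (gA ^ j * gB ^ (m - j)) = u * gA ^ j * gB ^ (m - j) := by ring
    _ = u' * gA ^ j * gB ^ (m - j) := heq
    _ = u' * (gA ^ j * gB ^ (m - j)) := by ring
  exact mul_right_cancel₀ (mul_ne_zero (pow_ne_zero _ gA_ne_zero) (pow_ne_zero _ gB_ne_zero)) h2

def units4 : Finset GI := {1, -1, ⟨0,1⟩, ⟨0,-1⟩}

lemma card_units4 : units4.card = 4 := by decide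

lemma mem_units4_isUnit {u : GI} (h : u ∈ units4) : IsUnit u := by
  have hI : ((⟨0,1⟩ : GI)) * ⟨0,-1⟩ = 1 := by decide
  fin_cases h
  · exact isUnit_one
  · exact IsUnit.neg isUnit_one
  · exact IsUnit.of_mul_eq_one _ hI
  · exact IsUnit.of_mul_eq_one _ (by decide : ((⟨0,-1⟩ : GI)) * ⟨0,1⟩ = 1)

def F (m : ℕ) : Finset GI :=
  (units4 ×ˢ Finset.range (m + 1)).image fun p => p.1 * gA ^ p.2 * gB ^ (m - p.2)

lemma card_F (m : ℕ) : (F m).card = 4 * (m + 1) := by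
  rw [F, Finset.card_image_of_injOn, Finset.card_product, card_units4, Finset.card_range]
  rintro ⟨u, j⟩ h ⟨u', j'⟩ h' heq
  simp only [Finset.mem_coe, Finset.mem_product, Finset.mem_range] at h h'
  have := inj (mem_units4_isUnit h.1) (mem_units4_isUnit h'.1)
    (by omega : j ≤ m) (by omega : j' ≤ m) heq
  simp [this.1, this.2]

lemma set_eq_F (m : ℕ) : {z : GI | z.norm = 5 ^ m} = ↑(F m) := by
  ext z
  simp only [Set.mem_setOf_eq, Finset.mem_coe, F, Finset.mem_image]
  constructor
  · intro hz
    obtain ⟨u, j, hu, hj, he⟩ := surj m z hz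
    have hu4 : u ∈ units4 := by
      rcases unit_enum hu with h | h | h | h <;> rw [h] <;> decide
    exact ⟨(u, j), Finset.mem_product.mpr ⟨hu4, Finset.mem_range.mpr (by omega)⟩, he.symm⟩
  · rintro ⟨⟨u, j⟩, hmem, rfl⟩
    have hmem' := Finset.mem_product.mp hmem
    have hj : j ≤ m := by have := Finset.mem_range.mp hmem'.2; omega
    have hnu : u.norm = 1 := (isUnit_iff_norm u).mpr (mem_units4_isUnit hmem'.1)
    rw [Zsqrtd.norm_mul, Zsqrtd.norm_mul, hnu, norm_pow, norm_pow, normA, normB,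
      one_mul, ← pow_add]
    congr 1
    omega

lemma ncard_norm_five (m : ℕ) : Set.ncard {z : GI | z.norm = 5 ^ m} = 4 * (m + 1) := by
  rw [set_eq_F, Set.ncard_coe_finset, card_F]

lemma finite_norm_five (m : ℕ) : {z : GI | z.norm = 5 ^ m}.Finite := by
  rw [set_eq_F]; exact (F m).finite_toSet

/-! ### Transfer to `ℤ × ℤ` -/

def S (N : ℤ) : Set (ℤ × ℤ) := {p | p.1 ^ 2 + p.2 ^ 2 = N}

def e (p : ℤ × ℤ) : GI := ⟨p.1, p.2⟩

lemma e_inj : Function.Injective e := by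
  rintro ⟨a, b⟩ ⟨c, d⟩ h
  have h1 := congrArg Zsqrtd.re h
  have h2 := congrArg Zsqrtd.im h
  simp [e] at h1 h2
  rw [h1, h2]

lemma e_image (m : ℕ) : e '' S (5 ^ m) = {z : GI | z.norm = 5 ^ m} := by
  ext z
  constructor
  · rintro ⟨⟨a, b⟩, hp, rfl⟩
    simp only [S, Set.mem_setOf_eq] at hp
    simp only [Set.mem_setOf_eq, e, Zsqrtd.norm]
    push_cast
    nlinarith [hp]
  · intro hz
    refine ⟨(z.re, z.im), ?_, ?_⟩
    · simp only [S, Set.mem_setOf_eq]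
      simp only [Set.mem_setOf_eq, Zsqrtd.norm] at hz
      nlinarith [hz]
    · simp [e]

lemma finite_S (m : ℕ) : (S ((5:ℤ) ^ m)).Finite := by
  have := finite_norm_five m
  rw [← e_image m] at this
  exact Set.Finite.of_finite_image this (e_inj.injOn)

lemma ncard_S (m : ℕ) : (S ((5:ℤ) ^ m)).ncard = 4 * (m + 1) := by
  rw [← ncard_norm_five m, ← e_image m, Set.ncard_image_of_injective _ e_inj]

/-! ### Modular arithmetic facts -/

lemma key2 : ∀ x y : ZMod 2, x ^ 2 + y ^ 2 = 1 → (x = 1 ↔ y = 0) := by decide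

lemma key3 : ∀ x y : ZMod 3, x ^ 2 + y ^ 2 = 1 →
    ((x = 0 ∧ (y = 1 ∨ y = 2)) ∨ (y = 0 ∧ (x = 1 ∨ x = 2))) := by decide

lemma cast_eq_S {n : ℕ} [NeZero n] {m : ℕ} {p : ℤ × ℤ} (hp : p ∈ S (5 ^ m))
    (h5 : (5 : ZMod n) ^ m = 1) :
    ((p.1 : ZMod n)) ^ 2 + ((p.2 : ZMod n)) ^ 2 = 1 := by
  have := congrArg (Int.cast : ℤ → ZMod n) hp
  push_cast at this
  rw [h5] at this
  exact this

lemma parity2 {m : ℕ} {p : ℤ × ℤ} (hp : p ∈ S (5 ^ m)) :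
    ((p.1 : ZMod 2) = 1 ↔ (p.2 : ZMod 2) = 0) :=
  key2 _ _ (cast_eq_S hp (by rw [show (5 : ZMod 2) = 1 by decide, one_pow]))

/-! ### The mod-2 (even `n`) count -/

def T2 (m : ℕ) : Set (ℤ × ℤ) := {p ∈ S (5 ^ m) | (p.1 : ZMod 2) = 1}

lemma swap_inj : Function.Injective (fun p : ℤ × ℤ => (p.2, p.1)) := by
  rintro ⟨a, b⟩ ⟨c, d⟩ h
  simp only [Prod.mk.injEq] at h
  simp [h.1, h.2]

lemma neg_inj' : Function.Injective (fun p : ℤ × ℤ => (-p.1, -p.2)) := by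
  rintro ⟨a, b⟩ ⟨c, d⟩ h
  simp only [Prod.mk.injEq, neg_inj] at h
  simp [h.1, h.2]

lemma zmod2_cases (x : ZMod 2) : x = 0 ∨ x = 1 := by revert x; decide

lemma swap_mem_S {N : ℤ} {p : ℤ × ℤ} (hp : p ∈ S N) : (p.2, p.1) ∈ S N := by
  simp only [S, Set.mem_setOf_eq] at hp ⊢; linarith

lemma swap_image_T2 (m : ℕ) :
    (fun p : ℤ × ℤ => (p.2, p.1)) '' T2 m = {p ∈ S (5 ^ m) | (p.1 : ZMod 2) = 0} := by
  ext p
  constructor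
  · rintro ⟨q, ⟨hqS, hq1⟩, rfl⟩
    exact ⟨swap_mem_S hqS, (parity2 hqS).mp hq1⟩
  · rintro ⟨hpS, hp0⟩
    refine ⟨(p.2, p.1), ⟨swap_mem_S hpS, ?_⟩, rfl⟩
    -- need (p.2 : ZMod 2) = 1
    rcases zmod2_cases (p.2 : ZMod 2) with h | h
    · exfalso
      have := (parity2 hpS).mpr h
      rw [hp0] at this
      exact absurd this (by decide)
    · exact h

lemma ncard_T2 (m : ℕ) : (T2 m).ncard = 2 * (m + 1) := by
  have hfin : (S ((5:ℤ) ^ m)).Finite := finite_S m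
  have hsub1 : T2 m ⊆ S (5 ^ m) := fun p hp => hp.1
  have hsub2 : {p ∈ S ((5:ℤ) ^ m) | (p.1 : ZMod 2) = 0} ⊆ S (5 ^ m) := fun p hp => hp.1
  have hdisj : Disjoint (T2 m) {p ∈ S ((5:ℤ) ^ m) | (p.1 : ZMod 2) = 0} := by
    rw [Set.disjoint_left]
    rintro p ⟨_, h1⟩ ⟨_, h0⟩
    rw [h1] at h0
    exact absurd h0 (by decide)
  have hunion : T2 m ∪ {p ∈ S ((5:ℤ) ^ m) | (p.1 : ZMod 2) = 0} = S (5 ^ m) := by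
    ext p
    constructor
    · rintro (h | h) <;> exact h.1
    · intro hp
      rcases zmod2_cases (p.1 : ZMod 2) with h | h
      · exact Or.inr ⟨hp, h⟩
      · exact Or.inl ⟨hp, h⟩
  have hcard2 : ({p ∈ S ((5:ℤ) ^ m) | (p.1 : ZMod 2) = 0}).ncard = (T2 m).ncard := by
    rw [← swap_image_T2 m, Set.ncard_image_of_injective _ swap_inj]
  have := Set.ncard_union_eq hdisj (hfin.subset hsub1) (hfin.subset hsub2)
  rw [hunion, ncard_S m, hcard2] at this
  omega

/-! ### The mod-3 (odd `n`) count -/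

def B3 (m : ℕ) (c d : ZMod 3) : Set (ℤ × ℤ) :=
  {p ∈ S (5 ^ m) | (p.1 : ZMod 3) = c ∧ (p.2 : ZMod 3) = d}

lemma neg_mem_S {N : ℤ} {p : ℤ × ℤ} (hp : p ∈ S N) : (-p.1, -p.2) ∈ S N := by
  simp only [S, Set.mem_setOf_eq] at hp ⊢; linarith

lemma neg_image_B3 (m : ℕ) (c d : ZMod 3) :
    (fun p : ℤ × ℤ => (-p.1, -p.2)) '' B3 m c d = B3 m (-c) (-d) := by
  ext p
  constructor
  · rintro ⟨q, ⟨hqS, hq1, hq2⟩, rfl⟩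
    refine ⟨neg_mem_S hqS, ?_, ?_⟩
    · push_cast; rw [hq1]
    · push_cast; rw [hq2]
  · rintro ⟨hpS, hp1, hp2⟩
    refine ⟨(-p.1, -p.2), ⟨neg_mem_S hpS, ?_, ?_⟩, by simp⟩
    · push_cast; rw [hp1]; ring
    · push_cast; rw [hp2]; ring
  

lemma swap_image_B3 (m : ℕ) (c d : ZMod 3) :
    (fun p : ℤ × ℤ => (p.2, p.1)) '' B3 m c d = B3 m d c := by
  ext p
  constructor
  · rintro ⟨q, ⟨hqS, hq1, hq2⟩, rfl⟩
    exact ⟨swap_mem_S hqS, hq2, hq1⟩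
  · rintro ⟨hpS, hp1, hp2⟩
    exact ⟨(p.2, p.1), ⟨swap_mem_S hpS, hp2, hp1⟩, rfl⟩

lemma ncard_B3_eq (m : ℕ) :
    (B3 m 1 0).ncard = (B3 m 2 0).ncard ∧ (B3 m 0 1).ncard = (B3 m 2 0).ncard ∧
      (B3 m 0 2).ncard = (B3 m 2 0).ncard := by
  have h1 : (B3 m 1 0).ncard = (B3 m 2 0).ncard := by
    conv_rhs => rw [show (2 : ZMod 3) = -1 by decide, show (0 : ZMod 3) = -0 by decide,
      ← neg_image_B3 m 1 0, Set.ncard_image_of_injective _ neg_inj']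
  have h2 : (B3 m 0 2).ncard = (B3 m 2 0).ncard := by
    conv_lhs => rw [← swap_image_B3 m 2 0, Set.ncard_image_of_injective _ swap_inj]
  have h3 : (B3 m 0 1).ncard = (B3 m 0 2).ncard := by
    conv_rhs => rw [show (2 : ZMod 3) = -1 by decide, show (0 : ZMod 3) = -0 by decide,
      ← neg_image_B3 m 0 1, Set.ncard_image_of_injective _ neg_inj']
  exact ⟨h1, h3.trans h2, h2⟩

lemma ncard_B3 (m : ℕ) (h5 : (5 : ZMod 3) ^ m = 1) : (B3 m 2 0).ncard = m + 1 := by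
  have hfin : (S ((5:ℤ) ^ m)).Finite := finite_S m
  have hsub : ∀ c d, B3 m c d ⊆ S (5 ^ m) := fun c d p hp => hp.1
  have hU : B3 m 1 0 ∪ B3 m 2 0 ∪ (B3 m 0 1 ∪ B3 m 0 2) = S (5 ^ m) := by
    ext p
    simp only [Set.mem_union]
    constructor
    · rintro ((h | h) | (h | h)) <;> exact h.1
    · intro hp
      have := key3 _ _ (cast_eq_S hp h5)
      rcases this with ⟨h1, h2 | h2⟩ | ⟨h1, h2 | h2⟩
      · exact Or.inr (Or.inl ⟨hp, h1, h2⟩)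
      · exact Or.inr (Or.inr ⟨hp, h1, h2⟩)
      · exact Or.inl (Or.inl ⟨hp, h2, h1⟩)
      · exact Or.inl (Or.inr ⟨hp, h2, h1⟩)
  have hd0 : ∀ (c d c' d' : ZMod 3), (c ≠ c' ∨ d ≠ d') → Disjoint (B3 m c d) (B3 m c' d') := by
    intro c d c' d' hne
    rw [Set.disjoint_left]
    rintro p ⟨_, h1, h2⟩ ⟨_, h1', h2'⟩
    rcases hne with h | h
    · exact h (h1 ▸ h1' ▸ rfl)
    · exact h (h2 ▸ h2' ▸ rfl)
  have hdA : Disjoint (B3 m 1 0) (B3 m 2 0) := hd0 _ _ _ _ (Or.inl (by decide))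
  have hdB : Disjoint (B3 m 0 1) (B3 m 0 2) := hd0 _ _ _ _ (Or.inr (by decide))
  have hdC : Disjoint (B3 m 1 0 ∪ B3 m 2 0) (B3 m 0 1 ∪ B3 m 0 2) := by
    rw [Set.disjoint_union_left]
    constructor <;> rw [Set.disjoint_union_right] <;>
      exact ⟨hd0 _ _ _ _ (Or.inl (by decide)), hd0 _ _ _ _ (Or.inl (by decide))⟩
  have f1 : (B3 m 1 0).Finite := hfin.subset (hsub _ _)
  have f2 : (B3 m 2 0).Finite := hfin.subset (hsub _ _)
  have f3 : (B3 m 0 1).Finite := hfin.subset (hsub _ _)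
  have f4 : (B3 m 0 2).Finite := hfin.subset (hsub _ _)
  have hc1 := Set.ncard_union_eq hdA f1 f2
  have hc2 := Set.ncard_union_eq hdB f3 f4
  have hc3 := Set.ncard_union_eq hdC (f1.union f2) (f3.union f4)
  rw [hU, ncard_S m, hc1, hc2] at hc3
  obtain ⟨e1, e2, e3⟩ := ncard_B3_eq m
  rw [e1, e2, e3] at hc3
  omega

/-! ### Circles -/

lemma g2_inj : Function.Injective (fun q : ℤ × ℤ => (2 * q.1 - 1, 2 * q.2)) := by
  rintro ⟨a, b⟩ ⟨c, d⟩ h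
  simp only [Prod.mk.injEq] at h ⊢
  omega

lemma g3_inj : Function.Injective (fun q : ℤ × ℤ => (3 * q.1 - 1, 3 * q.2)) := by
  rintro ⟨a, b⟩ ⟨c, d⟩ h
  simp only [Prod.mk.injEq] at h ⊢
  omega

lemma even_circle (m : ℕ) :
    {p : ℤ × ℤ | ((p.1 : ℝ) - 1/2) ^ 2 + ((p.2 : ℝ) - 0) ^ 2 = (Real.sqrt 5 ^ m / 2) ^ 2}.ncard
      = 2 * (m + 1) := by
  have hr2 : ((Real.sqrt 5 ^ m / 2) ^ 2 : ℝ) = (5:ℝ) ^ m / 4 := by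
    rw [div_pow, ← pow_mul, mul_comm m 2, pow_mul, Real.sq_sqrt (by norm_num : (0:ℝ) ≤ 5)]
    norm_num
  have hset : {p : ℤ × ℤ | ((p.1 : ℝ) - 1/2) ^ 2 + ((p.2 : ℝ) - 0) ^ 2 = (Real.sqrt 5 ^ m / 2) ^ 2}
      = {p : ℤ × ℤ | (2 * p.1 - 1) ^ 2 + (2 * p.2) ^ 2 = 5 ^ m} := by
    ext ⟨x, y⟩
    simp only [Set.mem_setOf_eq, hr2]
    constructor
    · intro h
      have hR : ((2*x-1 : ℤ) : ℝ) ^ 2 + ((2*y : ℤ) : ℝ) ^ 2 = (((5:ℤ)^m : ℤ) : ℝ) := by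
        push_cast
        linear_combination 4 * h
      exact_mod_cast hR
    · intro h
      have hR : ((2*x-1 : ℤ) : ℝ) ^ 2 + ((2*y : ℤ) : ℝ) ^ 2 = (((5:ℤ)^m : ℤ) : ℝ) := by
        exact_mod_cast congrArg (Int.cast : ℤ → ℝ) h
      push_cast at hR
      linear_combination hR / 4
  have himg : (fun q : ℤ × ℤ => (2 * q.1 - 1, 2 * q.2)) ''
      {p : ℤ × ℤ | (2 * p.1 - 1) ^ 2 + (2 * p.2) ^ 2 = 5 ^ m} = T2 m := by
    ext p
    constructor
    · rintro ⟨⟨x, y⟩, hq, rfl⟩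
      simp only [Set.mem_setOf_eq] at hq
      refine ⟨hq, ?_⟩
      show ((2 * x - 1 : ℤ) : ZMod 2) = 1
      push_cast
      rw [show (2 : ZMod 2) = 0 from rfl, zero_mul, zero_sub]
      decide
    · rintro ⟨hpS, hp1⟩
      have h1 : ((p.1 + 1 : ℤ) : ZMod 2) = 0 := by push_cast; rw [hp1]; decide
      have h2 : (2:ℤ) ∣ p.1 + 1 := (ZMod.intCast_zmod_eq_zero_iff_dvd _ 2).mp h1
      have hb : ((p.2 : ZMod 2)) = 0 := (parity2 hpS).mp hp1
      have h3 : (2:ℤ) ∣ p.2 := (ZMod.intCast_zmod_eq_zero_iff_dvd _ 2).mp hb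
      obtain ⟨x, hx⟩ := h2
      obtain ⟨y, hy⟩ := h3
      have hS' := hpS
      simp only [S, Set.mem_setOf_eq] at hS'
      refine ⟨(x, y), ?_, ?_⟩
      · show (2 * x - 1) ^ 2 + (2 * y) ^ 2 = 5 ^ m
        rw [show (2 * x - 1 : ℤ) = p.1 by omega, ← hy]
        exact hS'
      · show ((2 * x - 1 : ℤ), (2 * y : ℤ)) = p
        rw [show (2 * x - 1 : ℤ) = p.1 by omega, ← hy]
  rw [hset, ← ncard_T2 m, ← himg, Set.ncard_image_of_injective _ g2_inj]

lemma odd_circle (k : ℕ) :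
    {p : ℤ × ℤ | ((p.1 : ℝ) - 1/3) ^ 2 + ((p.2 : ℝ) - 0) ^ 2 = ((5:ℝ) ^ k / 3) ^ 2}.ncard
      = 2 * k + 1 := by
  have h5 : (5 : ZMod 3) ^ (2 * k) = 1 := by
    rw [pow_mul, show (5 : ZMod 3) ^ 2 = 1 from rfl, one_pow]
  have hr2 : (((5:ℝ) ^ k / 3) ^ 2 : ℝ) = (5:ℝ) ^ (2 * k) / 9 := by
    rw [div_pow, ← pow_mul, mul_comm k 2]
    norm_num
  have hset : {p : ℤ × ℤ | ((p.1 : ℝ) - 1/3) ^ 2 + ((p.2 : ℝ) - 0) ^ 2 = ((5:ℝ) ^ k / 3) ^ 2}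
      = {p : ℤ × ℤ | (3 * p.1 - 1) ^ 2 + (3 * p.2) ^ 2 = 5 ^ (2 * k)} := by
    ext ⟨x, y⟩
    simp only [Set.mem_setOf_eq, hr2]
    constructor
    · intro h
      have hR : ((3*x-1 : ℤ) : ℝ) ^ 2 + ((3*y : ℤ) : ℝ) ^ 2 = (((5:ℤ)^(2*k) : ℤ) : ℝ) := by
        push_cast
        linear_combination 9 * h
      exact_mod_cast hR
    · intro h
      have hR : ((3*x-1 : ℤ) : ℝ) ^ 2 + ((3*y : ℤ) : ℝ) ^ 2 = (((5:ℤ)^(2*k) : ℤ) : ℝ) := by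
        exact_mod_cast congrArg (Int.cast : ℤ → ℝ) h
      push_cast at hR
      linear_combination hR / 9
  have himg : (fun q : ℤ × ℤ => (3 * q.1 - 1, 3 * q.2)) ''
      {p : ℤ × ℤ | (3 * p.1 - 1) ^ 2 + (3 * p.2) ^ 2 = 5 ^ (2 * k)} = B3 (2 * k) 2 0 := by
    ext p
    constructor
    · rintro ⟨⟨x, y⟩, hq, rfl⟩
      simp only [Set.mem_setOf_eq] at hq
      refine ⟨hq, ?_, ?_⟩
      · show ((3 * x - 1 : ℤ) : ZMod 3) = 2
        push_cast
        rw [show (3 : ZMod 3) = 0 from rfl, zero_mul, zero_sub]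
        decide
      · show ((3 * y : ℤ) : ZMod 3) = 0
        push_cast
        rw [show (3 : ZMod 3) = 0 from rfl, zero_mul]
    · rintro ⟨hpS, hp1, hp2⟩
      have h1 : ((p.1 + 1 : ℤ) : ZMod 3) = 0 := by push_cast; rw [hp1]; decide
      have h2 : (3:ℤ) ∣ p.1 + 1 := (ZMod.intCast_zmod_eq_zero_iff_dvd _ 3).mp h1
      have h3 : (3:ℤ) ∣ p.2 := (ZMod.intCast_zmod_eq_zero_iff_dvd _ 3).mp hp2
      obtain ⟨x, hx⟩ := h2
      obtain ⟨y, hy⟩ := h3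
      have hS' := hpS
      simp only [S, Set.mem_setOf_eq] at hS'
      refine ⟨(x, y), ?_, ?_⟩
      · show (3 * x - 1) ^ 2 + (3 * y) ^ 2 = 5 ^ (2 * k)
        rw [show (3 * x - 1 : ℤ) = p.1 by omega, ← hy]
        exact hS'
      · show ((3 * x - 1 : ℤ), (3 * y : ℤ)) = p
        rw [show (3 * x - 1 : ℤ) = p.1 by omega, ← hy]
  rw [hset, ← ncard_B3 (2 * k) h5, ← himg, Set.ncard_image_of_injective _ g3_inj]

end SchinzelAux

/-- `ℤ² ⊂ ℝ²` is universally concyclic: for every positive integer `n` there is a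
circle in the plane passing through exactly `n` points of `ℤ²`. -/
theorem stmt_3 (n : ℕ) (hn : 0 < n) :
    ∃ (c₁ c₂ r : ℝ), 0 < r ∧
      Set.ncard {p : ℤ × ℤ |
        ((p.1 : ℝ) - c₁) ^ 2 + ((p.2 : ℝ) - c₂) ^ 2 = r ^ 2} = n := by
  rcases Nat.even_or_odd n with ⟨k, hk⟩ | ⟨k, hk⟩
  · refine ⟨1/2, 0, Real.sqrt 5 ^ (k - 1) / 2, by positivity, ?_⟩
    rw [SchinzelAux.even_circle (k - 1)]
    omega
  · refine ⟨1/3, 0, (5:ℝ) ^ k / 3, by positivity, ?_⟩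
    rw [SchinzelAux.odd_circle k]
    omega
end

section
/- Let a, b, c, d ∈ ℤ be such that q := ad - bc is a prime with q ≡ 3 (mod 4). Then the lattice Λ generated by (a,b) and (c,d) in ℝ² is universally concyclic. -/
open Zsqrtd

local notation "ℤi" => GaussianInt

namespace UC

def pp : ℤi := ⟨2, 1⟩
def pq : ℤi := ⟨2, -1⟩
def ii : ℤi := ⟨0, 1⟩

lemma norm_pp : pp.norm = 5 := by decide
lemma norm_pq : pq.norm = 5 := by decide
lemma ii_sq : ii^2 = -1 := by decide
lemma ii_cube : ii^3 = -ii := by decide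
lemma pp_mul_pq : pp * pq = (5 : ℤi) := by decide
lemma pp_ne_zero : pp ≠ 0 := by decide
lemma pq_ne_zero : pq ≠ 0 := by decide
lemma star_pp : star pp = pq := by decide

lemma unit_class (u : ℤi) (h : u.norm = 1) : u = 1 ∨ u = ii ∨ u = -1 ∨ u = -ii := by
  obtain ⟨x, y⟩ := u
  rw [Zsqrtd.norm_def] at h
  change x * x - -1 * y * y = 1 at h
  have hx1 : -1 ≤ x := by nlinarith [sq_nonneg (x+1), mul_self_nonneg y]
  have hx2 : x ≤ 1 := by nlinarith [sq_nonneg (x-1), mul_self_nonneg y]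
  have hy1 : -1 ≤ y := by nlinarith [sq_nonneg (y+1), mul_self_nonneg x]
  have hy2 : y ≤ 1 := by nlinarith [sq_nonneg (y-1), mul_self_nonneg x]
  interval_cases x <;> interval_cases y <;> simp_all <;> first
    | (left; rfl) | (right; left; rfl) | (right; right; left; rfl) | (right; right; right; rfl)

lemma not_unit_pp : ¬ IsUnit pp := by
  rw [← Zsqrtd.norm_eq_one_iff' (by norm_num : (-1:ℤ) ≤ 0)]
  rw [norm_pp]; norm_num

lemma prime_pp : Prime pp := by
  rw [← UniqueFactorizationMonoid.irreducible_iff_prime]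
  constructor
  · exact not_unit_pp
  · intro x y hxy
    have hn : x.norm * y.norm = 5 := by rw [← Zsqrtd.norm_mul, ← hxy, norm_pp]
    have hd : x.norm ∣ 5 := ⟨y.norm, hn.symm⟩
    have hnn : 0 ≤ x.norm := Zsqrtd.norm_nonneg (by norm_num) x
    have h15 : x.norm = 1 ∨ x.norm = 5 := by
      have : x.norm.natAbs ∣ 5 := by
        have := Int.natAbs_dvd_natAbs.mpr hd; simpa using this
      have := Nat.Prime.eq_one_or_self_of_dvd (by norm_num) _ this
      omega
    rcases h15 with h1 | h5
    · left; exact (Zsqrtd.norm_eq_one_iff' (by norm_num : (-1:ℤ) ≤ 0) x).mp h1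
    · right
      have : y.norm = 1 := by rw [h5] at hn; linarith
      exact (Zsqrtd.norm_eq_one_iff' (by norm_num : (-1:ℤ) ≤ 0) y).mp this

lemma isUnit_ii : IsUnit ii := IsUnit.of_mul_eq_one (-ii) (by decide)

lemma pp_not_dvd_ii_pow (j : ℕ) : ¬ pp ∣ ii^j := fun h =>
  not_unit_pp (isUnit_of_dvd_unit h (isUnit_ii.pow j))

lemma pp_not_dvd_pq : ¬ pp ∣ pq := by
  rintro ⟨z, hz⟩
  have hn : (5:ℤ) = 5 * z.norm := by
    have := congrArg Zsqrtd.norm hz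
    rwa [norm_pq, Zsqrtd.norm_mul, norm_pp] at this
  have hz1 : z.norm = 1 := by linarith
  rcases unit_class z hz1 with rfl | rfl | rfl | rfl <;> revert hz <;> decide

lemma class5 : ∀ (k : ℕ) (u : ℤi), u.norm = 5^k →
    ∃ j s, j < 4 ∧ s ≤ k ∧ u = ii^j * (pp^s * pq^(k-s)) := by
  intro k
  induction k with
  | zero =>
    intro u h
    rcases unit_class u (by simpa using h) with rfl | rfl | rfl | rfl
    · exact ⟨0, 0, by norm_num, le_refl _, by simp⟩
    · exact ⟨1, 0, by norm_num, le_refl _, by simp⟩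
    · exact ⟨2, 0, by norm_num, le_refl _, by simp [ii_sq]⟩
    · exact ⟨3, 0, by norm_num, le_refl _, by simp [ii_cube]⟩
  | succ k ih =>
    intro u h
    have hdvd : pp ∣ u * star u := by
      have h1 : u * star u = ((5:ℤi))^(k+1) := by
        rw [← Zsqrtd.norm_eq_mul_conj, h]; push_cast; ring
      rw [h1]
      exact dvd_pow (Dvd.intro pq pp_mul_pq.symm) (Nat.succ_ne_zero k)
    rcases prime_pp.dvd_or_dvd hdvd with hu | hsu
    · obtain ⟨v, rfl⟩ := hu
      have hv : v.norm = 5^k := by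
        rw [Zsqrtd.norm_mul, norm_pp] at h
        have : (5:ℤ) * v.norm = 5 * 5^k := by rw [h]; ring
        exact mul_left_cancel₀ (by norm_num) this
      obtain ⟨j, s, hj, hs, rfl⟩ := ih v hv
      refine ⟨j, s+1, hj, by omega, ?_⟩
      rw [Nat.succ_sub_succ]; ring
    · obtain ⟨v, hv⟩ := hsu
      have hu : u = pq * star v := by
        have := congrArg star hv
        rwa [star_star, star_mul, star_pp, mul_comm] at this
      have hnv : (star v).norm = 5^k := by
        rw [hu, Zsqrtd.norm_mul, norm_pq] at h
        have : (5:ℤ) * (star v).norm = 5 * 5^k := by rw [h]; ring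
        exact mul_left_cancel₀ (by norm_num) this
      obtain ⟨j, s, hj, hs, hveq⟩ := ih (star v) hnv
      refine ⟨j, s, hj, by omega, ?_⟩
      rw [hu, hveq, show k+1-s = (k-s)+1 by omega]; ring

lemma pow_lt_cancel {s1 s2 k j1 j2 : ℕ} (hlt : s1 < s2) (hs2 : s2 ≤ k)
    (h : ii^j1 * (pp^s1 * pq^(k-s1)) = ii^j2 * (pp^s2 * pq^(k-s2))) : False := by
  have hdvd : pp^s1 * pp ∣ pp^s1 * (ii^j1 * pq^(k-s1)) := by
    have h2 : pp^(s1+1) ∣ pp^s2 := pow_dvd_pow pp (by omega)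
    have h3 : pp^(s1+1) ∣ ii^j2 * (pp^s2 * pq^(k-s2)) :=
      Dvd.dvd.mul_left (h2.mul_right _) _
    rw [← h] at h3
    have : pp^(s1+1) = pp^s1 * pp := by ring
    rw [this] at h3
    have heq : ii ^ j1 * (pp ^ s1 * pq ^ (k - s1)) = pp^s1 * (ii^j1 * pq^(k-s1)) := by ring
    rwa [heq] at h3
  have hdvd2 : pp ∣ ii^j1 * pq^(k-s1) :=
    (mul_dvd_mul_iff_left (pow_ne_zero s1 pp_ne_zero)).mp hdvd
  rcases prime_pp.dvd_or_dvd hdvd2 with h1 | h2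
  · exact pp_not_dvd_ii_pow j1 h1
  · exact pp_not_dvd_pq (prime_pp.dvd_of_dvd_pow h2)

lemma inj5 {k j1 s1 j2 s2 : ℕ} (hj1 : j1 < 4) (hj2 : j2 < 4) (hs1 : s1 ≤ k) (hs2 : s2 ≤ k)
    (h : ii^j1 * (pp^s1 * pq^(k-s1)) = ii^j2 * (pp^s2 * pq^(k-s2))) : j1 = j2 ∧ s1 = s2 := by
  have hs : s1 = s2 := by
    rcases lt_trichotomy s1 s2 with hlt | he | hgt
    · exact absurd (pow_lt_cancel hlt hs2 h) (fun x => x)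
    · exact he
    · exact absurd (pow_lt_cancel hgt hs1 h.symm) (fun x => x)
  subst hs
  have hne : pp^s1 * pq^(k-s1) ≠ 0 :=
    mul_ne_zero (pow_ne_zero _ pp_ne_zero) (pow_ne_zero _ pq_ne_zero)
  have hj : ii^j1 = ii^j2 := mul_right_cancel₀ hne h
  refine ⟨?_, rfl⟩
  interval_cases j1 <;> interval_cases j2 <;> revert hj <;> decide

lemma norm_key (u : ℤi) : u.norm = u.re * u.re + u.im * u.im := by
  rw [Zsqrtd.norm_def]; ring

lemma resid4 (k : ℕ) (u : ℤi) (h : u.norm = 5^(2*k)) :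
    ((u.re : ZMod 4) = 0 ∧ ((u.im : ZMod 4) = 1 ∨ (u.im : ZMod 4) = 3)) ∨
    (((u.re : ZMod 4) = 1 ∨ (u.re : ZMod 4) = 3) ∧ (u.im : ZMod 4) = 0) := by
  have key : u.re * u.re + u.im * u.im = 5^(2*k) := by rw [← norm_key, h]
  have h8 : (u.re : ZMod 8) * (u.re : ZMod 8) + (u.im : ZMod 8) * (u.im : ZMod 8) = 1 := by
    have := congrArg (fun z : ℤ => (z : ZMod 8)) key
    push_cast at this
    rw [pow_mul, show (5:ZMod 8)^2 = 1 by decide, one_pow] at this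
    exact this
  have main : ∀ r s : ZMod 8, r * r + s * s = 1 →
      ((ZMod.castHom (by norm_num : 4 ∣ 8) (ZMod 4) r = 0 ∧
        (ZMod.castHom (by norm_num : 4 ∣ 8) (ZMod 4) s = 1 ∨
         ZMod.castHom (by norm_num : 4 ∣ 8) (ZMod 4) s = 3)) ∨
       ((ZMod.castHom (by norm_num : 4 ∣ 8) (ZMod 4) r = 1 ∨
         ZMod.castHom (by norm_num : 4 ∣ 8) (ZMod 4) r = 3) ∧
        ZMod.castHom (by norm_num : 4 ∣ 8) (ZMod 4) s = 0)) := by decide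
  have hre := map_intCast (ZMod.castHom (by norm_num : 4 ∣ 8) (ZMod 4)) u.re
  have him := map_intCast (ZMod.castHom (by norm_num : 4 ∣ 8) (ZMod 4)) u.im
  have := main _ _ h8
  rw [hre, him] at this
  exact this

lemma resid2 (k : ℕ) (u : ℤi) (h : u.norm = 5^k) :
    ((u.re : ZMod 2) = 1 ∧ (u.im : ZMod 2) = 0) ∨
    ((u.re : ZMod 2) = 0 ∧ (u.im : ZMod 2) = 1) := by
  have key : u.re * u.re + u.im * u.im = 5^k := by rw [← norm_key, h]
  have h2 : (u.re : ZMod 2) * (u.re : ZMod 2) + (u.im : ZMod 2) * (u.im : ZMod 2) = 1 := by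
    have := congrArg (fun z : ℤ => (z : ZMod 2)) key
    push_cast at this
    rw [show (5:ZMod 2) = 1 by decide, one_pow] at this
    exact this
  have main : ∀ r s : ZMod 2, r * r + s * s = 1 →
      ((r = 1 ∧ s = 0) ∨ (r = 0 ∧ s = 1)) := by decide
  exact main _ _ h2

lemma ii_mul_re (w : ℤi) : (ii * w).re = -w.im := by
  simp [ii, Zsqrtd.re_mul]
lemma ii_mul_im (w : ℤi) : (ii * w).im = w.re := by
  simp [ii, Zsqrtd.im_mul]
lemma norm_ii_mul (w : ℤi) : (ii * w).norm = w.norm := by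
  rw [Zsqrtd.norm_mul, show ii.norm = 1 by decide, one_mul]

def S0 (k : ℕ) : Set ℤi :=
  {u | u.norm = 5^(2*k) ∧ (u.re : ZMod 4) = 3 ∧ (u.im : ZMod 4) = 0}

noncomputable def pick4 (w : ℤi) : ℤi :=
  if (w.im : ZMod 4) = 0 then (if (w.re : ZMod 4) = 3 then w else -w)
  else (if ((ii*w).re : ZMod 4) = 3 then ii*w else -(ii*w))

lemma pick4_mem {k : ℕ} {w : ℤi} (h : w.norm = 5^(2*k)) : pick4 w ∈ S0 k := by
  have hnormneg : (-w).norm = w.norm := Zsqrtd.norm_neg w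
  have hnormi : (ii*w).norm = w.norm := norm_ii_mul w
  have hnormni : (-(ii*w)).norm = w.norm := by rw [Zsqrtd.norm_neg, hnormi]
  have hnr : ((-w).re : ZMod 4) = -(w.re : ZMod 4) := by
    rw [Zsqrtd.re_neg]; push_cast; ring
  have hni : ((-w).im : ZMod 4) = -(w.im : ZMod 4) := by
    rw [Zsqrtd.im_neg]; push_cast; ring
  have hir : (((ii*w)).re : ZMod 4) = -(w.im : ZMod 4) := by
    rw [ii_mul_re]; push_cast; ring
  have hii' : (((ii*w)).im : ZMod 4) = (w.re : ZMod 4) := by rw [ii_mul_im]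
  have hnir : ((-(ii*w)).re : ZMod 4) = (w.im : ZMod 4) := by
    rw [Zsqrtd.re_neg, ii_mul_re]; push_cast; ring
  have hnii : ((-(ii*w)).im : ZMod 4) = -(w.re : ZMod 4) := by
    rw [Zsqrtd.im_neg, ii_mul_im]; push_cast; ring
  rcases resid4 k w h with ⟨hr0, him13⟩ | ⟨hre13, him0⟩
  · -- re ≡ 0, im ∈ {1,3}: second branch
    have himne : (w.im : ZMod 4) ≠ 0 := by rcases him13 with h1 | h1 <;> rw [h1] <;> decide
    rcases him13 with h1 | h1
    · -- im ≡ 1 : (ii w).re = -1 = 3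
      have : ((ii*w).re : ZMod 4) = 3 := by rw [hir, h1]; decide
      rw [pick4, if_neg himne, if_pos this]
      exact ⟨by rw [hnormi, h], this, by rw [hii', hr0]⟩
    · -- im ≡ 3 : (ii w).re = -3 = 1 ≠ 3
      have : ((ii*w).re : ZMod 4) ≠ 3 := by rw [hir, h1]; decide
      rw [pick4, if_neg himne, if_neg this]
      exact ⟨by rw [hnormni, h], by rw [hnir, h1], by rw [hnii, hr0]; decide⟩
  · rcases hre13 with h1 | h1
    · have : (w.re : ZMod 4) ≠ 3 := by rw [h1]; decide
      rw [pick4, if_pos him0, if_neg this]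
      exact ⟨by rw [hnormneg, h], by rw [hnr, h1]; decide, by rw [hni, him0]; decide⟩
    · rw [pick4, if_pos him0, if_pos h1]
      exact ⟨h, h1, him0⟩

lemma pick4_form (w : ℤi) : ∃ j, j < 4 ∧ pick4 w = ii^j * w := by
  rw [pick4]
  split_ifs
  · exact ⟨0, by norm_num, by simp⟩
  · exact ⟨2, by norm_num, by rw [ii_sq]; ring⟩
  · exact ⟨1, by norm_num, by simp⟩
  · exact ⟨3, by norm_num, by rw [ii_cube]; ring⟩

lemma pick4_eq_of_mem {k : ℕ} {w : ℤi} (h : w.norm = 5^(2*k)) {j : ℕ} (hj : j < 4)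
    (hu : ii^j * w ∈ S0 k) : ii^j * w = pick4 w := by
  interval_cases j
  · -- j = 0 : u = w
    rw [pow_zero, one_mul] at hu ⊢
    rw [pick4, if_pos hu.2.2, if_pos hu.2.1]
  · rw [pow_one] at hu ⊢
    have h1 : ((ii*w).re : ZMod 4) = 3 := hu.2.1
    have h2 : (w.re : ZMod 4) = 0 := by rw [← ii_mul_im w]; exact hu.2.2
    have himne : (w.im : ZMod 4) ≠ 0 := by
      intro h0
      have : ((ii*w).re : ZMod 4) = 0 := by
        rw [ii_mul_re]; push_cast; rw [h0]; ring
      rw [h1] at this; exact absurd this (by decide)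
    rw [pick4, if_neg himne, if_pos h1]
  · rw [ii_sq, neg_one_mul] at hu ⊢
    have h1 : ((-w).re : ZMod 4) = 3 := hu.2.1
    have h2 : ((-w).im : ZMod 4) = 0 := hu.2.2
    have hre : (w.re : ZMod 4) = 1 := by
      have : (w.re : ZMod 4) = -((-w).re : ZMod 4) := by
        rw [Zsqrtd.re_neg]; push_cast; ring
      rw [this, h1]; decide
    have him : (w.im : ZMod 4) = 0 := by
      have : (w.im : ZMod 4) = -((-w).im : ZMod 4) := by
        rw [Zsqrtd.im_neg]; push_cast; ring
      rw [this, h2]; decide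
    rw [pick4, if_pos him, if_neg (by rw [hre]; decide)]
  · rw [ii_cube, neg_mul] at hu ⊢
    have h1 : (((-(ii*w))).re : ZMod 4) = 3 := hu.2.1
    have him3 : (w.im : ZMod 4) = 3 := by
      have : ((-(ii*w)).re : ZMod 4) = (w.im : ZMod 4) := by
        rw [Zsqrtd.re_neg, ii_mul_re]; push_cast; ring
      rw [← this, h1]
    have himne : (w.im : ZMod 4) ≠ 0 := by rw [him3]; decide
    have hirne : ((ii*w).re : ZMod 4) ≠ 3 := by
      have : ((ii*w).re : ZMod 4) = -(w.im : ZMod 4) := by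
        rw [ii_mul_re]; push_cast; ring
      rw [this, him3]; decide
    rw [pick4, if_neg himne, if_neg hirne]

lemma norm_pow' (z : ℤi) (n : ℕ) : (z^n).norm = z.norm^n := by
  induction n with
  | zero => simp
  | succ n ih => rw [pow_succ, pow_succ, Zsqrtd.norm_mul, ih]

lemma norm_ws {s m : ℕ} (hs : s ≤ m) : (pp^s * pq^(m-s)).norm = 5^m := by
  rw [Zsqrtd.norm_mul, norm_pow', norm_pow', norm_pp, norm_pq, ← pow_add]
  congr 1; omega

lemma card_S0 (k : ℕ) : (S0 k).ncard = 2*k+1 := by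
  classical
  set F : ℕ → ℤi := fun s => pick4 (pp^s * pq^(2*k - s)) with hF
  have himg : S0 k = F '' ↑(Finset.range (2*k+1)) := by
    ext u
    constructor
    · intro hu
      obtain ⟨j, s, hj, hs, hueq⟩ := class5 (2*k) u hu.1
      refine ⟨s, by simp; omega, ?_⟩
      rw [hF]
      have := pick4_eq_of_mem (norm_ws hs) hj (by rw [← hueq]; exact hu)
      simp only []
      rw [← this, ← hueq]
    · rintro ⟨s, hs, rfl⟩
      exact pick4_mem (norm_ws (by simp at hs; omega))
  have hinj : Set.InjOn F ↑(Finset.range (2*k+1)) := by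
    intro s hs t ht hst
    simp only [Finset.coe_range, Set.mem_Iio] at hs ht
    obtain ⟨j1, hj1, he1⟩ := pick4_form (pp^s * pq^(2*k - s))
    obtain ⟨j2, hj2, he2⟩ := pick4_form (pp^t * pq^(2*k - t))
    rw [hF] at hst
    simp only [] at hst
    rw [he1, he2] at hst
    exact (inj5 hj1 hj2 (by omega) (by omega) hst).2
  rw [himg, Set.ncard_image_of_injOn hinj, Set.ncard_coe_finset, Finset.card_range]

def S1 (k : ℕ) : Set ℤi :=
  {u | u.norm = 5^k ∧ (u.re : ZMod 2) = 1 ∧ (u.im : ZMod 2) = 0}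

noncomputable def pick2 (w : ℤi) : ℤi :=
  if (w.re : ZMod 2) = 1 then w else ii*w

lemma pick2_mem {k : ℕ} {w : ℤi} (h : w.norm = 5^k) : pick2 w ∈ S1 k := by
  rw [pick2]
  rcases resid2 k w h with ⟨h1, h2⟩ | ⟨h1, h2⟩
  · rw [if_pos h1]; exact ⟨h, h1, h2⟩
  · rw [if_neg (by rw [h1]; decide)]
    refine ⟨by rw [norm_ii_mul, h], ?_, ?_⟩
    · rw [ii_mul_re]; push_cast; rw [h2]; decide
    · rw [ii_mul_im]; exact h1

lemma neg_mem_S1 {k : ℕ} {u : ℤi} (h : u ∈ S1 k) : -u ∈ S1 k := by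
  refine ⟨by rw [Zsqrtd.norm_neg]; exact h.1, ?_, ?_⟩
  · rw [Zsqrtd.re_neg]; push_cast; rw [h.2.1]; decide
  · rw [Zsqrtd.im_neg]; push_cast; rw [h.2.2]; decide

lemma pick2_form (w : ℤi) : ∃ j, j ≤ 1 ∧ pick2 w = ii^j * w := by
  rw [pick2]; split_ifs
  · exact ⟨0, by norm_num, by simp⟩
  · exact ⟨1, by norm_num, by simp⟩

lemma card_S1 (k : ℕ) : (S1 k).ncard = 2*k+2 := by
  classical
  set F : ℕ × ℕ → ℤi := fun es => (-1)^es.1 * pick2 (pp^es.2 * pq^(k - es.2)) with hF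
  set T : Finset (ℕ × ℕ) := Finset.range 2 ×ˢ Finset.range (k+1) with hT
  have hform : ∀ e s : ℕ, e < 2 → s ≤ k → ∃ j, j < 4 ∧ F (e, s) = ii^j * (pp^s * pq^(k-s)) := by
    intro e s he hs
    obtain ⟨δ, hδ, hp⟩ := pick2_form (pp^s * pq^(k - s))
    refine ⟨2*e + δ, by omega, ?_⟩
    rw [hF]; simp only []
    rw [hp, pow_add, pow_mul, ii_sq, mul_assoc]
  have himg : S1 k = F '' ↑T := by
    ext u
    constructor
    · intro hu
      obtain ⟨j, s, hj, hs, hueq⟩ := class5 k u hu.1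
      have hw := norm_ws hs
      rcases resid2 k _ hw with ⟨h1, h2⟩ | ⟨h1, h2⟩
      · -- pick2 w = w
        have hp : pick2 (pp^s * pq^(k-s)) = pp^s * pq^(k-s) := by rw [pick2, if_pos h1]
        have him0 : ((pp^s * pq^(k-s)).im : ZMod 2) = 0 := h2
        interval_cases j
        · refine ⟨(0, s), by simp [hT]; omega, ?_⟩
          rw [hF]; simp only []
          rw [hp, pow_zero, one_mul]
          rw [pow_zero, one_mul] at hueq
          exact hueq.symm
        · exfalso
          rw [pow_one] at hueq
          have : (u.re : ZMod 2) = 0 := by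
            rw [hueq, ii_mul_re]; push_cast; rw [him0]; ring
          rw [hu.2.1] at this; exact absurd this (by decide)
        · refine ⟨(1, s), by simp [hT]; omega, ?_⟩
          rw [hF]; simp only []
          rw [hp, pow_one, hueq, ii_sq]
        · exfalso
          rw [ii_cube, neg_mul] at hueq
          have : (u.re : ZMod 2) = 0 := by
            rw [hueq, Zsqrtd.re_neg, ii_mul_re]; push_cast; rw [him0]; ring
          rw [hu.2.1] at this; exact absurd this (by decide)
      · -- pick2 w = ii * w
        have hp : pick2 (pp^s * pq^(k-s)) = ii * (pp^s * pq^(k-s)) := by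
          rw [pick2, if_neg (by rw [h1]; decide)]
        interval_cases j
        · exfalso
          rw [pow_zero, one_mul] at hueq
          have : (u.re : ZMod 2) = 0 := by rw [hueq]; exact h1
          rw [hu.2.1] at this; exact absurd this (by decide)
        · refine ⟨(0, s), by simp [hT]; omega, ?_⟩
          rw [hF]; simp only []
          rw [hp, pow_zero, one_mul, hueq, pow_one]
        · exfalso
          rw [ii_sq, neg_one_mul] at hueq
          have : (u.re : ZMod 2) = 0 := by
            rw [hueq, Zsqrtd.re_neg]; push_cast; rw [h1]; ring
          rw [hu.2.1] at this; exact absurd this (by decide)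
        · refine ⟨(1, s), by simp [hT]; omega, ?_⟩
          rw [hF]; simp only []
          rw [hp, pow_one, hueq, ii_cube]; ring
    · rintro ⟨⟨e, s⟩, hes, rfl⟩
      have hes' : e < 2 ∧ s ≤ k := by simp [hT] at hes; omega
      rw [hF]; simp only []
      rcases (by omega : e = 0 ∨ e = 1) with rfl | rfl
      · rw [pow_zero, one_mul]; exact pick2_mem (norm_ws hes'.2)
      · rw [pow_one, neg_one_mul]; exact neg_mem_S1 (pick2_mem (norm_ws hes'.2))
  have hneg_pow : ∀ e : ℕ, ((-1 : ℤi))^e = ii^(2*e) := by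
    intro e; rw [pow_mul, ii_sq]
  have hinj : Set.InjOn F ↑T := by
    intro x hx y hy hxy
    have hx' : x.1 < 2 ∧ x.2 ≤ k := by simp [hT] at hx; omega
    have hy' : y.1 < 2 ∧ y.2 ≤ k := by simp [hT] at hy; omega
    obtain ⟨δ1, hδ1, hp1⟩ := pick2_form (pp^x.2 * pq^(k - x.2))
    obtain ⟨δ2, hδ2, hp2⟩ := pick2_form (pp^y.2 * pq^(k - y.2))
    rw [hF] at hxy; simp only [] at hxy
    rw [hp1, hp2, hneg_pow x.1, hneg_pow y.1] at hxy
    have hxy' : ii^(2*x.1+δ1) * (pp^x.2 * pq^(k - x.2)) = ii^(2*y.1+δ2) * (pp^y.2 * pq^(k - y.2)) := by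
      rw [pow_add, pow_add, mul_assoc, mul_assoc]; exact hxy
    have h12 := inj5 (k := k) (by omega : 2*x.1+δ1 < 4) (by omega : 2*y.1+δ2 < 4) hx'.2 hy'.2 hxy'
    have hs : x.2 = y.2 := h12.2
    have hδeq : δ1 = δ2 := by
      rw [hs] at hp1
      have hwne : (pp^y.2 * pq^(k - y.2)) ≠ 0 := by
        exact mul_ne_zero (pow_ne_zero _ pp_ne_zero) (pow_ne_zero _ pq_ne_zero)
      have : ii^δ1 = ii^δ2 := mul_right_cancel₀ hwne (hp1.symm.trans hp2)
      interval_cases δ1 <;> interval_cases δ2 <;> revert this <;> decide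
    have : x.1 = y.1 := by omega
    exact Prod.ext this hs
  rw [himg, Set.ncard_image_of_injOn hinj, Set.ncard_coe_finset]
  rw [hT, Finset.card_product, Finset.card_range, Finset.card_range]; omega

lemma norm_ne_zero {τ : ℤi} (hτ : τ ≠ 0) : τ.norm ≠ 0 := by
  intro h
  exact hτ ((Zsqrtd.norm_eq_zero_iff (by norm_num : (-1:ℤ) < 0) τ).mp h)

lemma core_odd (τ : ℤi) (hτ : τ ≠ 0) (k : ℕ) :
    {w : ℤi | τ ∣ w ∧ (((4:ℤ):ℤi)*w - τ).norm = τ.norm * 5^(2*k)}.ncard = 2*k+1 := by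
  classical
  set Q : ℤi → ℤi := fun u => ⟨(u.re+1)/4, u.im/4⟩ with hQ
  set Φ : ℤi → ℤi := fun u => τ * Q u with hΦ
  have hc4Q : ∀ u : ℤi, (u.re : ZMod 4) = 3 → (u.im : ZMod 4) = 0 →
      ((4:ℤ):ℤi) * Q u = u + 1 := by
    intro u h3 h0
    have hre : (4:ℤ) ∣ u.re + 1 := by
      have := (ZMod.intCast_zmod_eq_zero_iff_dvd (u.re+1) 4).mp (by push_cast; rw [h3]; decide)
      exact_mod_cast this
    have him : (4:ℤ) ∣ u.im := by
      have := (ZMod.intCast_zmod_eq_zero_iff_dvd u.im 4).mp (by push_cast; rw [h0])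
      exact_mod_cast this
    apply Zsqrtd.ext
    · simp only [hQ, Zsqrtd.re_mul, Zsqrtd.re_intCast, Zsqrtd.im_intCast, Zsqrtd.re_add,
        Zsqrtd.re_one]
      rw [Int.mul_ediv_cancel' hre]; ring
    · simp only [hQ, Zsqrtd.im_mul, Zsqrtd.re_intCast, Zsqrtd.im_intCast, Zsqrtd.im_add,
        Zsqrtd.im_one]
      rw [Int.mul_ediv_cancel' him]; ring
  have himg : {w : ℤi | τ ∣ w ∧ (((4:ℤ):ℤi)*w - τ).norm = τ.norm * 5^(2*k)} = Φ '' S0 k := by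
    ext w
    constructor
    · rintro ⟨⟨z, rfl⟩, hnorm⟩
      set u : ℤi := ((4:ℤ):ℤi)*z - 1 with hu
      have heq : ((4:ℤ):ℤi)*(τ*z) - τ = τ * u := by rw [hu]; ring
      rw [heq, Zsqrtd.norm_mul] at hnorm
      have hun : u.norm = 5^(2*k) := mul_left_cancel₀ (norm_ne_zero hτ) hnorm
      have hure : u.re = 4*z.re - 1 := by
        rw [hu]; simp [Zsqrtd.re_sub, Zsqrtd.re_mul]
      have huim : u.im = 4*z.im := by
        rw [hu]; simp [Zsqrtd.im_sub, Zsqrtd.im_mul]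
      have h3 : (u.re : ZMod 4) = 3 := by
        rw [hure]; push_cast
        rw [show ((4:ZMod 4)) = 0 by decide]; ring_nf; decide
      have h0 : (u.im : ZMod 4) = 0 := by
        rw [huim]; push_cast
        rw [show ((4:ZMod 4)) = 0 by decide]; ring
      refine ⟨u, ⟨hun, h3, h0⟩, ?_⟩
      rw [hΦ]; simp only []
      have hQu : Q u = z := by
        apply Zsqrtd.ext
        · simp only [hQ]
          rw [hure]
          have : 4*z.re - 1 + 1 = 4 * z.re := by ring
          rw [this, Int.mul_ediv_cancel_left _ (by norm_num : (4:ℤ) ≠ 0)]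
        · simp only [hQ]
          rw [huim, Int.mul_ediv_cancel_left _ (by norm_num : (4:ℤ) ≠ 0)]
      rw [hQu]
    · rintro ⟨u, ⟨hun, h3, h0⟩, rfl⟩
      constructor
      · exact Dvd.intro _ rfl
      · have heq : ((4:ℤ):ℤi)*(τ * Q u) - τ = τ * (((4:ℤ):ℤi) * Q u - 1) := by ring
        rw [heq, hc4Q u h3 h0, Zsqrtd.norm_mul]
        have : u + 1 - 1 = u := by ring
        rw [this, hun]
  have hinj : Set.InjOn Φ (S0 k) := by
    intro u1 hu1 u2 hu2 h
    have hQeq : Q u1 = Q u2 := mul_left_cancel₀ hτ h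
    have h1 := hc4Q u1 hu1.2.1 hu1.2.2
    have h2 := hc4Q u2 hu2.2.1 hu2.2.2
    have : u1 + 1 = u2 + 1 := by rw [← h1, ← h2, hQeq]
    exact add_right_cancel this
  rw [himg, Set.ncard_image_of_injOn hinj, card_S0]

lemma core_even (τ : ℤi) (hτ : τ ≠ 0) (k : ℕ) :
    {w : ℤi | τ ∣ w ∧ (((2:ℤ):ℤi)*w - τ).norm = τ.norm * 5^k}.ncard = 2*k+2 := by
  classical
  set Q : ℤi → ℤi := fun u => ⟨(u.re+1)/2, u.im/2⟩ with hQ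
  set Φ : ℤi → ℤi := fun u => τ * Q u with hΦ
  have hc4Q : ∀ u : ℤi, (u.re : ZMod 2) = 1 → (u.im : ZMod 2) = 0 →
      ((2:ℤ):ℤi) * Q u = u + 1 := by
    intro u h3 h0
    have hre : (2:ℤ) ∣ u.re + 1 := by
      have := (ZMod.intCast_zmod_eq_zero_iff_dvd (u.re+1) 2).mp (by push_cast; rw [h3]; decide)
      exact_mod_cast this
    have him : (2:ℤ) ∣ u.im := by
      have := (ZMod.intCast_zmod_eq_zero_iff_dvd u.im 2).mp (by push_cast; rw [h0])
      exact_mod_cast this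
    apply Zsqrtd.ext
    · simp only [hQ, Zsqrtd.re_mul, Zsqrtd.re_intCast, Zsqrtd.im_intCast, Zsqrtd.re_add,
        Zsqrtd.re_one]
      rw [Int.mul_ediv_cancel' hre]; ring
    · simp only [hQ, Zsqrtd.im_mul, Zsqrtd.re_intCast, Zsqrtd.im_intCast, Zsqrtd.im_add,
        Zsqrtd.im_one]
      rw [Int.mul_ediv_cancel' him]; ring
  have himg : {w : ℤi | τ ∣ w ∧ (((2:ℤ):ℤi)*w - τ).norm = τ.norm * 5^k} = Φ '' S1 k := by
    ext w
    constructor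
    · rintro ⟨⟨z, rfl⟩, hnorm⟩
      set u : ℤi := ((2:ℤ):ℤi)*z - 1 with hu
      have heq : ((2:ℤ):ℤi)*(τ*z) - τ = τ * u := by rw [hu]; ring
      rw [heq, Zsqrtd.norm_mul] at hnorm
      have hun : u.norm = 5^k := mul_left_cancel₀ (norm_ne_zero hτ) hnorm
      have hure : u.re = 2*z.re - 1 := by
        rw [hu]; simp [Zsqrtd.re_sub, Zsqrtd.re_mul]
      have huim : u.im = 2*z.im := by
        rw [hu]; simp [Zsqrtd.im_sub, Zsqrtd.im_mul]
      have h3 : (u.re : ZMod 2) = 1 := by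
        rw [hure]; push_cast
        rw [show ((2:ZMod 2)) = 0 by decide]; ring_nf; decide
      have h0 : (u.im : ZMod 2) = 0 := by
        rw [huim]; push_cast
        rw [show ((2:ZMod 2)) = 0 by decide]; ring
      refine ⟨u, ⟨hun, h3, h0⟩, ?_⟩
      rw [hΦ]; simp only []
      have hQu : Q u = z := by
        apply Zsqrtd.ext
        · simp only [hQ]
          rw [hure]
          have : 2*z.re - 1 + 1 = 2 * z.re := by ring
          rw [this, Int.mul_ediv_cancel_left _ (by norm_num : (2:ℤ) ≠ 0)]
        · simp only [hQ]
          rw [huim, Int.mul_ediv_cancel_left _ (by norm_num : (2:ℤ) ≠ 0)]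
      rw [hQu]
    · rintro ⟨u, ⟨hun, h3, h0⟩, rfl⟩
      constructor
      · exact Dvd.intro _ rfl
      · have heq : ((2:ℤ):ℤi)*(τ * Q u) - τ = τ * (((2:ℤ):ℤi) * Q u - 1) := by ring
        rw [heq, hc4Q u h3 h0, Zsqrtd.norm_mul]
        have : u + 1 - 1 = u := by ring
        rw [this, hun]
  have hinj : Set.InjOn Φ (S1 k) := by
    intro u1 hu1 u2 hu2 h
    have hQeq : Q u1 = Q u2 := mul_left_cancel₀ hτ h
    have h1 := hc4Q u1 hu1.2.1 hu1.2.2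
    have h2 := hc4Q u2 hu2.2.1 hu2.2.2
    have : u1 + 1 = u2 + 1 := by rw [← h1, ← h2, hQeq]
    exact add_right_cancel this
  rw [himg, Set.ncard_image_of_injOn hinj, card_S1]

def Cw (a b c d : ℤ) (w : ℤi) : Prop :=
  (a*d - b*c) ∣ (d*w.re - c*w.im) ∧ (a*d - b*c) ∣ (a*w.im - b*w.re)

lemma lat_iff {a b c d : ℤ} (hq : Prime (a*d - b*c)) (x y : ℤ) :
    (∃ m k : ℤ, x = m*a + k*c ∧ y = m*b + k*d) ↔
      ((a*d - b*c) ∣ (d*x - c*y) ∧ (a*d - b*c) ∣ (a*y - b*x)) := by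
  set q := a*d - b*c with hqdef
  constructor
  · rintro ⟨m, k, rfl, rfl⟩
    constructor
    · exact ⟨m, by ring⟩
    · exact ⟨k, by ring⟩
  · rintro ⟨⟨m', hm'⟩, ⟨k', hk'⟩⟩
    refine ⟨m', k', ?_, ?_⟩
    · have h2 : q * (m'*a + k'*c) = q * x := by
        linear_combination (-a)*hm' + (-c)*hk' + (-x)*hqdef
      exact (mul_left_cancel₀ hq.ne_zero h2).symm
    · have h2 : q * (m'*b + k'*d) = q * y := by
        linear_combination (-b)*hm' + (-d)*hk' + (-y)*hqdef
      exact (mul_left_cancel₀ hq.ne_zero h2).symm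

lemma force {q α β u v : ℤ} (hq : Prime q) (hab : ¬ q ∣ (α^2+β^2))
    (h1 : q ∣ α*v - β*u) (hN : q ∣ u^2+v^2) : q ∣ u ∧ q ∣ v := by
  constructor
  · have hu : q ∣ u^2 * (α^2+β^2) := by
      have he : u^2*(α^2+β^2) = α^2*(u^2+v^2) - (α*v - β*u)*(α*v + β*u) := by ring
      rw [he]; exact dvd_sub (Dvd.dvd.mul_left hN _) (Dvd.dvd.mul_right h1 _)
    rcases hq.2.2 _ _ hu with h | h
    · exact hq.dvd_of_dvd_pow h
    · exact absurd h hab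
  · have hv : q ∣ v^2 * (α^2+β^2) := by
      have he : v^2*(α^2+β^2) = β^2*(u^2+v^2) + (α*v - β*u)*(α*v + β*u) := by ring
      rw [he]; exact dvd_add (Dvd.dvd.mul_left hN _) (Dvd.dvd.mul_right h1 _)
    rcases hq.2.2 _ _ hv with h | h
    · exact hq.dvd_of_dvd_pow h
    · exact absurd h hab

lemma norm_comp (w : ℤi) : w.norm = w.re^2 + w.im^2 := by
  rw [Zsqrtd.norm_def]; ring

lemma intCast_mul_comps (M : ℤ) (w : ℤi) :
    (((M:ℤi))*w - (⟨0,0⟩:ℤi)).re = M * w.re := by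
  simp [Zsqrtd.re_sub, Zsqrtd.re_mul]

lemma key {a b c d : ℤ} (hq : Prime (a*d - b*c)) :
    ∃ τ : ℤi, τ ≠ 0 ∧
      (∀ w : ℤi, τ ∣ w → Cw a b c d w) ∧
      (∀ (M : ℤ) (w : ℤi), ¬((a*d - b*c) ∣ M) → Cw a b c d w →
        (a*d - b*c) ∣ (((M:ℤi))*w - τ).norm → τ ∣ w) ∧
      (a*d - b*c) ∣ τ.norm := by
  classical
  set q := a*d - b*c with hqdef
  by_cases hgen : ¬ (q ∣ (a^2+b^2)) ∨ ¬ (q ∣ (c^2+d^2))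
  · -- generic case : τ = q
    refine ⟨((q:ℤi)), ?_, ?_, ?_, ?_⟩
    · simp only [ne_eq, Int.cast_injective.eq_iff]
      intro h
      rw [show (0:ℤi) = ((0:ℤ):ℤi) by norm_num] at h
      exact hq.ne_zero (Int.cast_injective h)
    · rintro w ⟨z, rfl⟩
      constructor
      · refine ⟨d*z.re - c*z.im, ?_⟩
        simp only [Zsqrtd.re_mul, Zsqrtd.im_mul, Zsqrtd.re_intCast, Zsqrtd.im_intCast]
        ring
      · refine ⟨a*z.im - b*z.re, ?_⟩
        simp only [Zsqrtd.re_mul, Zsqrtd.im_mul, Zsqrtd.re_intCast, Zsqrtd.im_intCast]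
        ring
    · intro M w hM hC hnorm
      have hre : (((M:ℤi))*w - (q:ℤi)).re = M*w.re - q := by
        simp [Zsqrtd.re_sub, Zsqrtd.re_mul]
      have him : (((M:ℤi))*w - (q:ℤi)).im = M*w.im := by
        simp [Zsqrtd.im_sub, Zsqrtd.im_mul]
      rw [norm_comp, hre, him] at hnorm
      have hforce : q ∣ (M*w.re - q) ∧ q ∣ (M*w.im) := by
        rcases hgen with hg | hg
        · refine force hq hg ?_ hnorm
          -- a*(M w.im) - b*(M w.re - q) = M*(a w.im - b w.re) + b*q
          have : a*(M*w.im) - b*(M*w.re - q) = M*(a*w.im - b*w.re) + b*q := by ring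
          rw [this]
          exact dvd_add (Dvd.dvd.mul_left hC.2 M) (Dvd.dvd.mul_left dvd_rfl b)
        · refine force hq hg ?_ hnorm
          have : c*(M*w.im) - d*(M*w.re - q) = -(M*(d*w.re - c*w.im)) + d*q := by ring
          rw [this]
          exact dvd_add ((Dvd.dvd.mul_left hC.1 M).neg_right) (Dvd.dvd.mul_left dvd_rfl d)
      have hwre : q ∣ w.re := by
        have h1 : q ∣ M * w.re := by
          have := hforce.1
          have h2 : M*w.re = (M*w.re - q) + q := by ring
          rw [h2]; exact dvd_add this dvd_rfl
        rcases hq.2.2 _ _ h1 with h | h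
        · exact absurd h hM
        · exact h
      have hwim : q ∣ w.im := by
        rcases hq.2.2 _ _ hforce.2 with h | h
        · exact absurd h hM
        · exact h
      exact (Zsqrtd.intCast_dvd q w).mpr ⟨hwre, hwim⟩
    · rw [Zsqrtd.norm_intCast]
      exact Dvd.dvd.mul_right dvd_rfl q
  · -- ideal case
    push_neg at hgen
    obtain ⟨hab2, hcd2⟩ := hgen
    have hacbd : q ∣ (a*c + b*d) := by
      have hsq : q ∣ (a*c+b*d)^2 := by
        have he : (a*c+b*d)^2 = (a^2+b^2)*(c^2+d^2) - q*q := by rw [hqdef]; ring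
        rw [he]
        exact dvd_sub (Dvd.dvd.mul_right hab2 _) (Dvd.dvd.mul_right dvd_rfl q)
      exact hq.dvd_of_dvd_pow hsq
    set g : ℤi := ⟨a, b⟩ with hg
    set h : ℤi := ⟨c, d⟩ with hh
    set τ : ℤi := EuclideanDomain.gcd g h with hτ
    have hCg : ∀ z : ℤi, Cw a b c d (g * z) := by
      intro z
      constructor
      · have he : d*(g*z).re - c*(g*z).im = q*z.re - (a*c+b*d)*z.im := by
          simp only [hg, Zsqrtd.re_mul, Zsqrtd.im_mul, hqdef]; ring
        rw [he]
        exact dvd_sub (Dvd.dvd.mul_right dvd_rfl _) (Dvd.dvd.mul_right hacbd _)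
      · have he : a*(g*z).im - b*(g*z).re = (a^2+b^2)*z.im := by
          simp only [hg, Zsqrtd.re_mul, Zsqrtd.im_mul]; ring
        rw [he]
        exact Dvd.dvd.mul_right hab2 _
    have hCh : ∀ z : ℤi, Cw a b c d (h * z) := by
      intro z
      constructor
      · have he : d*(h*z).re - c*(h*z).im = -((c^2+d^2)*z.im) := by
          simp only [hh, Zsqrtd.re_mul, Zsqrtd.im_mul]; ring
        rw [he]
        exact (Dvd.dvd.mul_right hcd2 _).neg_right
      · have he : a*(h*z).im - b*(h*z).re = (a*c+b*d)*z.im + q*z.re := by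
          simp only [hh, Zsqrtd.re_mul, Zsqrtd.im_mul, hqdef]; ring
        rw [he]
        exact dvd_add (Dvd.dvd.mul_right hacbd _) (Dvd.dvd.mul_right dvd_rfl _)
    have hCadd : ∀ w1 w2 : ℤi, Cw a b c d w1 → Cw a b c d w2 → Cw a b c d (w1 + w2) := by
      intro w1 w2 h1 h2
      constructor
      · have : d*(w1+w2).re - c*(w1+w2).im = (d*w1.re - c*w1.im) + (d*w2.re - c*w2.im) := by
          simp only [Zsqrtd.re_add, Zsqrtd.im_add]; ring
        rw [this]; exact dvd_add h1.1 h2.1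
      · have : a*(w1+w2).im - b*(w1+w2).re = (a*w1.im - b*w1.re) + (a*w2.im - b*w2.re) := by
          simp only [Zsqrtd.re_add, Zsqrtd.im_add]; ring
        rw [this]; exact dvd_add h1.2 h2.2
    have hdvd_mem : ∀ w : ℤi, τ ∣ w → Cw a b c d w := by
      rintro w ⟨z, rfl⟩
      have hbez : τ = g * EuclideanDomain.gcdA g h + h * EuclideanDomain.gcdB g h :=
        EuclideanDomain.gcd_eq_gcd_ab g h
      have : τ * z = g * (EuclideanDomain.gcdA g h * z) + h * (EuclideanDomain.gcdB g h * z) := by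
        rw [hbez]; ring
      rw [this]
      exact hCadd _ _ (hCg _) (hCh _)
    have hmem_dvd : ∀ w : ℤi, Cw a b c d w → τ ∣ w := by
      intro w hC
      obtain ⟨m, k, hx, hy⟩ := (lat_iff hq w.re w.im).mpr hC
      have hwmk : w = (m:ℤi) * g + (k:ℤi) * h := by
        apply Zsqrtd.ext
        · simp only [hg, hh, Zsqrtd.re_add, Zsqrtd.re_mul, Zsqrtd.re_intCast, Zsqrtd.im_intCast]
          rw [hx]; ring
        · simp only [hg, hh, Zsqrtd.im_add, Zsqrtd.im_mul, Zsqrtd.re_intCast, Zsqrtd.im_intCast]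
          rw [hy]; ring
      rw [hwmk]
      exact dvd_add ((EuclideanDomain.gcd_dvd_left g h).mul_left _)
        ((EuclideanDomain.gcd_dvd_right g h).mul_left _)
    have hτne : τ ≠ 0 := by
      intro h0
      rw [hτ] at h0
      obtain ⟨hg0, hh0⟩ := EuclideanDomain.gcd_eq_zero_iff.mp h0
      rw [hg, Zsqrtd.ext_iff] at hg0
      rw [hh, Zsqrtd.ext_iff] at hh0
      simp only [Zsqrtd.re_zero, Zsqrtd.im_zero] at hg0 hh0
      apply hq.ne_zero
      rw [hqdef, hg0.1, hg0.2]; ring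
    refine ⟨τ, hτne, hdvd_mem, fun M w _ hC _ => hmem_dvd w hC, ?_⟩
    -- q ∣ τ.norm
    by_contra hqn
    have hτq : τ ∣ ((q:ℤi)) := by
      apply hmem_dvd
      constructor
      · refine ⟨d, ?_⟩; simp [Zsqrtd.re_intCast, Zsqrtd.im_intCast]; ring
      · refine ⟨-b, ?_⟩; simp [Zsqrtd.re_intCast, Zsqrtd.im_intCast]; ring
    have hnd : τ.norm ∣ q*q := by
      obtain ⟨z, hz⟩ := hτq
      have := congrArg Zsqrtd.norm hz
      rw [Zsqrtd.norm_intCast, Zsqrtd.norm_mul] at this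
      exact ⟨z.norm, this⟩
    have hp : q.natAbs.Prime := Int.prime_iff_natAbs_prime.mp hq
    have hnat : τ.norm.natAbs ∣ q.natAbs * q.natAbs := by
      have := Int.natAbs_dvd_natAbs.mpr hnd
      rwa [Int.natAbs_mul] at this
    have hnat2 : τ.norm.natAbs ∣ q.natAbs ^ 2 := by rwa [pow_two]
    obtain ⟨i, hi, hni⟩ := (Nat.dvd_prime_pow hp).mp hnat2
    have hqnn : ¬ (q.natAbs ∣ τ.norm.natAbs) := by
      intro hcon
      apply hqn
      have h1 : (q.natAbs : ℤ) ∣ (τ.norm.natAbs : ℤ) := Int.natCast_dvd_natCast.mpr hcon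
      have h2 : q ∣ (τ.norm.natAbs : ℤ) := (Int.natAbs_dvd).mp h1
      exact h2.trans (Int.natAbs_dvd_self)
    have hi0 : i = 0 := by
      by_contra hine
      apply hqnn
      rw [hni]
      exact dvd_pow_self _ hine
    rw [hi0, pow_zero] at hni
    have hunit : IsUnit τ := Zsqrtd.norm_eq_one_iff.mp hni
    -- then 1 and ii are in the lattice: q divides a b c d
    have h1C : Cw a b c d 1 := hdvd_mem 1 (hunit.dvd)
    have hiC : Cw a b c d ⟨0,1⟩ := hdvd_mem _ (hunit.dvd)
    have hd1 : q ∣ d := by have := h1C.1; simpa using this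
    have hb1 : q ∣ b := by have := h1C.2; simpa using this
    have hc1 : q ∣ c := by have := hiC.1; simpa using this
    have ha1 : q ∣ a := by have := hiC.2; simpa using this
    have hq2 : q*q ∣ q := by
      rw [hqdef]
      exact dvd_sub (mul_dvd_mul ha1 hd1) (mul_dvd_mul hb1 hc1)
    have := Int.natAbs_dvd_natAbs.mpr hq2
    rw [Int.natAbs_mul] at this
    have hle := Nat.le_of_dvd (by have := hp.two_le; omega) this
    have h2le := hp.two_le
    nlinarith

lemma Msub_re (M : ℤ) (w τ : ℤi) : (((M:ℤi))*w - τ).re = M*w.re - τ.re := by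
  simp [Zsqrtd.re_sub, Zsqrtd.re_mul]
lemma Msub_im (M : ℤ) (w τ : ℤi) : (((M:ℤi))*w - τ).im = M*w.im - τ.im := by
  simp [Zsqrtd.im_sub, Zsqrtd.im_mul]
lemma Mnorm (M : ℤ) (w τ : ℤi) :
    (((M:ℤi))*w - τ).norm = (M*w.re - τ.re)^2 + (M*w.im - τ.im)^2 := by
  rw [norm_comp, Msub_re, Msub_im]


end UC


open UC in
/-- If `q := ad - bc` is a prime with `q ≡ 3 (mod 4)`, then the lattice
`Λ[(a,b),(c,d)] = {m(a,b) + k(c,d) : m, k ∈ ℤ} ⊂ ℝ²` is universally concyclic: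
for every `n > 0` some circle passes through exactly `n` of its points. -/
theorem stmt_4 (a b c d : ℤ) (hq : Prime (a * d - b * c))
    (hq3 : (a * d - b * c) % 4 = 3) (n : ℕ) (hn : 0 < n) :
    ∃ (c₁ c₂ r : ℝ), 0 < r ∧
      Set.ncard {v : ℝ × ℝ |
        (∃ m k : ℤ, v = (((m * a + k * c : ℤ) : ℝ), ((m * b + k * d : ℤ) : ℝ))) ∧
        (v.1 - c₁) ^ 2 + (v.2 - c₂) ^ 2 = r ^ 2} = n := by
  classical
  have hq2 : ¬ ((a*d - b*c) ∣ (2:ℤ)) := by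
    intro h
    have h1 : (a*d - b*c).natAbs ∣ 2 := by
      have := Int.natAbs_dvd_natAbs.mpr h
      simpa using this
    have hp : (a*d - b*c).natAbs.Prime := Int.prime_iff_natAbs_prime.mp hq
    have hle := Nat.le_of_dvd (by norm_num) h1
    have h2 := hp.two_le
    have heq : (a*d - b*c).natAbs = 2 := by omega
    rcases Int.natAbs_eq (a*d - b*c) with h3 | h3 <;> rw [heq] at h3 <;> omega
  have hq4 : ¬ ((a*d - b*c) ∣ (4:ℤ)) := by
    intro h
    rcases hq.2.2 2 2 (by norm_num at h ⊢; exact h) with h' | h' <;> exact hq2 h'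
  obtain ⟨τ, hτne, hK1, hK2, hK3⟩ := key hq
  have hnormpos : 0 < τ.norm :=
    lt_of_le_of_ne (Zsqrtd.norm_nonneg (by norm_num) τ) (Ne.symm (norm_ne_zero hτne))
  have hΨinj : ∀ (S : Set ℤi), Set.InjOn (fun w : ℤi => ((w.re:ℝ), (w.im:ℝ))) S := by
    intro S w1 _ w2 _ h
    have h1 : (w1.re:ℝ) = w2.re := congrArg Prod.fst h
    have h2 : (w1.im:ℝ) = w2.im := congrArg Prod.snd h
    apply Zsqrtd.ext
    · exact_mod_cast h1
    · exact_mod_cast h2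
  rcases Nat.even_or_odd n with he | ho
  · -- even case, M = 2
    obtain ⟨m0, hm0⟩ := he
    obtain ⟨kk, hkk⟩ : ∃ kk, n = 2*kk+2 := ⟨m0 - 1, by omega⟩
    set X : ℤ := τ.norm * 5^kk with hX
    have hXpos : (0:ℤ) < X := mul_pos hnormpos (pow_pos (by norm_num) _)
    have hXR : (0:ℝ) < (X:ℝ) := by exact_mod_cast hXpos
    refine ⟨(τ.re:ℝ)/2, (τ.im:ℝ)/2, Real.sqrt (X:ℝ) / 2, by positivity, ?_⟩
    have hr2 : (Real.sqrt (X:ℝ) / 2)^2 = (X:ℝ)/4 := by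
      rw [div_pow, Real.sq_sqrt hXR.le]; norm_num
    have himg : {v : ℝ × ℝ |
        (∃ m k : ℤ, v = (((m * a + k * c : ℤ) : ℝ), ((m * b + k * d : ℤ) : ℝ))) ∧
        (v.1 - (τ.re:ℝ)/2) ^ 2 + (v.2 - (τ.im:ℝ)/2) ^ 2 = (Real.sqrt (X:ℝ) / 2) ^ 2}
        = (fun w : ℤi => ((w.re:ℝ), (w.im:ℝ))) ''
          {w : ℤi | τ ∣ w ∧ (((2:ℤ):ℤi)*w - τ).norm = τ.norm * 5^kk} := by
      ext v
      constructor
      · rintro ⟨⟨m, k, rfl⟩, hcirc⟩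
        set w : ℤi := ⟨m*a + k*c, m*b + k*d⟩ with hw
        have hC : Cw a b c d w := by
          rw [Cw, ← lat_iff hq]
          exact ⟨m, k, rfl, rfl⟩
        simp only [hr2] at hcirc
        have hRe : ((2*w.re - τ.re)^2 + (2*w.im - τ.im)^2 : ℝ) = (X:ℝ) := by
          push_cast
          push_cast at hcirc
          simp only [hw] at *
          push_cast
          linear_combination 4 * hcirc
        have hZe : (2*w.re - τ.re)^2 + (2*w.im - τ.im)^2 = X := by exact_mod_cast hRe
        have hnorm : (((2:ℤ):ℤi)*w - τ).norm = τ.norm * 5^kk := by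
          rw [Mnorm, hZe, hX]
        have hdvd : τ ∣ w := by
          apply hK2 2 w hq2 hC
          rw [hnorm]
          exact Dvd.dvd.mul_right hK3 _
        exact ⟨w, ⟨hdvd, hnorm⟩, rfl⟩
      · rintro ⟨w, ⟨hdvd, hnorm⟩, rfl⟩
        constructor
        · have hC := hK1 w hdvd
          obtain ⟨m, k, hx, hy⟩ := (lat_iff hq w.re w.im).mpr hC
          exact ⟨m, k, by rw [← hx, ← hy]⟩
        · have hZe : (2*w.re - τ.re)^2 + (2*w.im - τ.im)^2 = X := by
            rw [← hX] at hnorm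
            rw [← hnorm, Mnorm]
          have hRe : ((2*w.re - τ.re)^2 + (2*w.im - τ.im)^2 : ℝ) = (X:ℝ) := by
            exact_mod_cast hZe
          simp only [hr2]
          push_cast at hRe ⊢
          linear_combination (1/4 : ℝ) * hRe
    rw [himg, Set.ncard_image_of_injOn (hΨinj _), core_even τ hτne kk]
    omega
  · -- odd case, M = 4
    obtain ⟨kk, hkk⟩ := ho
    set X : ℤ := τ.norm * 5^(2*kk) with hX
    have hXpos : (0:ℤ) < X := mul_pos hnormpos (pow_pos (by norm_num) _)
    have hXR : (0:ℝ) < (X:ℝ) := by exact_mod_cast hXpos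
    refine ⟨(τ.re:ℝ)/4, (τ.im:ℝ)/4, Real.sqrt (X:ℝ) / 4, by positivity, ?_⟩
    have hr2 : (Real.sqrt (X:ℝ) / 4)^2 = (X:ℝ)/16 := by
      rw [div_pow, Real.sq_sqrt hXR.le]; norm_num
    have himg : {v : ℝ × ℝ |
        (∃ m k : ℤ, v = (((m * a + k * c : ℤ) : ℝ), ((m * b + k * d : ℤ) : ℝ))) ∧
        (v.1 - (τ.re:ℝ)/4) ^ 2 + (v.2 - (τ.im:ℝ)/4) ^ 2 = (Real.sqrt (X:ℝ) / 4) ^ 2}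
        = (fun w : ℤi => ((w.re:ℝ), (w.im:ℝ))) ''
          {w : ℤi | τ ∣ w ∧ (((4:ℤ):ℤi)*w - τ).norm = τ.norm * 5^(2*kk)} := by
      ext v
      constructor
      · rintro ⟨⟨m, k, rfl⟩, hcirc⟩
        set w : ℤi := ⟨m*a + k*c, m*b + k*d⟩ with hw
        have hC : Cw a b c d w := by
          rw [Cw, ← lat_iff hq]
          exact ⟨m, k, rfl, rfl⟩
        simp only [hr2] at hcirc
        have hRe : ((4*w.re - τ.re)^2 + (4*w.im - τ.im)^2 : ℝ) = (X:ℝ) := by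
          push_cast
          push_cast at hcirc
          simp only [hw] at *
          push_cast
          linear_combination 16 * hcirc
        have hZe : (4*w.re - τ.re)^2 + (4*w.im - τ.im)^2 = X := by exact_mod_cast hRe
        have hnorm : (((4:ℤ):ℤi)*w - τ).norm = τ.norm * 5^(2*kk) := by
          rw [Mnorm, hZe, hX]
        have hdvd : τ ∣ w := by
          apply hK2 4 w hq4 hC
          rw [hnorm]
          exact Dvd.dvd.mul_right hK3 _
        exact ⟨w, ⟨hdvd, hnorm⟩, rfl⟩
      · rintro ⟨w, ⟨hdvd, hnorm⟩, rfl⟩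
        constructor
        · have hC := hK1 w hdvd
          obtain ⟨m, k, hx, hy⟩ := (lat_iff hq w.re w.im).mpr hC
          exact ⟨m, k, by rw [← hx, ← hy]⟩
        · have hZe : (4*w.re - τ.re)^2 + (4*w.im - τ.im)^2 = X := by
            rw [← hX] at hnorm
            rw [← hnorm, Mnorm]
          have hRe : ((4*w.re - τ.re)^2 + (4*w.im - τ.im)^2 : ℝ) = (X:ℝ) := by
            exact_mod_cast hZe
          simp only [hr2]
          push_cast at hRe ⊢
          linear_combination (1/16 : ℝ) * hRe
    rw [himg, Set.ncard_image_of_injOn (hΨinj _), core_odd τ hτne kk]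
    omega
end

section
/- If τ is a transcendental real number, then the lattice Λ generated by (1, τ) and (0, 1) in ℝ² contains no four concyclic points; in particular Λ is not universally concyclic. -/
set_option maxHeartbeats 2000000

/-- transcendence: rational quadratic relation forces zero coefficients -/
lemma L0' (τ : ℝ) (hτ : Transcendental ℚ τ) (a b c : ℚ)
    (h : (a:ℝ)*τ^2 + (b:ℝ)*τ + (c:ℝ) = 0) : a = 0 ∧ b = 0 ∧ c = 0 := by
  by_contra hcon
  apply hτ
  refine ⟨Polynomial.C a * Polynomial.X^2 + Polynomial.C b * Polynomial.X
      + Polynomial.C c, ?_, ?_⟩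
  · intro h0
    apply hcon
    have h2 := congrArg (fun p => Polynomial.coeff p 2) h0
    have h1 := congrArg (fun p => Polynomial.coeff p 1) h0
    have hc := congrArg (fun p => Polynomial.coeff p 0) h0
    simp [Polynomial.coeff_add, Polynomial.coeff_C_mul, Polynomial.coeff_X_pow,
      Polynomial.coeff_X, Polynomial.coeff_C] at h2 h1 hc
    exact ⟨h2, h1, hc⟩
  · simp only [map_add, map_mul, map_pow, Polynomial.aeval_C, Polynomial.aeval_X]
    rw [show ((algebraMap ℚ ℝ) a) = (a:ℝ) by norm_num, show ((algebraMap ℚ ℝ) b) = (b:ℝ) by norm_num,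
      show ((algebraMap ℚ ℝ) c) = (c:ℝ) by norm_num]
    linear_combination h

/-- a quadratic with nonzero leading coefficient has at most two roots -/
lemma LQ' (a b c x y z : ℝ) (ha : a ≠ 0) (hxy : x ≠ y) (hxz : x ≠ z) (hyz : y ≠ z)
    (h1 : a*x^2 + b*x + c = 0) (h2 : a*y^2 + b*y + c = 0) (h3 : a*z^2 + b*z + c = 0) :
    False := by
  have e1 : (x - y) * (a*(x+y) + b) = 0 := by linear_combination h1 - h2
  have e2 : (x - z) * (a*(x+z) + b) = 0 := by linear_combination h1 - h3
  have f1 : a*(x+y) + b = 0 := (mul_eq_zero.1 e1).resolve_left (sub_ne_zero.mpr hxy)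
  have f2 : a*(x+z) + b = 0 := (mul_eq_zero.1 e2).resolve_left (sub_ne_zero.mpr hxz)
  have : a*(y - z) = 0 := by linear_combination f1 - f2
  rcases mul_eq_zero.1 this with h | h
  · exact ha h
  · exact hyz (sub_eq_zero.1 h)


lemma lagrange (u2 u3 u4 v2 v3 v4 w2 w3 w4 : ℝ)
    (h : ((u3*v4 - u4*v3)*w2 + (u4*v2 - u2*v4)*w3 + (u2*v3 - u3*v2)*w4) = 0) :
    ((u3*v4 - u4*v3)*(u3*v4 - u4*v3) + (u4*v2 - u2*v4)*(u4*v2 - u2*v4) + (u2*v3 - u3*v2)*(u2*v3 - u3*v2))*w2 = ((w3*v4 - w4*v3)*(u3*v4 - u4*v3) + (w4*v2 - w2*v4)*(u4*v2 - u2*v4) + (w2*v3 - w3*v2)*(u2*v3 - u3*v2))*u2 + ((u3*w4 - u4*w3)*(u3*v4 - u4*v3) + (u4*w2 - u2*w4)*(u4*v2 - u2*v4) + (u2*w3 - u3*w2)*(u2*v3 - u3*v2))*v2 ∧ ((u3*v4 - u4*v3)*(u3*v4 - u4*v3) + (u4*v2 - u2*v4)*(u4*v2 - u2*v4) + (u2*v3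 - u3*v2)*(u2*v3 - u3*v2))*w3 = ((w3*v4 - w4*v3)*(u3*v4 - u4*v3) + (w4*v2 - w2*v4)*(u4*v2 - u2*v4) + (w2*v3 - w3*v2)*(u2*v3 - u3*v2))*u3 + ((u3*w4 - u4*w3)*(u3*v4 - u4*v3) + (u4*w2 - u2*w4)*(u4*v2 - u2*v4) + (u2*w3 - u3*w2)*(u2*v3 - u3*v2))*v3 ∧ ((u3*v4 - u4*v3)*(u3*v4 - u4*v3) + (u4*v2 - u2*v4)*(u4*v2 - u2*v4) + (u2*v3 - u3*v2)*(u2*v3 - u3*v2))*w4 = ((w3*v4 - w4*v3)*(u3*v4 - u4*v3) + (w4*v2 - w2*v4)*(u4*v2 - u2*v4) + (w2*v3 - w3*v2)*(u2*v3 - u3*v2))*u4 + ((u3*w4 - u4*w3)*(u3*v4 - u4*v3) + (u4*w2 - u2*w4)*(u4*v2 - u2*v4) + (u2*w3 - u3*w2)*(u2*v3 - u3*v2))*v4 := by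
  refine ⟨?_, ?_, ?_⟩
  · linear_combination ((u3*v4 - u4*v3))*h
  · linear_combination ((u4*v2 - u2*v4))*h
  · linear_combination ((u2*v3 - u3*v2))*h

lemma planar (u2 u3 u4 v2 v3 v4 w2 w3 w4 n2 n3 n4 : ℝ)
    (hn2 : n2 = u3*v4 - u4*v3) (hn3 : n3 = u4*v2 - u2*v4) (hn4 : n4 = u2*v3 - u3*v2)
    (hn : ¬(n2 = 0 ∧ n3 = 0 ∧ n4 = 0))
    (h : n2*w2 + n3*w3 + n4*w4 = 0) :
    ∃ α β : ℝ, w2 = α*u2 + β*v2 ∧ w3 = α*u3 + β*v3 ∧ w4 = α*u4 + β*v4 := by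
  subst hn2 hn3 hn4
  obtain ⟨e2, e3, e4⟩ := lagrange u2 u3 u4 v2 v3 v4 w2 w3 w4 (by linear_combination h)
  have hd : 0 < ((u3*v4 - u4*v3)*(u3*v4 - u4*v3) + (u4*v2 - u2*v4)*(u4*v2 - u2*v4) + (u2*v3 - u3*v2)*(u2*v3 - u3*v2)) := by
    have h' : ¬((u3*v4 - u4*v3) = 0) ∨ ¬((u4*v2 - u2*v4) = 0) ∨ ¬((u2*v3 - u3*v2) = 0) := by tauto
    rcases h' with h' | h' | h' <;>
      nlinarith [mul_self_pos.mpr h', mul_self_nonneg (u3*v4 - u4*v3), mul_self_nonneg (u4*v2 - u2*v4), mul_self_nonneg (u2*v3 - u3*v2)]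
  refine ⟨((w3*v4 - w4*v3)*(u3*v4 - u4*v3) + (w4*v2 - w2*v4)*(u4*v2 - u2*v4) + (w2*v3 - w3*v2)*(u2*v3 - u3*v2))/((u3*v4 - u4*v3)*(u3*v4 - u4*v3) + (u4*v2 - u2*v4)*(u4*v2 - u2*v4) + (u2*v3 - u3*v2)*(u2*v3 - u3*v2)), ((u3*w4 - u4*w3)*(u3*v4 - u4*v3) + (u4*w2 - u2*w4)*(u4*v2 - u2*v4) + (u2*w3 - u3*w2)*(u2*v3 - u3*v2))/((u3*v4 - u4*v3)*(u3*v4 - u4*v3) + (u4*v2 - u2*v4)*(u4*v2 - u2*v4) + (u2*v3 - u3*v2)*(u2*v3 - u3*v2)), ?_, ?_, ?_⟩ <;>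
    rw [div_mul_eq_mul_div, div_mul_eq_mul_div, ← add_div, eq_div_iff (ne_of_gt hd)]
  · linear_combination e2
  · linear_combination e3
  · linear_combination e4


lemma stepA (τ c₁ c₂ r a1 a2 a3 a4 b1 b2 b3 b4 : ℝ)
    (h1 : (a1 - c₁)^2 + (a1*τ + b1 - c₂)^2 = r^2)
    (h2 : (a2 - c₁)^2 + (a2*τ + b2 - c₂)^2 = r^2)
    (h3 : (a3 - c₁)^2 + (a3*τ + b3 - c₂)^2 = r^2)
    (h4 : (a4 - c₁)^2 + (a4*τ + b4 - c₂)^2 = r^2) :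
    (((a3 - a1)*(b4 - b1) - (a4 - a1)*(b3 - b1))*(a2^2 - a1^2) + ((a4 - a1)*(b2 - b1) - (a2 - a1)*(b4 - b1))*(a3^2 - a1^2) + ((a2 - a1)*(b3 - b1) - (a3 - a1)*(b2 - b1))*(a4^2 - a1^2))*τ^2 + 2*(((a3 - a1)*(b4 - b1) - (a4 - a1)*(b3 - b1))*(a2*b2 - a1*b1) + ((a4 - a1)*(b2 - b1) - (a2 - a1)*(b4 - b1))*(a3*b3 - a1*b1) + ((a2 - a1)*(b3 - b1) - (a3 - a1)*(b2 - b1))*(a4*b4 - a1*b1))*τ + ((((a3 - a1)*(b4 - b1) - (a4 - a1)*(b3 - b1))*(a2^2 - a1^2) + ((a4 - a1)*(b2 - b1) - (a2 - a1)*(b4 - b1))*(a3^2 - a1^2) + ((a2 - a1)*(b3 - b1) - (a3 - a1)*(b2 - b1))*(a4^2 - a1^2)) + (((a3 - a1)*(b4 - b1) - (a4 - a1)*(b3 - b1))*(b2^2 - b1^2) + ((a4 - a1)*(b2 - b1) - (a2 - a1)*(b4 - b1))*(b3^2 - b1^2) + ((a2 - a1)*(b3 - b1) - (a3 - a1)*(b2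 - b1))*(b4^2 - b1^2))) = 0 := by
  linear_combination ((a3 - a1)*(b4 - b1) - (a4 - a1)*(b3 - b1))*(h2 - h1) + ((a4 - a1)*(b2 - b1) - (a2 - a1)*(b4 - b1))*(h3 - h1) + ((a2 - a1)*(b3 - b1) - (a3 - a1)*(b2 - b1))*(h4 - h1)

lemma lemB (τ c₁ c₂ r : ℝ) (hτ : Transcendental ℚ τ) (m1 m2 m3 m4 k1 k2 k3 k4 : ℤ)
    (h1 : ((m1:ℝ) - c₁)^2 + ((m1:ℝ)*τ + (k1:ℝ) - c₂)^2 = r^2)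
    (h2 : ((m2:ℝ) - c₁)^2 + ((m2:ℝ)*τ + (k2:ℝ) - c₂)^2 = r^2)
    (h3 : ((m3:ℝ) - c₁)^2 + ((m3:ℝ)*τ + (k3:ℝ) - c₂)^2 = r^2)
    (h4 : ((m4:ℝ) - c₁)^2 + ((m4:ℝ)*τ + (k4:ℝ) - c₂)^2 = r^2)
    (h12 : m1 ≠ m2) (h13 : m1 ≠ m3) (h23 : m2 ≠ m3)
    (hcase : (m4 = m1 ∧ k4 ≠ k1) ∨ (m4 ≠ m1 ∧ m4 ≠ m2 ∧ m4 ≠ m3)) : False := by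
  have hA := stepA τ c₁ c₂ r (m1:ℝ) (m2:ℝ) (m3:ℝ) (m4:ℝ) (k1:ℝ) (k2:ℝ) (k3:ℝ) (k4:ℝ) h1 h2 h3 h4
  obtain ⟨hP, hQ, hS⟩ := L0' τ hτ ((((m3:ℚ) - (m1:ℚ))*((k4:ℚ) - (k1:ℚ)) - ((m4:ℚ) - (m1:ℚ))*((k3:ℚ) - (k1:ℚ)))*((m2:ℚ)^2 - (m1:ℚ)^2) + (((m4:ℚ) - (m1:ℚ))*((k2:ℚ) - (k1:ℚ)) - ((m2:ℚ) - (m1:ℚ))*((k4:ℚ) - (k1:ℚ)))*((m3:ℚ)^2 - (m1:ℚ)^2) + (((m2:ℚ) - (m1:ℚ))*((k3:ℚ) - (k1:ℚ)) - ((m3:ℚ) - (m1:ℚ))*((k2:ℚ) - (k1:ℚ)))*((m4:ℚ)^2 - (m1:ℚ)^2)) (2*((((m3:ℚ) - (m1:ℚ))*((k4:ℚ) - (k1:ℚ)) - ((m4:ℚ) - (m1:ℚ))*((k3:ℚ) - (k1:ℚ)))*((m2:ℚ)*(k2:ℚ) - (m1:ℚ)*(k1:ℚ)) + (((m4:ℚ)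 - (m1:ℚ))*((k2:ℚ) - (k1:ℚ)) - ((m2:ℚ) - (m1:ℚ))*((k4:ℚ) - (k1:ℚ)))*((m3:ℚ)*(k3:ℚ) - (m1:ℚ)*(k1:ℚ)) + (((m2:ℚ) - (m1:ℚ))*((k3:ℚ) - (k1:ℚ)) - ((m3:ℚ) - (m1:ℚ))*((k2:ℚ) - (k1:ℚ)))*((m4:ℚ)*(k4:ℚ) - (m1:ℚ)*(k1:ℚ)))) (((((m3:ℚ) - (m1:ℚ))*((k4:ℚ) - (k1:ℚ)) - ((m4:ℚ) - (m1:ℚ))*((k3:ℚ) - (k1:ℚ)))*((m2:ℚ)^2 - (m1:ℚ)^2) + (((m4:ℚ) - (m1:ℚ))*((k2:ℚ) - (k1:ℚ)) - ((m2:ℚ) - (m1:ℚ))*((k4:ℚ) - (k1:ℚ)))*((m3:ℚ)^2 - (m1:ℚ)^2) + (((m2:ℚ) - (m1:ℚ))*((k3:ℚ) - (k1:ℚ)) - ((m3:ℚ) - (m1:ℚ))*((k2:ℚ) - (k1:ℚ)))*((m4:ℚ)^2 - (m1:ℚ)^2)) + ((((m3:ℚ) - (m1:ℚ))*((k4:ℚ)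 - (k1:ℚ)) - ((m4:ℚ) - (m1:ℚ))*((k3:ℚ) - (k1:ℚ)))*((k2:ℚ)^2 - (k1:ℚ)^2) + (((m4:ℚ) - (m1:ℚ))*((k2:ℚ) - (k1:ℚ)) - ((m2:ℚ) - (m1:ℚ))*((k4:ℚ) - (k1:ℚ)))*((k3:ℚ)^2 - (k1:ℚ)^2) + (((m2:ℚ) - (m1:ℚ))*((k3:ℚ) - (k1:ℚ)) - ((m3:ℚ) - (m1:ℚ))*((k2:ℚ) - (k1:ℚ)))*((k4:ℚ)^2 - (k1:ℚ)^2))) (by push_cast; linear_combination hA)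
  rcases hcase with ⟨hm41, hk41⟩ | ⟨h41, h42, h43⟩
  · rw [hm41] at hP
    have hPr : (((m3:ℝ) - (m1:ℝ))*((k4:ℝ) - (k1:ℝ)) - ((m1:ℝ) - (m1:ℝ))*((k3:ℝ) - (k1:ℝ)))*((m2:ℝ)^2 - (m1:ℝ)^2) + (((m1:ℝ) - (m1:ℝ))*((k2:ℝ) - (k1:ℝ)) - ((m2:ℝ) - (m1:ℝ))*((k4:ℝ) - (k1:ℝ)))*((m3:ℝ)^2 - (m1:ℝ)^2) + (((m2:ℝ) - (m1:ℝ))*((k3:ℝ) - (k1:ℝ)) - ((m3:ℝ) - (m1:ℝ))*((k2:ℝ) - (k1:ℝ)))*((m1:ℝ)^2 - (m1:ℝ)^2) = 0 := by exact_mod_cast hP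
    have hnn : ¬((((m3:ℝ) - (m1:ℝ))*((k4:ℝ) - (k1:ℝ)) - ((m1:ℝ) - (m1:ℝ))*((k3:ℝ) - (k1:ℝ))) = 0 ∧ (((m1:ℝ) - (m1:ℝ))*((k2:ℝ) - (k1:ℝ)) - ((m2:ℝ) - (m1:ℝ))*((k4:ℝ) - (k1:ℝ))) = 0 ∧ (((m2:ℝ) - (m1:ℝ))*((k3:ℝ) - (k1:ℝ)) - ((m3:ℝ) - (m1:ℝ))*((k2:ℝ) - (k1:ℝ))) = 0) := by
      rintro ⟨hx, -, -⟩
      have hx' : ((m3:ℝ) - (m1:ℝ))*((k4:ℝ) - (k1:ℝ)) = 0 := by linear_combination hx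
      rcases mul_eq_zero.1 hx' with h | h
      · exact h13 (by exact_mod_cast (sub_eq_zero.1 h).symm)
      · exact hk41 (by exact_mod_cast sub_eq_zero.1 h)
    obtain ⟨α, β, hp2, hp3, hp4⟩ := planar ((m2:ℝ) - (m1:ℝ)) ((m3:ℝ) - (m1:ℝ)) ((m1:ℝ) - (m1:ℝ)) ((k2:ℝ) - (k1:ℝ)) ((k3:ℝ) - (k1:ℝ)) ((k4:ℝ) - (k1:ℝ)) ((m2:ℝ)^2 - (m1:ℝ)^2) ((m3:ℝ)^2 - (m1:ℝ)^2) ((m1:ℝ)^2 - (m1:ℝ)^2) (((m3:ℝ) - (m1:ℝ))*((k4:ℝ) - (k1:ℝ)) - ((m1:ℝ) - (m1:ℝ))*((k3:ℝ) - (k1:ℝ))) (((m1:ℝ) - (m1:ℝ))*((k2:ℝ) - (k1:ℝ)) - ((m2:ℝ) - (m1:ℝ))*((k4:ℝ) - (k1:ℝ))) (((m2:ℝ) - (m1:ℝ))*((k3:ℝ) - (k1:ℝ)) - ((m3:ℝ) - (m1:ℝ))*((k2:ℝ) - (k1:ℝ))) rfl rfl rfl hnn hPr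
    by_cases hβ : β = 0
    · exact LQ' 1 (-α) (α*(m1:ℝ) - (m1:ℝ)^2) (m1:ℝ) (m2:ℝ) (m3:ℝ)
        one_ne_zero (by exact_mod_cast h12) (by exact_mod_cast h13) (by exact_mod_cast h23)
        (by ring)
        (by linear_combination hp2 + ((k2:ℝ) - (k1:ℝ))*hβ)
        (by linear_combination hp3 + ((k3:ℝ) - (k1:ℝ))*hβ)
    · have hx : β*((k4:ℝ) - (k1:ℝ)) = 0 := by linear_combination -hp4
      rcases mul_eq_zero.1 hx with h | h
      · exact hβ h
      · exact hk41 (by exact_mod_cast sub_eq_zero.1 h)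
  · by_cases hn : ((((m3:ℝ) - (m1:ℝ))*((k4:ℝ) - (k1:ℝ)) - ((m4:ℝ) - (m1:ℝ))*((k3:ℝ) - (k1:ℝ))) = 0 ∧ (((m4:ℝ) - (m1:ℝ))*((k2:ℝ) - (k1:ℝ)) - ((m2:ℝ) - (m1:ℝ))*((k4:ℝ) - (k1:ℝ))) = 0 ∧ (((m2:ℝ) - (m1:ℝ))*((k3:ℝ) - (k1:ℝ)) - ((m3:ℝ) - (m1:ℝ))*((k2:ℝ) - (k1:ℝ))) = 0)
    · obtain ⟨hn2, hn3, hn4⟩ := hn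
      have hu2 : (m2:ℝ) - (m1:ℝ) ≠ 0 := sub_ne_zero.mpr (fun h => h12 (by exact_mod_cast h.symm))
      have hQ1 : (((m2:ℝ) - (m1:ℝ))^2 + (τ*((m2:ℝ) - (m1:ℝ)) + ((k2:ℝ) - (k1:ℝ)))^2)*(m1:ℝ)^2 + (-2*c₁*((m2:ℝ) - (m1:ℝ))^2 + 2*(τ*((m2:ℝ) - (m1:ℝ)) + ((k2:ℝ) - (k1:ℝ)))*((k1:ℝ)*((m2:ℝ) - (m1:ℝ)) - (m1:ℝ)*((k2:ℝ) - (k1:ℝ)) - ((m2:ℝ) - (m1:ℝ))*c₂))*(m1:ℝ) + (((m2:ℝ) - (m1:ℝ))^2*c₁^2 + ((k1:ℝ)*((m2:ℝ) - (m1:ℝ)) - (m1:ℝ)*((k2:ℝ) - (k1:ℝ)) - ((m2:ℝ) - (m1:ℝ))*c₂)^2 - ((m2:ℝ) - (m1:ℝ))^2*r^2) = 0 := by linear_combination ((m2:ℝ) - (m1:ℝ))^2*h1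
      have hQ2 : (((m2:ℝ) - (m1:ℝ))^2 + (τ*((m2:ℝ) - (m1:ℝ)) + ((k2:ℝ) - (k1:ℝ)))^2)*(m2:ℝ)^2 + (-2*c₁*((m2:ℝ) - (m1:ℝ))^2 + 2*(τ*((m2:ℝ) - (m1:ℝ)) + ((k2:ℝ) - (k1:ℝ)))*((k1:ℝ)*((m2:ℝ) - (m1:ℝ)) - (m1:ℝ)*((k2:ℝ) - (k1:ℝ)) - ((m2:ℝ) - (m1:ℝ))*c₂))*(m2:ℝ) + (((m2:ℝ) - (m1:ℝ))^2*c₁^2 + ((k1:ℝ)*((m2:ℝ) - (m1:ℝ)) - (m1:ℝ)*((k2:ℝ) - (k1:ℝ)) - ((m2:ℝ) - (m1:ℝ))*c₂)^2 - ((m2:ℝ) - (m1:ℝ))^2*r^2) = 0 := by linear_combination ((m2:ℝ) - (m1:ℝ))^2*h2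
      have hQ3 : (((m2:ℝ) - (m1:ℝ))^2 + (τ*((m2:ℝ) - (m1:ℝ)) + ((k2:ℝ) - (k1:ℝ)))^2)*(m3:ℝ)^2 + (-2*c₁*((m2:ℝ) - (m1:ℝ))^2 + 2*(τ*((m2:ℝ) - (m1:ℝ)) + ((k2:ℝ) - (k1:ℝ)))*((k1:ℝ)*((m2:ℝ) - (m1:ℝ)) - (m1:ℝ)*((k2:ℝ) - (k1:ℝ)) - ((m2:ℝ) - (m1:ℝ))*c₂))*(m3:ℝ) + (((m2:ℝ) - (m1:ℝ))^2*c₁^2 + ((k1:ℝ)*((m2:ℝ) - (m1:ℝ)) - (m1:ℝ)*((k2:ℝ) - (k1:ℝ)) - ((m2:ℝ) - (m1:ℝ))*c₂)^2 - ((m2:ℝ) - (m1:ℝ))^2*r^2) = 0 := by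
        linear_combination ((m2:ℝ) - (m1:ℝ))^2*h3 - (((m2:ℝ) - (m1:ℝ))*((m3:ℝ)*τ + (k3:ℝ) - c₂) + ((m3:ℝ)*(τ*((m2:ℝ) - (m1:ℝ)) + ((k2:ℝ) - (k1:ℝ))) + ((k1:ℝ)*((m2:ℝ) - (m1:ℝ)) - (m1:ℝ)*((k2:ℝ) - (k1:ℝ)) - ((m2:ℝ) - (m1:ℝ))*c₂)))*hn4
      exact LQ' (((m2:ℝ) - (m1:ℝ))^2 + (τ*((m2:ℝ) - (m1:ℝ)) + ((k2:ℝ) - (k1:ℝ)))^2) (-2*c₁*((m2:ℝ) - (m1:ℝ))^2 + 2*(τ*((m2:ℝ) - (m1:ℝ)) + ((k2:ℝ) - (k1:ℝ)))*((k1:ℝ)*((m2:ℝ) - (m1:ℝ)) - (m1:ℝ)*((k2:ℝ) - (k1:ℝ)) - ((m2:ℝ) - (m1:ℝ))*c₂)) (((m2:ℝ) - (m1:ℝ))^2*c₁^2 + ((k1:ℝ)*((m2:ℝ) - (m1:ℝ)) - (m1:ℝ)*((k2:ℝ) - (k1:ℝ)) - ((m2:ℝ) - (m1:ℝ))*c₂)^2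 - ((m2:ℝ) - (m1:ℝ))^2*r^2) (m1:ℝ) (m2:ℝ) (m3:ℝ)
        (ne_of_gt (add_pos_of_pos_of_nonneg (pow_two_pos_of_ne_zero hu2) (sq_nonneg _)))
        (by exact_mod_cast h12) (by exact_mod_cast h13) (by exact_mod_cast h23) hQ1 hQ2 hQ3
    · have hPr : (((m3:ℝ) - (m1:ℝ))*((k4:ℝ) - (k1:ℝ)) - ((m4:ℝ) - (m1:ℝ))*((k3:ℝ) - (k1:ℝ)))*((m2:ℝ)^2 - (m1:ℝ)^2) + (((m4:ℝ) - (m1:ℝ))*((k2:ℝ) - (k1:ℝ)) - ((m2:ℝ) - (m1:ℝ))*((k4:ℝ) - (k1:ℝ)))*((m3:ℝ)^2 - (m1:ℝ)^2) + (((m2:ℝ) - (m1:ℝ))*((k3:ℝ) - (k1:ℝ)) - ((m3:ℝ) - (m1:ℝ))*((k2:ℝ) - (k1:ℝ)))*((m4:ℝ)^2 - (m1:ℝ)^2) = 0 := by exact_mod_cast hP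
      have hQz : ((((m3:ℚ) - (m1:ℚ))*((k4:ℚ) - (k1:ℚ)) - ((m4:ℚ) - (m1:ℚ))*((k3:ℚ) - (k1:ℚ)))*((m2:ℚ)*(k2:ℚ) - (m1:ℚ)*(k1:ℚ)) + (((m4:ℚ) - (m1:ℚ))*((k2:ℚ) - (k1:ℚ)) - ((m2:ℚ) - (m1:ℚ))*((k4:ℚ) - (k1:ℚ)))*((m3:ℚ)*(k3:ℚ) - (m1:ℚ)*(k1:ℚ)) + (((m2:ℚ) - (m1:ℚ))*((k3:ℚ) - (k1:ℚ)) - ((m3:ℚ) - (m1:ℚ))*((k2:ℚ) - (k1:ℚ)))*((m4:ℚ)*(k4:ℚ) - (m1:ℚ)*(k1:ℚ))) = 0 := by linear_combination hQ/2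
      have hQr : (((m3:ℝ) - (m1:ℝ))*((k4:ℝ) - (k1:ℝ)) - ((m4:ℝ) - (m1:ℝ))*((k3:ℝ) - (k1:ℝ)))*((m2:ℝ)*(k2:ℝ) - (m1:ℝ)*(k1:ℝ)) + (((m4:ℝ) - (m1:ℝ))*((k2:ℝ) - (k1:ℝ)) - ((m2:ℝ) - (m1:ℝ))*((k4:ℝ) - (k1:ℝ)))*((m3:ℝ)*(k3:ℝ) - (m1:ℝ)*(k1:ℝ)) + (((m2:ℝ) - (m1:ℝ))*((k3:ℝ) - (k1:ℝ)) - ((m3:ℝ) - (m1:ℝ))*((k2:ℝ) - (k1:ℝ)))*((m4:ℝ)*(k4:ℝ) - (m1:ℝ)*(k1:ℝ)) = 0 := by exact_mod_cast hQz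
      obtain ⟨α, β, hp2, hp3, hp4⟩ := planar ((m2:ℝ) - (m1:ℝ)) ((m3:ℝ) - (m1:ℝ)) ((m4:ℝ) - (m1:ℝ)) ((k2:ℝ) - (k1:ℝ)) ((k3:ℝ) - (k1:ℝ)) ((k4:ℝ) - (k1:ℝ)) ((m2:ℝ)^2 - (m1:ℝ)^2) ((m3:ℝ)^2 - (m1:ℝ)^2) ((m4:ℝ)^2 - (m1:ℝ)^2) (((m3:ℝ) - (m1:ℝ))*((k4:ℝ) - (k1:ℝ)) - ((m4:ℝ) - (m1:ℝ))*((k3:ℝ) - (k1:ℝ))) (((m4:ℝ) - (m1:ℝ))*((k2:ℝ) - (k1:ℝ)) - ((m2:ℝ) - (m1:ℝ))*((k4:ℝ) - (k1:ℝ))) (((m2:ℝ) - (m1:ℝ))*((k3:ℝ) - (k1:ℝ)) - ((m3:ℝ) - (m1:ℝ))*((k2:ℝ) - (k1:ℝ))) rfl rfl rfl hn hPr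
      by_cases hβ : β = 0
      · exact LQ' 1 (-α) (α*(m1:ℝ) - (m1:ℝ)^2) (m1:ℝ) (m2:ℝ) (m3:ℝ)
          one_ne_zero (by exact_mod_cast h12) (by exact_mod_cast h13) (by exact_mod_cast h23)
          (by ring)
          (by linear_combination hp2 + ((k2:ℝ) - (k1:ℝ))*hβ)
          (by linear_combination hp3 + ((k3:ℝ) - (k1:ℝ))*hβ)
      · obtain ⟨α', β', hq2, hq3, hq4⟩ := planar ((m2:ℝ) - (m1:ℝ)) ((m3:ℝ) - (m1:ℝ)) ((m4:ℝ) - (m1:ℝ)) ((k2:ℝ) - (k1:ℝ)) ((k3:ℝ) - (k1:ℝ)) ((k4:ℝ) - (k1:ℝ)) ((m2:ℝ)*(k2:ℝ) - (m1:ℝ)*(k1:ℝ)) ((m3:ℝ)*(k3:ℝ) - (m1:ℝ)*(k1:ℝ)) ((m4:ℝ)*(k4:ℝ) - (m1:ℝ)*(k1:ℝ)) (((m3:ℝ) - (m1:ℝ))*((k4:ℝ) - (k1:ℝ)) - ((m4:ℝ) - (m1:ℝ))*((k3:ℝ) - (k1:ℝ))) (((m4:ℝ) - (m1:ℝ))*((k2:ℝ)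 - (k1:ℝ)) - ((m2:ℝ) - (m1:ℝ))*((k4:ℝ) - (k1:ℝ))) (((m2:ℝ) - (m1:ℝ))*((k3:ℝ) - (k1:ℝ)) - ((m3:ℝ) - (m1:ℝ))*((k2:ℝ) - (k1:ℝ))) rfl rfl rfl hn hQr
        have cub1 : (m1:ℝ)^3 + (-(α+β'))*(m1:ℝ)^2 + (α*β' - ((m1:ℝ)^2 - α*(m1:ℝ) - β*(k1:ℝ)) - β*α')*(m1:ℝ) + (β'*((m1:ℝ)^2 - α*(m1:ℝ) - β*(k1:ℝ)) - β*((m1:ℝ)*(k1:ℝ) - α'*(m1:ℝ) - β'*(k1:ℝ))) = 0 := by ring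
        have cub2 : (m2:ℝ)^3 + (-(α+β'))*(m2:ℝ)^2 + (α*β' - ((m1:ℝ)^2 - α*(m1:ℝ) - β*(k1:ℝ)) - β*α')*(m2:ℝ) + (β'*((m1:ℝ)^2 - α*(m1:ℝ) - β*(k1:ℝ)) - β*((m1:ℝ)*(k1:ℝ) - α'*(m1:ℝ) - β'*(k1:ℝ))) = 0 := by linear_combination ((m2:ℝ) - β')*hp2 + β*hq2
        have cub3 : (m3:ℝ)^3 + (-(α+β'))*(m3:ℝ)^2 + (α*β' - ((m1:ℝ)^2 - α*(m1:ℝ) - β*(k1:ℝ)) - β*α')*(m3:ℝ) + (β'*((m1:ℝ)^2 - α*(m1:ℝ) - β*(k1:ℝ)) - β*((m1:ℝ)*(k1:ℝ) - α'*(m1:ℝ) - β'*(k1:ℝ))) = 0 := by linear_combination ((m3:ℝ) - β')*hp3 + β*hq3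
        have cub4 : (m4:ℝ)^3 + (-(α+β'))*(m4:ℝ)^2 + (α*β' - ((m1:ℝ)^2 - α*(m1:ℝ) - β*(k1:ℝ)) - β*α')*(m4:ℝ) + (β'*((m1:ℝ)^2 - α*(m1:ℝ) - β*(k1:ℝ)) - β*((m1:ℝ)*(k1:ℝ) - α'*(m1:ℝ) - β'*(k1:ℝ))) = 0 := by linear_combination ((m4:ℝ) - β')*hp4 + β*hq4
        have g2 : 1*(m2:ℝ)^2 + ((m1:ℝ) + (-(α+β')))*(m2:ℝ) + ((m1:ℝ)^2 + (-(α+β'))*(m1:ℝ) + (α*β' - ((m1:ℝ)^2 - α*(m1:ℝ) - β*(k1:ℝ)) - β*α')) = 0 := by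
          have hf : ((m2:ℝ) - (m1:ℝ))*(1*(m2:ℝ)^2 + ((m1:ℝ) + (-(α+β')))*(m2:ℝ) + ((m1:ℝ)^2 + (-(α+β'))*(m1:ℝ) + (α*β' - ((m1:ℝ)^2 - α*(m1:ℝ) - β*(k1:ℝ)) - β*α'))) = 0 := by linear_combination cub2 - cub1
          exact (mul_eq_zero.1 hf).resolve_left (sub_ne_zero.mpr (fun h => h12 (by exact_mod_cast h.symm)))
        have g3 : 1*(m3:ℝ)^2 + ((m1:ℝ) + (-(α+β')))*(m3:ℝ) + ((m1:ℝ)^2 + (-(α+β'))*(m1:ℝ) + (α*β' - ((m1:ℝ)^2 - α*(m1:ℝ) - β*(k1:ℝ)) - β*α')) = 0 := by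
          have hf : ((m3:ℝ) - (m1:ℝ))*(1*(m3:ℝ)^2 + ((m1:ℝ) + (-(α+β')))*(m3:ℝ) + ((m1:ℝ)^2 + (-(α+β'))*(m1:ℝ) + (α*β' - ((m1:ℝ)^2 - α*(m1:ℝ) - β*(k1:ℝ)) - β*α'))) = 0 := by linear_combination cub3 - cub1
          exact (mul_eq_zero.1 hf).resolve_left (sub_ne_zero.mpr (fun h => h13 (by exact_mod_cast h.symm)))
        have g4 : 1*(m4:ℝ)^2 + ((m1:ℝ) + (-(α+β')))*(m4:ℝ) + ((m1:ℝ)^2 + (-(α+β'))*(m1:ℝ) + (α*β' - ((m1:ℝ)^2 - α*(m1:ℝ) - β*(k1:ℝ)) - β*α')) = 0 := by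
          have hf : ((m4:ℝ) - (m1:ℝ))*(1*(m4:ℝ)^2 + ((m1:ℝ) + (-(α+β')))*(m4:ℝ) + ((m1:ℝ)^2 + (-(α+β'))*(m1:ℝ) + (α*β' - ((m1:ℝ)^2 - α*(m1:ℝ) - β*(k1:ℝ)) - β*α'))) = 0 := by linear_combination cub4 - cub1
          exact (mul_eq_zero.1 hf).resolve_left (sub_ne_zero.mpr (fun h => h41 (by exact_mod_cast h)))
        exact LQ' 1 ((m1:ℝ) + (-(α+β'))) ((m1:ℝ)^2 + (-(α+β'))*(m1:ℝ) + (α*β' - ((m1:ℝ)^2 - α*(m1:ℝ) - β*(k1:ℝ)) - β*α')) (m2:ℝ) (m3:ℝ) (m4:ℝ) one_ne_zero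
          (by exact_mod_cast h23) (by exact_mod_cast (h42.symm)) (by exact_mod_cast (h43.symm)) g2 g3 g4

lemma lemV (τ c₁ c₂ r : ℝ) (m k1 k2 k3 : ℤ)
    (h1 : ((m:ℝ) - c₁)^2 + ((m:ℝ)*τ + (k1:ℝ) - c₂)^2 = r^2)
    (h2 : ((m:ℝ) - c₁)^2 + ((m:ℝ)*τ + (k2:ℝ) - c₂)^2 = r^2)
    (h3 : ((m:ℝ) - c₁)^2 + ((m:ℝ)*τ + (k3:ℝ) - c₂)^2 = r^2)
    (h12 : k1 ≠ k2) (h13 : k1 ≠ k3) (h23 : k2 ≠ k3) : False := by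
  have e1 : ((k1:ℝ) - (k2:ℝ)) * ((m:ℝ)*τ + (k1:ℝ) + ((m:ℝ)*τ + (k2:ℝ)) - 2*c₂) = 0 := by
    linear_combination h1 - h2
  have e2 : ((k1:ℝ) - (k3:ℝ)) * ((m:ℝ)*τ + (k1:ℝ) + ((m:ℝ)*τ + (k3:ℝ)) - 2*c₂) = 0 := by
    linear_combination h1 - h3
  have f1 := (mul_eq_zero.1 e1).resolve_left
    (sub_ne_zero.mpr (fun h => h12 (by exact_mod_cast h)))
  have f2 := (mul_eq_zero.1 e2).resolve_left
    (sub_ne_zero.mpr (fun h => h13 (by exact_mod_cast h)))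
  have : (k2:ℝ) - (k3:ℝ) = 0 := by linear_combination f1 - f2
  exact h23 (by exact_mod_cast sub_eq_zero.1 this)

lemma lemP (τ c₁ c₂ r : ℝ) (hτ : Transcendental ℚ τ) (ma mb k1 k2 k3 k4 : ℤ)
    (h1 : ((ma:ℝ) - c₁)^2 + ((ma:ℝ)*τ + (k1:ℝ) - c₂)^2 = r^2)
    (h2 : ((ma:ℝ) - c₁)^2 + ((ma:ℝ)*τ + (k2:ℝ) - c₂)^2 = r^2)
    (h3 : ((mb:ℝ) - c₁)^2 + ((mb:ℝ)*τ + (k3:ℝ) - c₂)^2 = r^2)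
    (h4 : ((mb:ℝ) - c₁)^2 + ((mb:ℝ)*τ + (k4:ℝ) - c₂)^2 = r^2)
    (hm : ma ≠ mb) (h12 : k1 ≠ k2) (h34 : k3 ≠ k4) : False := by
  have e1 : ((k1:ℝ) - (k2:ℝ)) * (2*(ma:ℝ)*τ + (k1:ℝ) + (k2:ℝ) - 2*c₂) = 0 := by
    linear_combination h1 - h2
  have e2 : ((k3:ℝ) - (k4:ℝ)) * (2*(mb:ℝ)*τ + (k3:ℝ) + (k4:ℝ) - 2*c₂) = 0 := by
    linear_combination h3 - h4
  have f1 := (mul_eq_zero.1 e1).resolve_left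
    (sub_ne_zero.mpr (fun h => h12 (by exact_mod_cast h)))
  have f2 := (mul_eq_zero.1 e2).resolve_left
    (sub_ne_zero.mpr (fun h => h34 (by exact_mod_cast h)))
  obtain ⟨-, hb, -⟩ := L0' τ hτ 0 (2*((ma:ℚ) - (mb:ℚ))) ((k1:ℚ) + (k2:ℚ) - (k3:ℚ) - (k4:ℚ))
    (by push_cast; linear_combination f1 - f2)
  have : (ma:ℚ) = (mb:ℚ) := by linarith
  exact hm (by exact_mod_cast this)

lemma lemD (τ c₁ c₂ r : ℝ) (hτ : Transcendental ℚ τ) (m1 m2 m3 m4 k1 k2 k3 k4 : ℤ)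
    (h1 : ((m1:ℝ) - c₁)^2 + ((m1:ℝ)*τ + (k1:ℝ) - c₂)^2 = r^2)
    (h2 : ((m2:ℝ) - c₁)^2 + ((m2:ℝ)*τ + (k2:ℝ) - c₂)^2 = r^2)
    (h3 : ((m3:ℝ) - c₁)^2 + ((m3:ℝ)*τ + (k3:ℝ) - c₂)^2 = r^2)
    (h4 : ((m4:ℝ) - c₁)^2 + ((m4:ℝ)*τ + (k4:ℝ) - c₂)^2 = r^2)
    (d12 : m1 ≠ m2 ∨ k1 ≠ k2) (d13 : m1 ≠ m3 ∨ k1 ≠ k3) (d14 : m1 ≠ m4 ∨ k1 ≠ k4)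
    (d23 : m2 ≠ m3 ∨ k2 ≠ k3) (d24 : m2 ≠ m4 ∨ k2 ≠ k4) (d34 : m3 ≠ m4 ∨ k3 ≠ k4) : False := by
  by_cases e12 : m1 = m2
  · by_cases e13 : m1 = m3
    · exact lemV τ c₁ c₂ r m1 k1 k2 k3 h1 (by rw [e12]; exact h2) (by rw [e13]; exact h3)
        (d12.resolve_left (by omega)) (d13.resolve_left (by omega)) (d23.resolve_left (by omega))
    · by_cases e14 : m1 = m4
      · exact lemV τ c₁ c₂ r m1 k1 k2 k4 h1 (by rw [e12]; exact h2) (by rw [e14]; exact h4)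
          (d12.resolve_left (by omega)) (d14.resolve_left (by omega)) (d24.resolve_left (by omega))
      · by_cases e34 : m3 = m4
        · exact lemP τ c₁ c₂ r hτ m1 m3 k1 k2 k3 k4 h1 (by rw [e12]; exact h2) h3
            (by rw [e34]; exact h4) e13 (d12.resolve_left (by omega)) (d34.resolve_left (by omega))
        · exact lemB τ c₁ c₂ r hτ m1 m3 m4 m2 k1 k3 k4 k2 h1 h3 h4 h2 e13 e14 e34
            (Or.inl ⟨e12.symm, fun h => (d12.resolve_left (by omega)) h.symm⟩)
  · by_cases e13 : m1 = m3
    · by_cases e14 : m1 = m4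
      · exact lemV τ c₁ c₂ r m1 k1 k3 k4 h1 (by rw [e13]; exact h3) (by rw [e14]; exact h4)
          (d13.resolve_left (by omega)) (d14.resolve_left (by omega)) (d34.resolve_left (by omega))
      · by_cases e24 : m2 = m4
        · exact lemP τ c₁ c₂ r hτ m1 m2 k1 k3 k2 k4 h1 (by rw [e13]; exact h3) h2
            (by rw [e24]; exact h4) e12 (d13.resolve_left (by omega)) (d24.resolve_left (by omega))
        · exact lemB τ c₁ c₂ r hτ m1 m2 m4 m3 k1 k2 k4 k3 h1 h2 h4 h3 e12 e14 e24
            (Or.inl ⟨e13.symm, fun h => (d13.resolve_left (by omega)) h.symm⟩)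
    · by_cases e23 : m2 = m3
      · by_cases e24 : m2 = m4
        · exact lemV τ c₁ c₂ r m2 k2 k3 k4 h2 (by rw [e23]; exact h3) (by rw [e24]; exact h4)
            (d23.resolve_left (by omega)) (d24.resolve_left (by omega)) (d34.resolve_left (by omega))
        · by_cases e14 : m1 = m4
          · exact lemP τ c₁ c₂ r hτ m2 m1 k2 k3 k1 k4 h2 (by rw [e23]; exact h3) h1
              (by rw [e14]; exact h4) (fun h => e12 h.symm) (d23.resolve_left (by omega))
              (d14.resolve_left (by omega))
          · exact lemB τ c₁ c₂ r hτ m2 m1 m4 m3 k2 k1 k4 k3 h2 h1 h4 h3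
              (fun h => e12 h.symm) e24 e14
              (Or.inl ⟨e23.symm, fun h => (d23.resolve_left (by omega)) h.symm⟩)
      · by_cases e14 : m1 = m4
        · exact lemB τ c₁ c₂ r hτ m1 m2 m3 m4 k1 k2 k3 k4 h1 h2 h3 h4 e12 e13 e23
            (Or.inl ⟨e14.symm, fun h => (d14.resolve_left (by omega)) h.symm⟩)
        · by_cases e24 : m2 = m4
          · exact lemB τ c₁ c₂ r hτ m2 m1 m3 m4 k2 k1 k3 k4 h2 h1 h3 h4
              (fun h => e12 h.symm) e23 e13
              (Or.inl ⟨e24.symm, fun h => (d24.resolve_left (by omega)) h.symm⟩)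
          · by_cases e34 : m3 = m4
            · exact lemB τ c₁ c₂ r hτ m3 m1 m2 m4 k3 k1 k2 k4 h3 h1 h2 h4
                (fun h => e13 h.symm) (fun h => e23 h.symm) e12
                (Or.inl ⟨e34.symm, fun h => (d34.resolve_left (by omega)) h.symm⟩)
            · exact lemB τ c₁ c₂ r hτ m1 m2 m3 m4 k1 k2 k3 k4 h1 h2 h3 h4 e12 e13 e23
                (Or.inr ⟨fun h => e14 h.symm, fun h => e24 h.symm, fun h => e34 h.symm⟩)

lemma noFour (τ : ℝ) (hτ : Transcendental ℚ τ) (c₁ c₂ r : ℝ) (p1 p2 p3 p4 : ℝ × ℝ)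
    (hl1 : (∃ m k : ℤ, p1 = ((m : ℝ), (m : ℝ) * τ + (k : ℝ))) ∧
      (p1.1 - c₁) ^ 2 + (p1.2 - c₂) ^ 2 = r ^ 2)
    (hl2 : (∃ m k : ℤ, p2 = ((m : ℝ), (m : ℝ) * τ + (k : ℝ))) ∧
      (p2.1 - c₁) ^ 2 + (p2.2 - c₂) ^ 2 = r ^ 2)
    (hl3 : (∃ m k : ℤ, p3 = ((m : ℝ), (m : ℝ) * τ + (k : ℝ))) ∧
      (p3.1 - c₁) ^ 2 + (p3.2 - c₂) ^ 2 = r ^ 2)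
    (hl4 : (∃ m k : ℤ, p4 = ((m : ℝ), (m : ℝ) * τ + (k : ℝ))) ∧
      (p4.1 - c₁) ^ 2 + (p4.2 - c₂) ^ 2 = r ^ 2)
    (n12 : p1 ≠ p2) (n13 : p1 ≠ p3) (n14 : p1 ≠ p4)
    (n23 : p2 ≠ p3) (n24 : p2 ≠ p4) (n34 : p3 ≠ p4) : False := by
  obtain ⟨⟨m1, k1, hp1⟩, hc1⟩ := hl1
  obtain ⟨⟨m2, k2, hp2⟩, hc2⟩ := hl2
  obtain ⟨⟨m3, k3, hp3⟩, hc3⟩ := hl3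
  obtain ⟨⟨m4, k4, hp4⟩, hc4⟩ := hl4
  subst hp1 hp2 hp3 hp4
  simp only [] at hc1 hc2 hc3 hc4
  have key : ∀ a b x y : ℤ, ((a:ℝ), (a:ℝ)*τ + (x:ℝ)) ≠ ((b:ℝ), (b:ℝ)*τ + (y:ℝ)) →
      a ≠ b ∨ x ≠ y := by
    intro a b x y h
    by_contra hcon
    push_neg at hcon
    exact h (by rw [hcon.1, hcon.2])
  exact lemD τ c₁ c₂ r hτ m1 m2 m3 m4 k1 k2 k3 k4 hc1 hc2 hc3 hc4
    (key _ _ _ _ n12) (key _ _ _ _ n13) (key _ _ _ _ n14)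
    (key _ _ _ _ n23) (key _ _ _ _ n24) (key _ _ _ _ n34)

lemma four_of_ncard {α : Type*} (S : Set α) (h : S.ncard = 4) :
    ∃ p1 p2 p3 p4, p1 ∈ S ∧ p2 ∈ S ∧ p3 ∈ S ∧ p4 ∈ S ∧
      p1 ≠ p2 ∧ p1 ≠ p3 ∧ p1 ≠ p4 ∧ p2 ≠ p3 ∧ p2 ≠ p4 ∧ p3 ≠ p4 := by
  classical
  have hfin : S.Finite := by
    by_contra hinf
    rw [Set.Infinite.ncard hinf] at h
    omega
  have hcard : hfin.toFinset.card = 4 := by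
    rw [← Set.ncard_eq_toFinset_card S hfin]; exact h
  obtain ⟨a, t1, ha, hins1, hc1⟩ := Finset.card_eq_succ.mp hcard
  obtain ⟨b, t2, hb, hins2, hc2⟩ := Finset.card_eq_succ.mp hc1
  obtain ⟨c, t3, hc, hins3, hc3⟩ := Finset.card_eq_succ.mp hc2
  obtain ⟨d, hd⟩ := Finset.card_eq_one.mp hc3
  have hbt1 : b ∈ t1 := by rw [← hins2]; exact Finset.mem_insert_self b t2
  have hct2 : c ∈ t2 := by rw [← hins3]; exact Finset.mem_insert_self c t3
  have hdt3 : d ∈ t3 := by rw [hd]; exact Finset.mem_singleton_self d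
  have hct1 : c ∈ t1 := by rw [← hins2]; exact Finset.mem_insert_of_mem hct2
  have hdt2 : d ∈ t2 := by rw [← hins3]; exact Finset.mem_insert_of_mem hdt3
  have hdt1 : d ∈ t1 := by rw [← hins2]; exact Finset.mem_insert_of_mem hdt2
  have hmemS : ∀ x ∈ hfin.toFinset, x ∈ S := fun x hx => hfin.mem_toFinset.mp hx
  exact ⟨a, b, c, d,
    hmemS a (by rw [← hins1]; exact Finset.mem_insert_self a t1),
    hmemS b (by rw [← hins1]; exact Finset.mem_insert_of_mem hbt1),
    hmemS c (by rw [← hins1]; exact Finset.mem_insert_of_mem hct1),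
    hmemS d (by rw [← hins1]; exact Finset.mem_insert_of_mem hdt1),
    fun h => ha (by rw [h]; exact hbt1), fun h => ha (by rw [h]; exact hct1),
    fun h => ha (by rw [h]; exact hdt1), fun h => hb (by rw [h]; exact hct2),
    fun h => hb (by rw [h]; exact hdt2), fun h => hc (by rw [h]; exact hdt3)⟩

/-- If `τ` is transcendental, then the lattice `Λ[(1,τ),(0,1)] = {(m, mτ + k)}`
contains no four concyclic points; in particular it is not universally concyclic. -/
theorem stmt_7 (τ : ℝ) (hτ : Transcendental ℚ τ) :
    (¬ ∃ (c₁ c₂ r : ℝ) (p₁ p₂ p₃ p₄ : ℝ × ℝ),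
        (∀ p ∈ [p₁, p₂, p₃, p₄],
          (∃ m k : ℤ, p = ((m : ℝ), (m : ℝ) * τ + (k : ℝ))) ∧
          (p.1 - c₁) ^ 2 + (p.2 - c₂) ^ 2 = r ^ 2) ∧
        p₁ ≠ p₂ ∧ p₁ ≠ p₃ ∧ p₁ ≠ p₄ ∧ p₂ ≠ p₃ ∧ p₂ ≠ p₄ ∧ p₃ ≠ p₄) ∧
    ¬ (∀ n : ℕ, 0 < n → ∃ (c₁ c₂ r : ℝ), 0 < r ∧
        Set.ncard {p : ℝ × ℝ |
          (∃ m k : ℤ, p = ((m : ℝ), (m : ℝ) * τ + (k : ℝ))) ∧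
          (p.1 - c₁) ^ 2 + (p.2 - c₂) ^ 2 = r ^ 2} = n) := by
  constructor
  · rintro ⟨c₁, c₂, r, p1, p2, p3, p4, hall, hn12, hn13, hn14, hn23, hn24, hn34⟩
    exact noFour τ hτ c₁ c₂ r p1 p2 p3 p4
      (hall p1 (by simp)) (hall p2 (by simp)) (hall p3 (by simp)) (hall p4 (by simp))
      hn12 hn13 hn14 hn23 hn24 hn34
  · intro H
    obtain ⟨c₁, c₂, r, hr, hcard⟩ := H 4 (by norm_num)
    obtain ⟨p1, p2, p3, p4, hm1, hm2, hm3, hm4, hn12, hn13, hn14, hn23, hn24, hn34⟩ :=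
      four_of_ncard _ hcard
    exact noFour τ hτ c₁ c₂ r p1 p2 p3 p4 hm1 hm2 hm3 hm4 hn12 hn13 hn14 hn23 hn24 hn34
end

section
/- Let α, β > 0. The rectangular lattice generated by (α, 0) and (0, β) contains no five concyclic points if and only if (α/β)² is irrational. -/
open Polynomial

open Polynomial

lemma circle3 {x1 y1 x2 y2 x3 y3 c1 c2 r : ℝ}
    (h1 : (x1 - c1)^2 + (y1 - c2)^2 = r^2)
    (h2 : (x2 - c1)^2 + (y2 - c2)^2 = r^2)
    (h3 : (x3 - c1)^2 + (y3 - c2)^2 = r^2)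
    (n12 : ¬(x2 = x1 ∧ y2 = y1)) (n13 : ¬(x3 = x1 ∧ y3 = y1))
    (n23 : ¬(x2 = x3 ∧ y2 = y3))
    (hcol : (x2 - x1) * (y3 - y1) = (x3 - x1) * (y2 - y1)) : False := by
  by_cases hx : x3 = x1
  · have hy : y3 ≠ y1 := fun h => n13 ⟨hx, h⟩
    have h0 : (x2 - x1) * (y3 - y1) = 0 := by
      rw [hx] at hcol; linear_combination hcol
    have hx2 : x2 = x1 := by
      rcases mul_eq_zero.1 h0 with h | h
      · linarith
      · exact absurd (by linarith) hy
    have hy2 : y2 ≠ y1 := fun h => n12 ⟨hx2, h⟩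
    have e12 : (y2 - y1) * (y1 + y2 - 2*c2) = 0 := by
      linear_combination h2 - h1 - (x2 + x1 - 2*c1) * hx2
    have e13 : (y3 - y1) * (y1 + y3 - 2*c2) = 0 := by
      linear_combination h3 - h1 - (x3 + x1 - 2*c1) * hx
    have hA : y1 + y2 - 2*c2 = 0 := by
      rcases mul_eq_zero.1 e12 with h | h
      · exact absurd (by linarith) hy2
      · exact h
    have hB : y1 + y3 - 2*c2 = 0 := by
      rcases mul_eq_zero.1 e13 with h | h
      · exact absurd (by linarith) hy
      · exact h
    exact n23 ⟨hx2.trans hx.symm, by linarith⟩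
  · have hdx : x3 - x1 ≠ 0 := sub_ne_zero.2 hx
    obtain ⟨t, hx2, hy2⟩ : ∃ t, x2 = x1 + t * (x3 - x1) ∧ y2 = y1 + t * (y3 - y1) := by
      refine ⟨(x2 - x1)/(x3 - x1), by field_simp; ring, ?_⟩
      have hyy : y2 - y1 = (x2 - x1)/(x3-x1) * (y3 - y1) := by
        rw [div_mul_eq_mul_div, eq_div_iff hdx]
        linear_combination -hcol
      linarith
    subst hx2; subst hy2
    have key : t * (t - 1) * ((x3 - x1)^2 + (y3 - y1)^2) = 0 := by
      linear_combination h2 - (1 - t) * h1 - t * h3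
    have hq : 0 < (x3 - x1)^2 :=
      lt_of_le_of_ne (sq_nonneg _) (Ne.symm (pow_ne_zero 2 hdx))
    have hpos : (x3 - x1)^2 + (y3 - y1)^2 ≠ 0 :=
      ne_of_gt (by nlinarith [sq_nonneg (y3 - y1)])
    rcases mul_eq_zero.1 key with h | h
    · rcases mul_eq_zero.1 h with h | h
      · exact n12 ⟨by rw [h]; ring, by rw [h]; ring⟩
      · exact n23 ⟨by linear_combination (x3 - x1) * h, by linear_combination (y3 - y1) * h⟩
    · exact hpos h

lemma keycount (m k : Fin 5 → ℚ) (inj : ∀ i j, m i = m j → k i = k j → i = j)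
    (lam mu c lam' mu' c' : ℚ) (hmu : mu ≠ 0)
    (h1 : ∀ i, (m i)^2 = lam * m i + mu * k i + c)
    (h2 : ∀ i, (k i)^2 = lam' * k i + mu' * m i + c') : False := by
  have hminj : Function.Injective m := by
    intro i j hij
    have hkk : mu * k i = mu * k j := by
      linear_combination (h1 j) - (h1 i) + (m i + m j - lam) * hij
    exact inj i j hij (mul_left_cancel₀ hmu hkk)
  set p : ℚ[X] := (X^2 - C lam * X - C c)^2 - C (mu*lam') * (X^2 - C lam * X - C c)
      - C (mu^2*mu') * X - C (mu^2*c') with hp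
  have hpd : p.natDegree = 4 := by
    rw [hp]
    compute_degree!
  have hpne : p ≠ 0 := by
    intro h; rw [h] at hpd; simp at hpd
  have heval : ∀ i, p.eval (m i) = 0 := by
    intro i
    simp only [hp, eval_sub, eval_pow, eval_mul, eval_add, eval_C, eval_X]
    linear_combination (m i^2 - lam * m i - c + mu * k i - mu*lam') * (h1 i) + mu^2 * (h2 i)
  have := Polynomial.eq_zero_of_natDegree_lt_card_of_eval_eq_zero p hminj heval
      (by rw [hpd]; simp)
  exact hpne this


set_option maxHeartbeats 1000000 in
/-- For `α, β > 0`, the rectangular lattice `{(mα, kβ) : m, k ∈ ℤ}` contains no five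
concyclic points if and only if `(α/β)²` is irrational. -/
theorem stmt_8 (α β : ℝ) (hα : 0 < α) (hβ : 0 < β) :
    (¬ ∃ (c₁ c₂ r : ℝ) (p : Fin 5 → ℝ × ℝ), Function.Injective p ∧
        ∀ i, (∃ m k : ℤ, p i = ((m : ℝ) * α, (k : ℝ) * β)) ∧
          ((p i).1 - c₁) ^ 2 + ((p i).2 - c₂) ^ 2 = r ^ 2) ↔
      Irrational ((α / β) ^ 2) := by
  constructor
  · intro hno
    by_contra hirr
    apply hno
    obtain ⟨q, hq⟩ := not_not.mp hirr
    have hq0 : (0:ℝ) < q := by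
      rw [hq]; exact pow_pos (div_pos hα hβ) 2
    have hqpos : 0 < q := by exact_mod_cast hq0
    have ha1 : 1 ≤ q.num := Rat.num_pos.2 hqpos
    have hb1 : 1 ≤ (q.den:ℤ) := by exact_mod_cast q.pos
    have hab : α^2 * ((q.den:ℤ):ℝ) = ((q.num:ℤ):ℝ) * β^2 := by
      have hcast : (q:ℝ) = (q.num:ℝ) / (q.den:ℝ) := by rw [Rat.cast_def]
      rw [hcast, div_pow] at hq
      have hden : ((q.den:ℝ)) ≠ 0 := by positivity
      have hβ2 : (β:ℝ)^2 ≠ 0 := by positivity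
      have := (div_eq_div_iff hden hβ2).mp hq
      push_cast
      linarith
    obtain ⟨A, hA2, B, hB2, hAB⟩ :
        ∃ A : ℤ, (2:ℝ) ≤ (A:ℝ) ∧ ∃ B : ℤ, (2:ℝ) ≤ (B:ℝ) ∧ α^2 * (B:ℝ) = (A:ℝ) * β^2 := by
      refine ⟨2*q.num, ?_, 2*(q.den:ℤ), ?_, by push_cast; push_cast at hab; linarith⟩
      · push_cast; have : (1:ℝ) ≤ (q.num:ℝ) := by exact_mod_cast ha1
        linarith
      · push_cast; have : (1:ℝ) ≤ ((q.den:ℤ):ℝ) := by exact_mod_cast hb1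
        push_cast at this; linarith
    set M1 : ℝ := (A:ℝ)*(B:ℝ)^2+1 with hM1
    set M2 : ℝ := (A:ℝ)*(B:ℝ)^2-1 with hM2
    set K1 : ℝ := (A:ℝ)^2*(B:ℝ)-1 with hK1
    set K2 : ℝ := (A:ℝ)^2*(B:ℝ)+1 with hK2
    have hM1R : (9:ℝ) ≤ M1 := by rw [hM1]; nlinarith
    have hM2R : (7:ℝ) ≤ M2 := by rw [hM2]; nlinarith
    have hK1R : (7:ℝ) ≤ K1 := by rw [hK1]; nlinarith
    have hK2R : (9:ℝ) ≤ K2 := by rw [hK2]; nlinarith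
    have hM12 : M2 + 2 = M1 := by rw [hM1, hM2]; ring
    have hK12 : K1 + 2 = K2 := by rw [hK1, hK2]; ring
    have hS : (0:ℝ) ≤ M1^2*α^2 + K1^2*β^2 := by positivity
    have hx1 : 0 < M1*α :=
      lt_of_lt_of_le (by positivity) (mul_le_mul_of_nonneg_right hM1R hα.le)
    have hx2 : 0 < M2*α :=
      lt_of_lt_of_le (by positivity) (mul_le_mul_of_nonneg_right hM2R hα.le)
    have hy1 : 0 < K1*β :=
      lt_of_lt_of_le (by positivity) (mul_le_mul_of_nonneg_right hK1R hβ.le)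
    have hy2 : 0 < K2*β :=
      lt_of_lt_of_le (by positivity) (mul_le_mul_of_nonneg_right hK2R hβ.le)
    have hx12 : M2*α < M1*α := mul_lt_mul_of_pos_right (by linarith) hα
    have hy12 : K1*β < K2*β := mul_lt_mul_of_pos_right (by linarith) hβ
    have hr2 : Real.sqrt (M1^2*α^2 + K1^2*β^2) ^ 2 = M1^2*α^2 + K1^2*β^2 := Real.sq_sqrt hS
    refine ⟨0, 0, Real.sqrt (M1^2*α^2 + K1^2*β^2),
      ![(M1*α, K1*β), (M1*α, -K1*β), (-M1*α, K1*β), (-M1*α, -K1*β), (M2*α, K2*β)], ?_, ?_⟩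
    · intro i j hij
      fin_cases i <;> fin_cases j <;>
        simp only [Nat.succ_eq_add_one, Nat.reduceAdd, Fin.reduceFinMk, Fin.mk_zero, Fin.mk_one,
          Matrix.cons_val_zero, Matrix.cons_val_one, Matrix.cons_val_two, Matrix.cons_val_three,
          Matrix.cons_val_four, Matrix.head_cons, Matrix.tail_cons, Prod.mk.injEq] at hij ⊢ <;>
        first
          | rfl
          | (exfalso; have h1 := hij.1; have h2 := hij.2; linarith)
    · intro i
      fin_cases i <;>
        simp only [Nat.succ_eq_add_one, Nat.reduceAdd, Fin.reduceFinMk, Fin.mk_zero, Fin.mk_one,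
          Matrix.cons_val_zero, Matrix.cons_val_one, Matrix.cons_val_two, Matrix.cons_val_three,
          Matrix.cons_val_four, Matrix.head_cons, Matrix.tail_cons]
      · exact ⟨⟨A*B^2+1, A^2*B-1,
          by rw [Prod.mk.injEq, hM1, hK1]; constructor <;> (push_cast; ring)⟩,
          by rw [hr2]; ring⟩
      · exact ⟨⟨A*B^2+1, -(A^2*B-1),
          by rw [Prod.mk.injEq, hM1, hK1]; constructor <;> (push_cast; ring)⟩,
          by rw [hr2]; ring⟩
      · exact ⟨⟨-(A*B^2+1), A^2*B-1,
          by rw [Prod.mk.injEq, hM1, hK1]; constructor <;> (push_cast; ring)⟩,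
          by rw [hr2]; ring⟩
      · exact ⟨⟨-(A*B^2+1), -(A^2*B-1),
          by rw [Prod.mk.injEq, hM1, hK1]; constructor <;> (push_cast; ring)⟩,
          by rw [hr2]; ring⟩
      · exact ⟨⟨A*B^2-1, A^2*B+1,
          by rw [Prod.mk.injEq, hM2, hK2]; constructor <;> (push_cast; ring)⟩,
          by rw [hr2, hM1, hM2, hK1, hK2]; linear_combination (-4*(A:ℝ)*(B:ℝ)) * hAB⟩

  · intro hirr
    rintro ⟨c₁, c₂, r, p, hinj, hp⟩
    choose m k hmk using fun i => (hp i).1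
    have hc : ∀ i, ((m i : ℝ)*α - c₁)^2 + ((k i : ℝ)*β - c₂)^2 = r^2 := by
      intro i
      have h := (hp i).2
      rw [hmk i] at h
      exact h
    have hαne : α ≠ 0 := ne_of_gt hα
    have hβne : β ≠ 0 := ne_of_gt hβ
    have hpair : ∀ i j : Fin 5, m i = m j → k i = k j → i = j := by
      intro i j h1 h2
      apply hinj
      rw [hmk i, hmk j, h1, h2]
    have hne : ∀ i j : Fin 5, i ≠ j → ¬((m i:ℝ)*α = (m j:ℝ)*α ∧ (k i:ℝ)*β = (k j:ℝ)*β) := by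
      rintro i j hij ⟨h1, h2⟩
      apply hij
      apply hpair
      · exact_mod_cast mul_right_cancel₀ hαne h1
      · exact_mod_cast mul_right_cancel₀ hβne h2
    have hncol : ∀ i j : Fin 5, i ≠ 0 → j ≠ 0 → i ≠ j →
        (m i - m 0) * (k j - k 0) ≠ (m j - m 0) * (k i - k 0) := by
      intro i j hi hj hij hcl
      have hclR : ((m i:ℝ) - m 0) * ((k j:ℝ) - k 0) = ((m j:ℝ) - m 0) * ((k i:ℝ) - k 0) := by
        exact_mod_cast hcl
      exact circle3 (hc 0) (hc i) (hc j) (hne i 0 hi) (hne j 0 hj) (hne i j hij)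
        (by linear_combination α * β * hclR)
    have E : ∀ i : Fin 5, α^2*((m i:ℝ)^2 - (m 0:ℝ)^2) + β^2*((k i:ℝ)^2 - (k 0:ℝ)^2)
        = (2*c₁*α)*((m i:ℝ) - m 0) + (2*c₂*β)*((k i:ℝ) - k 0) := by
      intro i; linear_combination hc i - hc 0
    have claim : ∀ i : Fin 5,
        ((((m 1 - m 0)*(k 2 - k 0) - (m 2 - m 0)*(k 1 - k 0)) * (m i^2 - m 0^2)
          - ((m i - m 0)*(k 2 - k 0) - (k i - k 0)*(m 2 - m 0)) * (m 1^2 - m 0^2)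
          - ((k i - k 0)*(m 1 - m 0) - (m i - m 0)*(k 1 - k 0)) * (m 2^2 - m 0^2) : ℤ) : ℝ) * α^2
        + ((((m 1 - m 0)*(k 2 - k 0) - (m 2 - m 0)*(k 1 - k 0)) * (k i^2 - k 0^2)
          - ((m i - m 0)*(k 2 - k 0) - (k i - k 0)*(m 2 - m 0)) * (k 1^2 - k 0^2)
          - ((k i - k 0)*(m 1 - m 0) - (m i - m 0)*(k 1 - k 0)) * (k 2^2 - k 0^2) : ℤ) : ℝ) * β^2
        = 0 := by
      intro i
      push_cast
      linear_combination
        (((m 1:ℝ) - m 0)*((k 2:ℝ) - k 0) - ((m 2:ℝ) - m 0)*((k 1:ℝ) - k 0)) * E i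
        - (((m i:ℝ) - m 0)*((k 2:ℝ) - k 0) - ((k i:ℝ) - k 0)*((m 2:ℝ) - m 0)) * E 1
        - (((k i:ℝ) - k 0)*((m 1:ℝ) - m 0) - ((m i:ℝ) - m 0)*((k 1:ℝ) - k 0)) * E 2
    have PQzero : ∀ P Q : ℤ, (P:ℝ)*α^2 + (Q:ℝ)*β^2 = 0 → P = 0 ∧ Q = 0 := by
      intro P Q hPQ
      rcases eq_or_ne P 0 with h | h
      · subst h
        refine ⟨rfl, ?_⟩
        have h0 : (Q:ℝ)*β^2 = 0 := by push_cast at hPQ ⊢; linarith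
        rcases mul_eq_zero.1 h0 with h' | h'
        · exact_mod_cast h'
        · exact absurd h' (by positivity)
      · exfalso
        apply hirr
        have hPr : (P:ℝ) ≠ 0 := Int.cast_ne_zero.2 h
        refine ⟨(-Q : ℚ)/(P : ℚ), ?_⟩
        push_cast
        rw [div_pow, div_eq_div_iff hPr (pow_ne_zero 2 hβne)]
        linear_combination -hPQ
    obtain ⟨hP3, hQ3⟩ := PQzero _ _ (claim 3)
    obtain ⟨hP4, hQ4⟩ := PQzero _ _ (claim 4)
    have hd : ((m 1 - m 0)*(k 2 - k 0) - (m 2 - m 0)*(k 1 - k 0) : ℤ) ≠ 0 := by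
      intro h
      exact hncol 1 2 (by decide) (by decide) (by decide) (by linear_combination h)
    have hP3' : (((m 1:ℚ) - m 0)*((k 2:ℚ) - k 0) - ((m 2:ℚ) - m 0)*((k 1:ℚ) - k 0)) * ((m 3:ℚ)^2 - (m 0:ℚ)^2)
        - (((m 3:ℚ) - m 0)*((k 2:ℚ) - k 0) - ((k 3:ℚ) - k 0)*((m 2:ℚ) - m 0)) * ((m 1:ℚ)^2 - (m 0:ℚ)^2)
        - (((k 3:ℚ) - k 0)*((m 1:ℚ) - m 0) - ((m 3:ℚ) - m 0)*((k 1:ℚ) - k 0)) * ((m 2:ℚ)^2 - (m 0:ℚ)^2) = 0 := by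
      exact_mod_cast hP3
    have hP4' : (((m 1:ℚ) - m 0)*((k 2:ℚ) - k 0) - ((m 2:ℚ) - m 0)*((k 1:ℚ) - k 0)) * ((m 4:ℚ)^2 - (m 0:ℚ)^2)
        - (((m 4:ℚ) - m 0)*((k 2:ℚ) - k 0) - ((k 4:ℚ) - k 0)*((m 2:ℚ) - m 0)) * ((m 1:ℚ)^2 - (m 0:ℚ)^2)
        - (((k 4:ℚ) - k 0)*((m 1:ℚ) - m 0) - ((m 4:ℚ) - m 0)*((k 1:ℚ) - k 0)) * ((m 2:ℚ)^2 - (m 0:ℚ)^2) = 0 := by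
      exact_mod_cast hP4
    have hQ3' : (((m 1:ℚ) - m 0)*((k 2:ℚ) - k 0) - ((m 2:ℚ) - m 0)*((k 1:ℚ) - k 0)) * ((k 3:ℚ)^2 - (k 0:ℚ)^2)
        - (((m 3:ℚ) - m 0)*((k 2:ℚ) - k 0) - ((k 3:ℚ) - k 0)*((m 2:ℚ) - m 0)) * ((k 1:ℚ)^2 - (k 0:ℚ)^2)
        - (((k 3:ℚ) - k 0)*((m 1:ℚ) - m 0) - ((m 3:ℚ) - m 0)*((k 1:ℚ) - k 0)) * ((k 2:ℚ)^2 - (k 0:ℚ)^2) = 0 := by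
      exact_mod_cast hQ3
    have hQ4' : (((m 1:ℚ) - m 0)*((k 2:ℚ) - k 0) - ((m 2:ℚ) - m 0)*((k 1:ℚ) - k 0)) * ((k 4:ℚ)^2 - (k 0:ℚ)^2)
        - (((m 4:ℚ) - m 0)*((k 2:ℚ) - k 0) - ((k 4:ℚ) - k 0)*((m 2:ℚ) - m 0)) * ((k 1:ℚ)^2 - (k 0:ℚ)^2)
        - (((k 4:ℚ) - k 0)*((m 1:ℚ) - m 0) - ((m 4:ℚ) - m 0)*((k 1:ℚ) - k 0)) * ((k 2:ℚ)^2 - (k 0:ℚ)^2) = 0 := by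
      exact_mod_cast hQ4
    have hdQ : ((m 1:ℚ) - (m 0:ℚ))*((k 2:ℚ) - (k 0:ℚ)) - ((m 2:ℚ) - (m 0:ℚ))*((k 1:ℚ) - (k 0:ℚ)) ≠ 0 := by
      intro h
      apply hd
      exact_mod_cast h
    obtain ⟨lam, mu, hrelm⟩ : ∃ lam mu : ℚ, ∀ i : Fin 5,
        (m i:ℚ)^2 - (m 0:ℚ)^2 = lam*((m i:ℚ) - (m 0:ℚ)) + mu*((k i:ℚ) - (k 0:ℚ)) := by
      refine ⟨(((m 1:ℚ)^2 - (m 0:ℚ)^2)*((k 2:ℚ) - (k 0:ℚ)) - ((m 2:ℚ)^2 - (m 0:ℚ)^2)*((k 1:ℚ) - (k 0:ℚ)))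
          / (((m 1:ℚ) - (m 0:ℚ))*((k 2:ℚ) - (k 0:ℚ)) - ((m 2:ℚ) - (m 0:ℚ))*((k 1:ℚ) - (k 0:ℚ))),
        (((m 1:ℚ) - (m 0:ℚ))*((m 2:ℚ)^2 - (m 0:ℚ)^2) - ((m 2:ℚ) - (m 0:ℚ))*((m 1:ℚ)^2 - (m 0:ℚ)^2))
          / (((m 1:ℚ) - (m 0:ℚ))*((k 2:ℚ) - (k 0:ℚ)) - ((m 2:ℚ) - (m 0:ℚ))*((k 1:ℚ) - (k 0:ℚ))), ?_⟩
      intro i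
      rw [div_mul_eq_mul_div, div_mul_eq_mul_div, ← add_div, eq_div_iff hdQ]
      fin_cases i <;> try simp only [Fin.reduceFinMk]
      · ring
      · ring
      · ring
      · linear_combination hP3'
      · linear_combination hP4'
    obtain ⟨lam2, mu2, hrelk⟩ : ∃ lam2 mu2 : ℚ, ∀ i : Fin 5,
        (k i:ℚ)^2 - (k 0:ℚ)^2 = lam2*((k i:ℚ) - (k 0:ℚ)) + mu2*((m i:ℚ) - (m 0:ℚ)) := by
      refine ⟨(((k 2:ℚ)^2 - (k 0:ℚ)^2)*((m 1:ℚ) - (m 0:ℚ)) - ((k 1:ℚ)^2 - (k 0:ℚ)^2)*((m 2:ℚ) - (m 0:ℚ)))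
          / (((m 1:ℚ) - (m 0:ℚ))*((k 2:ℚ) - (k 0:ℚ)) - ((m 2:ℚ) - (m 0:ℚ))*((k 1:ℚ) - (k 0:ℚ))),
        (((k 2:ℚ) - (k 0:ℚ))*((k 1:ℚ)^2 - (k 0:ℚ)^2) - ((k 1:ℚ) - (k 0:ℚ))*((k 2:ℚ)^2 - (k 0:ℚ)^2))
          / (((m 1:ℚ) - (m 0:ℚ))*((k 2:ℚ) - (k 0:ℚ)) - ((m 2:ℚ) - (m 0:ℚ))*((k 1:ℚ) - (k 0:ℚ))), ?_⟩
      intro i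
      rw [div_mul_eq_mul_div, div_mul_eq_mul_div, ← add_div, eq_div_iff hdQ]
      fin_cases i <;> try simp only [Fin.reduceFinMk]
      · ring
      · ring
      · ring
      · linear_combination hQ3'
      · linear_combination hQ4'
    have Cm : ∀ i : Fin 5, (m i:ℚ)^2 = lam*(m i:ℚ) + mu*(k i:ℚ)
        + ((m 0:ℚ)^2 - lam*(m 0:ℚ) - mu*(k 0:ℚ)) := by
      intro i; linear_combination hrelm i
    have Ck : ∀ i : Fin 5, (k i:ℚ)^2 = lam2*(k i:ℚ) + mu2*(m i:ℚ)
        + ((k 0:ℚ)^2 - lam2*(k 0:ℚ) - mu2*(m 0:ℚ)) := by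
      intro i; linear_combination hrelk i
    rcases eq_or_ne mu 0 with hmu0 | hmune
    · rcases eq_or_ne mu2 0 with hmu20 | hmu2ne
      · -- both parabola coefficients vanish : at most 4 points
        have dichm : ∀ i j : Fin 5, (m i:ℚ) ≠ (m j:ℚ) → (m i:ℚ) + (m j:ℚ) = lam := by
          intro i j hnem
          have h0 : ((m i:ℚ) - (m j:ℚ)) * ((m i:ℚ) + (m j:ℚ) - lam) = 0 := by
            linear_combination hrelm i - hrelm j + ((k i:ℚ) - (k j:ℚ)) * hmu0
          rcases mul_eq_zero.1 h0 with h' | h'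
          · exact absurd (by linarith [sub_eq_zero.mp h']) hnem
          · linarith
        have dichk : ∀ i j : Fin 5, (k i:ℚ) ≠ (k j:ℚ) → (k i:ℚ) + (k j:ℚ) = lam2 := by
          intro i j hnek
          have h0 : ((k i:ℚ) - (k j:ℚ)) * ((k i:ℚ) + (k j:ℚ) - lam2) = 0 := by
            linear_combination hrelk i - hrelk j + ((m i:ℚ) - (m j:ℚ)) * hmu20
          rcases mul_eq_zero.1 h0 with h' | h'
          · exact absurd (by linarith [sub_eq_zero.mp h']) hnek
          · linarith
        obtain ⟨i, j, hij, hfeq⟩ := Fintype.exists_ne_map_eq_of_card_lt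
          (fun i : Fin 5 => ((decide (m i = m 0), decide (k i = k 0)) : Bool × Bool))
          (by simp)
        rw [Prod.mk.injEq] at hfeq
        have hm : m i = m j := by
          by_cases h0 : m i = m 0
          · have h0' : m j = m 0 := (decide_eq_decide.mp hfeq.1).mp h0
            rw [h0, h0']
          · have h0' : ¬ m j = m 0 := fun hh => h0 ((decide_eq_decide.mp hfeq.1).mpr hh)
            have e1 := dichm i 0 (fun hcst => h0 (by exact_mod_cast hcst))
            have e2 := dichm j 0 (fun hcst => h0' (by exact_mod_cast hcst))
            have : (m i:ℚ) = (m j:ℚ) := by linarith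
            exact_mod_cast this
        have hk : k i = k j := by
          by_cases h0 : k i = k 0
          · have h0' : k j = k 0 := (decide_eq_decide.mp hfeq.2).mp h0
            rw [h0, h0']
          · have h0' : ¬ k j = k 0 := fun hh => h0 ((decide_eq_decide.mp hfeq.2).mpr hh)
            have e1 := dichk i 0 (fun hcst => h0 (by exact_mod_cast hcst))
            have e2 := dichk j 0 (fun hcst => h0' (by exact_mod_cast hcst))
            have : (k i:ℚ) = (k j:ℚ) := by linarith
            exact_mod_cast this
        exact hij (hpair i j hm hk)
      · exact keycount (fun i => ((k i:ℤ):ℚ)) (fun i => ((m i:ℤ):ℚ))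
          (fun i j h1 h2 => hpair i j (Int.cast_injective (α := ℚ) h2) (Int.cast_injective (α := ℚ) h1))
          lam2 mu2 ((k 0:ℚ)^2 - lam2*(k 0:ℚ) - mu2*(m 0:ℚ))
          lam mu ((m 0:ℚ)^2 - lam*(m 0:ℚ) - mu*(k 0:ℚ)) hmu2ne Ck Cm
    · exact keycount (fun i => ((m i:ℤ):ℚ)) (fun i => ((k i:ℤ):ℚ))
        (fun i j h1 h2 => hpair i j (Int.cast_injective (α := ℚ) h1) (Int.cast_injective (α := ℚ) h2))
        lam mu ((m 0:ℚ)^2 - lam*(m 0:ℚ) - mu*(k 0:ℚ))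
        lam2 mu2 ((k 0:ℚ)^2 - lam2*(k 0:ℚ) - mu2*(m 0:ℚ)) hmune Cm Ck
end

section
/- The equilateral triangular lattice generated by (1, 0) and (-1/2, √3/2) in ℝ² is universally concyclic. -/
noncomputable section
namespace Stmt9Aux

/-- ω = e^{2πi/3} -/
def ζ : ℂ := ⟨-(1/2), Real.sqrt 3 / 2⟩

lemma zeta_re : ζ.re = -(1/2) := rfl
lemma zeta_im : ζ.im = Real.sqrt 3 / 2 := rfl

lemma sqrt3_sq : Real.sqrt 3 ^ 2 = 3 := Real.sq_sqrt (by norm_num)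

lemma zeta_sq : ζ ^ 2 = -1 - ζ := by
  have h3 := sqrt3_sq
  apply Complex.ext
  · simp [pow_two, Complex.mul_re, zeta_re, zeta_im]
    nlinarith [h3]
  · simp [pow_two, Complex.mul_im, zeta_re, zeta_im]
    ring

/-- embedding of (m,k) ↦ m + kω -/
def ι (w : ℤ × ℤ) : ℂ := (w.1 : ℂ) + (w.2 : ℂ) * ζ

lemma ι_re (w : ℤ × ℤ) : (ι w).re = (w.1 : ℝ) - (w.2 : ℝ) / 2 := by
  simp [ι, Complex.add_re, Complex.mul_re, zeta_re, zeta_im]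
  ring

lemma ι_im (w : ℤ × ℤ) : (ι w).im = (w.2 : ℝ) * (Real.sqrt 3 / 2) := by
  simp [ι, Complex.add_im, Complex.mul_im, zeta_re, zeta_im]

lemma ι_inj : Function.Injective ι := by
  intro v w h
  have him := congrArg Complex.im h
  rw [ι_im, ι_im] at him
  have hs : Real.sqrt 3 / 2 ≠ 0 := by positivity
  have h2 : (v.2 : ℝ) = (w.2 : ℝ) := mul_right_cancel₀ hs him
  have h2' : v.2 = w.2 := by exact_mod_cast h2
  have hre := congrArg Complex.re h
  rw [ι_re, ι_re, h2] at hre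
  have h1 : (v.1 : ℝ) = (w.1 : ℝ) := by linarith
  have h1' : v.1 = w.1 := by exact_mod_cast h1
  exact Prod.ext h1' h2'

def emul (x y : ℤ × ℤ) : ℤ × ℤ :=
  (x.1 * y.1 - x.2 * y.2, x.1 * y.2 + x.2 * y.1 - x.2 * y.2)

lemma ι_mul (x y : ℤ × ℤ) : ι (emul x y) = ι x * ι y := by
  simp only [ι, emul]
  push_cast
  linear_combination (-(x.2 : ℂ) * (y.2 : ℂ)) * zeta_sq

lemma ι_one : ι (1, 0) = 1 := by simp [ι]

def en (w : ℤ × ℤ) : ℤ := w.1 ^ 2 - w.1 * w.2 + w.2 ^ 2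

lemma en_eq_normSq (w : ℤ × ℤ) : ((en w : ℤ) : ℝ) = Complex.normSq (ι w) := by
  have h3 := sqrt3_sq
  simp only [Complex.normSq_apply, ι_re, ι_im, en]
  push_cast
  nlinarith [h3]

lemma en_mul (x y : ℤ × ℤ) : en (emul x y) = en x * en y := by
  have h := congrArg Complex.normSq (ι_mul x y)
  rw [Complex.normSq_mul, ← en_eq_normSq, ← en_eq_normSq, ← en_eq_normSq] at h
  exact_mod_cast h

def epow (x : ℤ × ℤ) : ℕ → ℤ × ℤ
  | 0 => (1, 0)
  | n + 1 => emul x (epow x n)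

lemma ι_pow (x : ℤ × ℤ) (n : ℕ) : ι (epow x n) = (ι x) ^ n := by
  induction n with
  | zero => simpa [epow] using ι_one
  | succ n ih => rw [epow, ι_mul, ih, pow_succ]; ring

lemma en_pow (x : ℤ × ℤ) (n : ℕ) : en (epow x n) = (en x) ^ n := by
  induction n with
  | zero => simp [epow, en]
  | succ n ih => rw [epow, en_mul, ih, pow_succ]; ring


def pE : ℤ × ℤ := (-2, -3)
def qE : ℤ × ℤ := (1, 3)

lemma en_pE : en pE = 7 := by norm_num [en, pE]
lemma en_qE : en qE = 7 := by norm_num [en, qE]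

/-- the congruence class: w ≡ 1 mod 3 -/
def Cc (w : ℤ × ℤ) : Prop := w.1 % 3 = 1 ∧ w.2 % 3 = 0

lemma Cc_one : Cc (1, 0) := by constructor <;> norm_num
lemma Cc_pE : Cc pE := by constructor <;> decide
lemma Cc_qE : Cc qE := by constructor <;> decide

lemma Cc_mul {x y : ℤ × ℤ} (hx : Cc x) (hy : Cc y) : Cc (emul x y) := by
  obtain ⟨hx1, hx2⟩ := hx
  obtain ⟨hy1, hy2⟩ := hy
  obtain ⟨a, ha⟩ : ∃ a, x.1 = 3 * a + 1 := ⟨x.1 / 3, by omega⟩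
  obtain ⟨b, hb⟩ : ∃ b, x.2 = 3 * b := ⟨x.2 / 3, by omega⟩
  obtain ⟨c, hc⟩ : ∃ c, y.1 = 3 * c + 1 := ⟨y.1 / 3, by omega⟩
  obtain ⟨d, hd⟩ : ∃ d, y.2 = 3 * d := ⟨y.2 / 3, by omega⟩
  constructor
  · have : (emul x y).1 = 3 * (3*a*c + a + c - 3*b*d) + 1 := by
      simp only [emul, ha, hb, hc, hd]; ring
    omega
  · have : (emul x y).2 = 3 * ((3*a+1)*d + b*(3*c+1) - 3*b*d) := by
      simp only [emul, ha, hb, hc, hd]; ring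
    omega

/-- mod-7 character -/
def φE (w : ℤ × ℤ) : ZMod 7 := (w.1 : ZMod 7) + 2 * (w.2 : ZMod 7)

lemma φE_mul (x y : ℤ × ℤ) : φE (emul x y) = φE x * φE y := by
  have key : ((x.1 + 2*x.2) * (y.1 + 2*y.2)
      - ((x.1*y.1 - x.2*y.2) + 2*(x.1*y.2 + x.2*y.1 - x.2*y.2)) : ℤ) = 7 * (x.2*y.2) := by
    ring
  have h7 : (7 : ZMod 7) = 0 := by decide
  have := congrArg (fun z : ℤ => (z : ZMod 7)) key
  push_cast at this
  simp only [φE, emul]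
  push_cast
  linear_combination (-1 : ZMod 7) * this + ((-1 : ZMod 7) * (x.2 : ZMod 7) * (y.2 : ZMod 7)) * h7

lemma φE_one : φE (1, 0) = 1 := by decide

lemma φE_pow (x : ℤ × ℤ) (n : ℕ) : φE (epow x n) = (φE x) ^ n := by
  induction n with
  | zero => simpa [epow] using φE_one
  | succ n ih => rw [epow, φE_mul, ih, pow_succ]; ring

lemma φE_pE : φE pE = -1 := by decide
lemma φE_qE : φE qE = 0 := by decide

lemma emul_assoc (x y z : ℤ × ℤ) : emul (emul x y) z = emul x (emul y z) := by
  apply ι_inj; rw [ι_mul, ι_mul, ι_mul, ι_mul, mul_assoc]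

lemma emul_comm (x y : ℤ × ℤ) : emul x y = emul y x := by
  apply ι_inj; rw [ι_mul, ι_mul, mul_comm]

lemma emul_left_comm (x y z : ℤ × ℤ) : emul x (emul y z) = emul y (emul x z) := by
  apply ι_inj; rw [ι_mul, ι_mul, ι_mul, ι_mul, mul_left_comm]

/-- the candidate elements -/
def ff (j i : ℕ) : ℤ × ℤ := emul (epow pE j) (epow qE i)

lemma en_ff (j i : ℕ) : en (ff j i) = 7 ^ (j + i) := by
  rw [ff, en_mul, en_pow, en_pow, en_pE, en_qE, ← pow_add]

lemma Cc_pow {x : ℤ × ℤ} (hx : Cc x) (n : ℕ) : Cc (epow x n) := by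
  induction n with
  | zero => exact Cc_one
  | succ n ih => exact Cc_mul hx ih

lemma Cc_ff (j i : ℕ) : Cc (ff j i) :=
  Cc_mul (Cc_pow Cc_pE j) (Cc_pow Cc_qE i)

/-- 7-adic dichotomy -/
lemma dich (m k : ℤ) (h : (7 : ℤ) ∣ en (m, k)) :
    (7 : ℤ) ∣ (m - 3 * k) ∨ (7 : ℤ) ∣ (m - 5 * k) := by
  have hp : Prime (7 : ℤ) := by norm_num
  refine hp.2.2 _ _ ?_
  obtain ⟨c, hc⟩ := h
  refine ⟨c + 2 * k ^ 2 - m * k, ?_⟩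
  simp only [en] at hc
  linear_combination hc

lemma norm_one_case (w : ℤ × ℤ) (h1 : en w = 1) (hC : Cc w) : w = (1, 0) := by
  obtain ⟨m, k⟩ := w
  simp only [en] at h1
  obtain ⟨hm, hk⟩ := hC
  simp only at hm hk
  have h4 : (2 * m - k) ^ 2 + 3 * k ^ 2 = 4 := by linear_combination 4 * h1
  have hkl : -1 ≤ k := by nlinarith [sq_nonneg (2 * m - k)]
  have hku : k ≤ 1 := by nlinarith [sq_nonneg (2 * m - k)]
  have hk0 : k = 0 := by omega
  subst hk0
  have hml : -1 ≤ m := by nlinarith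
  have hmu : m ≤ 1 := by nlinarith
  have hm1 : m = 1 := by interval_cases m <;> omega
  subst hm1
  rfl

/-- main classification -/
theorem classify : ∀ T : ℕ, ∀ w : ℤ × ℤ, en w = 7 ^ T → Cc w →
    ∃ j i : ℕ, j + i = T ∧ w = ff j i := by
  intro T
  induction T with
  | zero =>
    intro w h1 hC
    refine ⟨0, 0, rfl, ?_⟩
    rw [norm_one_case w (by simpa using h1) hC]
    rfl
  | succ T ih =>
    rintro ⟨m, k⟩ h1 hC
    have h7 : (7 : ℤ) ∣ en (m, k) := by rw [h1, pow_succ]; exact ⟨7 ^ T, by ring⟩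
    obtain ⟨hm3, hk3⟩ := hC
    simp only at hm3 hk3
    rcases dich m k h7 with hd | hd
    · obtain ⟨a, ha⟩ := hd
      have hw : (m, k) = emul pE (a, 3 * a + k) := by
        simp only [emul, pE, Prod.mk.injEq]
        constructor <;> [linarith; ring]
      have hen : en (a, 3 * a + k) = 7 ^ T := by
        have := h1
        rw [hw, en_mul, en_pE, pow_succ, mul_comm (7 ^ T) 7] at this
        exact mul_left_cancel₀ (by norm_num) this
      have hCc : Cc (a, 3 * a + k) := by
        constructor <;> simp only <;> omega
      obtain ⟨j, i, hji, hfi⟩ := ih (a, 3 * a + k) hen hCc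
      refine ⟨j + 1, i, by omega, ?_⟩
      rw [hw, hfi, ff, ff, show epow pE (j+1) = emul pE (epow pE j) from rfl, emul_assoc]
    · obtain ⟨b, hb⟩ := hd
      have hw : (m, k) = emul qE (-2 * b - k, -3 * b - 2 * k) := by
        simp only [emul, qE, Prod.mk.injEq]
        constructor <;> linarith
      have hen : en (-2 * b - k, -3 * b - 2 * k) = 7 ^ T := by
        have := h1
        rw [hw, en_mul, en_qE, pow_succ, mul_comm (7 ^ T) 7] at this
        exact mul_left_cancel₀ (by norm_num) this
      have hCc : Cc (-2 * b - k, -3 * b - 2 * k) := by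
        constructor <;> simp only <;> omega
      obtain ⟨j, i, hji, hfi⟩ := ih _ hen hCc
      refine ⟨j, i + 1, by omega, ?_⟩
      rw [hw, hfi, ff, ff, show epow qE (i+1) = emul qE (epow qE i) from rfl,
        emul_left_comm]

lemma P_ne : ι pE ≠ 0 := by
  intro h
  have h2 := en_eq_normSq pE
  rw [h, map_zero, en_pE] at h2
  norm_num at h2

lemma Q_ne : ι qE ≠ 0 := by
  intro h
  have h2 := en_eq_normSq qE
  rw [h, map_zero, en_qE] at h2
  norm_num at h2

lemma ff_inj_aux {j i j' i' : ℕ} (hle : j ≤ j') (hs : j + i = j' + i')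
    (h : ff j i = ff j' i') : j = j' := by
  by_contra hne
  set d := j' - j with hd
  have hd1 : 1 ≤ d := by omega
  have hi : i = i' + d := by omega
  have hj' : j' = j + d := by omega
  have hC := congrArg ι h
  rw [ff, ff, ι_mul, ι_mul, ι_pow, ι_pow, ι_pow, ι_pow, hi, hj', pow_add, pow_add] at hC
  have hP : ι pE ^ j ≠ 0 := pow_ne_zero _ P_ne
  have hQ : ι qE ^ i' ≠ 0 := pow_ne_zero _ Q_ne
  have hC2 : (ι pE ^ j * ι qE ^ i') * (ι qE ^ d) =
      (ι pE ^ j * ι qE ^ i') * (ι pE ^ d) := by linear_combination hC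
  have hcan := mul_left_cancel₀ (mul_ne_zero hP hQ) hC2
  have hE : epow qE d = epow pE d := ι_inj (by rw [ι_pow, ι_pow]; exact hcan)
  have hφ := congrArg φE hE
  rw [φE_pow, φE_pow, φE_qE, φE_pE, zero_pow (by omega)] at hφ
  rcases neg_one_pow_eq_or (ZMod 7) d with hh | hh <;> rw [hh] at hφ <;> exact absurd hφ.symm (by decide)

lemma ff_inj {j i j' i' : ℕ} (hs : j + i = j' + i') (h : ff j i = ff j' i') : j = j' := by
  rcases le_total j j' with hle | hle
  · exact ff_inj_aux hle hs h
  · exact (ff_inj_aux hle hs.symm h.symm).symm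

/-- the solution set -/
def FT (T : ℕ) : Set (ℤ × ℤ) := {w | en w = 7 ^ T ∧ Cc w}

lemma FT_eq (T : ℕ) : FT T = (fun j => ff j (T - j)) '' Set.Iic T := by
  ext w
  constructor
  · rintro ⟨h1, h2⟩
    obtain ⟨j, i, hji, rfl⟩ := classify T w h1 h2
    refine ⟨j, Set.mem_Iic.mpr (by omega), ?_⟩
    show ff j (T - j) = ff j i
    rw [show T - j = i by omega]
  · rintro ⟨j, hj, rfl⟩
    simp only [Set.mem_Iic] at hj
    exact ⟨by rw [en_ff]; congr 1; omega, Cc_ff _ _⟩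

lemma FT_ncard (T : ℕ) : (FT T).ncard = T + 1 := by
  rw [FT_eq, Set.ncard_image_of_injOn, ← Finset.coe_Iic, Set.ncard_coe_finset, Nat.card_Iic]
  intro j hj j' hj' h
  simp only [Set.mem_Iic] at hj hj'
  exact ff_inj (by omega : j + (T - j) = j' + (T - j')) h

/-- real point of a lattice pair -/
def Pmap (v : ℤ × ℤ) : ℝ × ℝ := ((v.1 : ℝ) - (v.2 : ℝ) / 2, (v.2 : ℝ) * (Real.sqrt 3 / 2))

lemma Pmap_inj : Function.Injective Pmap := by
  intro v w h
  have h2 := congrArg Prod.snd h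
  simp only [Pmap] at h2
  have hs : Real.sqrt 3 / 2 ≠ 0 := by positivity
  have hv2 : (v.2 : ℝ) = (w.2 : ℝ) := mul_right_cancel₀ hs h2
  have h1 := congrArg Prod.fst h
  simp only [Pmap] at h1
  rw [hv2] at h1
  have hv1 : (v.1 : ℝ) = (w.1 : ℝ) := by linarith
  exact Prod.ext (by exact_mod_cast hv1) (by exact_mod_cast hv2)

lemma circle_iff (T : ℕ) (m k : ℤ) :
    (((m : ℝ) - (k : ℝ) / 2) - (-(1/3))) ^ 2 + ((k : ℝ) * (Real.sqrt 3 / 2) - 0) ^ 2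
      = (Real.sqrt (7 ^ T) / 3) ^ 2 ↔ en (3 * m + 1, 3 * k) = 7 ^ T := by
  have h7 : Real.sqrt ((7 : ℝ) ^ T) ^ 2 = (7 : ℝ) ^ T := Real.sq_sqrt (by positivity)
  have key : 9 * ((((m : ℝ) - (k : ℝ) / 2) - (-(1/3))) ^ 2
      + ((k : ℝ) * (Real.sqrt 3 / 2) - 0) ^ 2) = ((en (3 * m + 1, 3 * k) : ℤ) : ℝ) := by
    simp only [en]
    push_cast
    linear_combination ((9 : ℝ) * (k : ℝ) ^ 2 / 4) * sqrt3_sq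
  rw [div_pow, h7]
  constructor
  · intro h
    have h2 : ((en (3 * m + 1, 3 * k) : ℤ) : ℝ) = ((7 : ℝ) ^ T) := by
      rw [← key, h]; ring
    exact_mod_cast h2
  · intro h
    have h2 : ((en (3 * m + 1, 3 * k) : ℤ) : ℝ) = ((7 : ℝ) ^ T) := by exact_mod_cast h
    rw [h2] at key
    norm_num
    linarith

/-- the lattice pairs on the circle -/
def FT' (T : ℕ) : Set (ℤ × ℤ) := {v | en (3 * v.1 + 1, 3 * v.2) = 7 ^ T}

lemma e_image (T : ℕ) : (fun v : ℤ × ℤ => (3 * v.1 + 1, 3 * v.2)) '' FT' T = FT T := by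
  ext w
  constructor
  · rintro ⟨⟨m, k⟩, hv, rfl⟩
    exact ⟨hv, by constructor <;> simp only <;> omega⟩
  · rintro ⟨h1, hm, hk⟩
    refine ⟨((w.1 - 1) / 3, w.2 / 3), ?_, ?_⟩
    · show en (3 * ((w.1 - 1) / 3) + 1, 3 * (w.2 / 3)) = 7 ^ T
      rw [show 3 * ((w.1 - 1) / 3) + 1 = w.1 by omega, show 3 * (w.2 / 3) = w.2 by omega]
      exact h1
    · exact Prod.ext (by simp; omega) (by simp; omega)

lemma e_inj : Function.Injective (fun v : ℤ × ℤ => ((3 * v.1 + 1 : ℤ), (3 * v.2 : ℤ))) := by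
  intro v w h
  simp only [Prod.mk.injEq] at h
  exact Prod.ext (by omega) (by omega)

lemma FT'_ncard (T : ℕ) : (FT' T).ncard = T + 1 := by
  rw [← FT_ncard T, ← e_image T, Set.ncard_image_of_injective _ e_inj]

end Stmt9Aux

/-- The equilateral triangular lattice `{m(1,0) + k(-1/2, √3/2) : m, k ∈ ℤ}` is
universally concyclic. -/
theorem stmt_9 (n : ℕ) (hn : 0 < n) :
    ∃ (c₁ c₂ r : ℝ), 0 < r ∧
      Set.ncard {x : ℝ × ℝ |
        (∃ m k : ℤ, x = ((m : ℝ) - (k : ℝ) / 2, (k : ℝ) * (Real.sqrt 3 / 2))) ∧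
        (x.1 - c₁) ^ 2 + (x.2 - c₂) ^ 2 = r ^ 2} = n := by
  open Stmt9Aux in
  refine ⟨-(1/3), 0, Real.sqrt (7 ^ (n - 1)) / 3, by positivity, ?_⟩
  have hset : {x : ℝ × ℝ |
      (∃ m k : ℤ, x = ((m : ℝ) - (k : ℝ) / 2, (k : ℝ) * (Real.sqrt 3 / 2))) ∧
      (x.1 - (-(1/3))) ^ 2 + (x.2 - 0) ^ 2 = (Real.sqrt (7 ^ (n - 1)) / 3) ^ 2}
      = Pmap '' FT' (n - 1) := by
    ext x
    simp only [Set.mem_setOf_eq, Set.mem_image]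
    constructor
    · rintro ⟨⟨m, k, rfl⟩, hcirc⟩
      exact ⟨(m, k), (circle_iff (n - 1) m k).1 hcirc, rfl⟩
    · rintro ⟨⟨m, k⟩, hv, rfl⟩
      exact ⟨⟨m, k, rfl⟩, (circle_iff (n - 1) m k).2 hv⟩
  rw [hset, Set.ncard_image_of_injective _ Pmap_inj, FT'_ncard]
  omega
end
end
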